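/- arXiv:2503.20390 — 15 statements merged into one kernel-verified Lean document; each statement's English description precedes it below -/
import Mathlib

section
/- Let b : ℝ → ℝ be continuous, let γ, k ∈ ℝ, and let φ : ℝ → ℝ be twice continuously differentiable with φ(x) > 0 for all x ∈ ℝ, satisfying φ''(x) + b(x)φ'(x) + γ b(x)φ(x) = k φ(x) for all x ∈ ℝ. Then either φ'(x) + γφ(x) = 0 for all x ∈ ℝ, or the set {x ∈ ℝ : φ'(x) + γφ(x) = 0} contains at most one point. -/
open Set Filter Topology

/-- If the derivative is positive at a zero, the function is positive just to the right. -/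
lemma pos_right_of_deriv_pos {ψ : ℝ → ℝ} {z d : ℝ} (h : HasDerivAt ψ d z)
    (hz : ψ z = 0) (hd : 0 < d) : ∀ᶠ x in 𝓝[>] z, 0 < ψ x := by
  have h' : HasDerivWithinAt ψ d (Ioi z) z := h.hasDerivWithinAt
  rw [hasDerivWithinAt_iff_tendsto_slope] at h'
  have hsub : Ioi z \ {z} = Ioi z := by
    ext x; simp only [mem_diff, mem_Ioi, mem_singleton_iff, and_iff_left_iff_imp]
    intro hx; exact ne_of_gt hx
  rw [hsub] at h'
  have hev : ∀ᶠ x in 𝓝[>] z, 0 < slope ψ z x := h' (Ioi_mem_nhds hd)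
  filter_upwards [hev, self_mem_nhdsWithin] with x hx hx'
  have hs : slope ψ z x = ψ x / (x - z) := by simp [slope, hz, inv_mul_eq_div]
  rw [hs] at hx
  have hxz : 0 < x - z := sub_pos.mpr hx'
  rcases div_pos_iff.mp hx with ⟨h1, _⟩ | ⟨_, h2⟩
  · exact h1
  · linarith

/-- If the derivative is positive at a zero, the function is negative just to the left. -/
lemma neg_left_of_deriv_pos {ψ : ℝ → ℝ} {z d : ℝ} (h : HasDerivAt ψ d z)
    (hz : ψ z = 0) (hd : 0 < d) : ∀ᶠ x in 𝓝[<] z, ψ x < 0 := by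
  have h' : HasDerivWithinAt ψ d (Iio z) z := h.hasDerivWithinAt
  rw [hasDerivWithinAt_iff_tendsto_slope] at h'
  have hsub : Iio z \ {z} = Iio z := by
    ext x; simp only [mem_diff, mem_Iio, mem_singleton_iff, and_iff_left_iff_imp]
    intro hx; exact ne_of_lt hx
  rw [hsub] at h'
  have hev : ∀ᶠ x in 𝓝[<] z, 0 < slope ψ z x := h' (Ioi_mem_nhds hd)
  filter_upwards [hev, self_mem_nhdsWithin] with x hx hx'
  have hs : slope ψ z x = ψ x / (x - z) := by simp [slope, hz, inv_mul_eq_div]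
  rw [hs] at hx
  have hxz : x - z < 0 := sub_neg.mpr hx'
  rcases div_pos_iff.mp hx with ⟨_, h2⟩ | ⟨h1, _⟩
  · linarith
  · exact h1

/-- A continuous function whose derivative is positive at every zero has at most one zero. -/
lemma atMostOneZero (ψ : ℝ → ℝ) (hc : Continuous ψ)
    (hdz : ∀ z, ψ z = 0 → ∃ d, 0 < d ∧ HasDerivAt ψ d z) :
    {x : ℝ | ψ x = 0}.Subsingleton := by
  have key : ∀ x₁ x₂ : ℝ, x₁ < x₂ → ψ x₁ = 0 → ψ x₂ = 0 → False := by
    intro x₁ x₂ hlt h₁ h₂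
    obtain ⟨d₂, hd₂, hD₂⟩ := hdz x₂ h₂
    -- find b' ∈ (x₁, x₂) with ψ b' < 0
    have hnl := neg_left_of_deriv_pos hD₂ h₂ hd₂
    have hmem : Ioo x₁ x₂ ∈ 𝓝[<] x₂ := Ioo_mem_nhdsLT_of_mem ⟨hlt, le_refl _⟩
    obtain ⟨b', hb'neg, hb'mem⟩ := (hnl.and (eventually_of_mem hmem fun x hx => hx)).exists
    -- take z = sup of zeros in [x₁, b']
    set S : Set ℝ := Icc x₁ b' ∩ ψ ⁻¹' {0} with hS
    have hSne : S.Nonempty := ⟨x₁, ⟨le_refl _, le_of_lt hb'mem.1⟩, h₁⟩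
    have hSbdd : BddAbove S := ⟨b', fun x hx => hx.1.2⟩
    have hSclosed : IsClosed S := (isClosed_Icc).inter (isClosed_singleton.preimage hc)
    have hzS : sSup S ∈ S := hSclosed.csSup_mem hSne hSbdd
    set z := sSup S with hz
    have hzb' : z < b' := lt_of_le_of_ne hzS.1.2 (by
      intro h; exact absurd hzS.2 (by rw [h]; simpa using ne_of_lt hb'neg))
    have hψz : ψ z = 0 := hzS.2
    obtain ⟨dz, hdz', hDz⟩ := hdz z hψz
    have hpr := pos_right_of_deriv_pos hDz hψz hdz'
    have hmem2 : Ioo z b' ∈ 𝓝[>] z := Ioo_mem_nhdsGT_of_mem ⟨le_refl _, hzb'⟩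
    obtain ⟨a', ha'pos, ha'mem⟩ := (hpr.and (eventually_of_mem hmem2 fun x hx => hx)).exists
    -- IVT between a' and b'
    have hivt : (0 : ℝ) ∈ Icc (ψ b') (ψ a') := ⟨le_of_lt hb'neg, le_of_lt ha'pos⟩
    obtain ⟨w, hw, hψw⟩ := intermediate_value_Icc' (le_of_lt ha'mem.2) hc.continuousOn hivt
    have hwS : w ∈ S := ⟨⟨hzS.1.1.trans (ha'mem.1.trans_le hw.1).le, hw.2⟩, hψw⟩
    have : w ≤ z := le_csSup hSbdd hwS
    have : z < w := lt_of_lt_of_le ha'mem.1 hw.1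
    linarith
  intro x₁ h₁ x₂ h₂
  by_contra hne
  rcases lt_trichotomy x₁ x₂ with h | h | h
  · exact key x₁ x₂ h h₁ h₂
  · exact hne h
  · exact key x₂ x₁ h h₂ h₁

/-- A solution of `ψ' = a ψ` vanishing at one point vanishes everywhere. -/
lemma allZeroODE (a : ℝ → ℝ) (ha : Continuous a) (ψ : ℝ → ℝ)
    (hψ : ∀ x, HasDerivAt ψ (a x * ψ x) x) {x₀ : ℝ} (h0 : ψ x₀ = 0) :
    ∀ x, ψ x = 0 := by
  set B : ℝ → ℝ := fun x => ∫ t in (0:ℝ)..x, a t with hB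
  have hBd : ∀ x, HasDerivAt B (a x) x := fun x =>
    (ha.integral_hasStrictDerivAt 0 x).hasDerivAt
  set g : ℝ → ℝ := fun x => ψ x * Real.exp (-B x) with hg
  have hgd : ∀ x, HasDerivAt g 0 x := by
    intro x
    have h1 : HasDerivAt (fun x => Real.exp (-B x)) (Real.exp (-B x) * (-(a x))) x :=
      ((hBd x).neg).exp
    have h2 : HasDerivAt g (a x * ψ x * Real.exp (-B x) + ψ x * (Real.exp (-B x) * -a x)) x :=
      (hψ x).mul h1
    convert h2 using 1
    ring
  have hgc : ∀ x, g x = g x₀ := by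
    intro x
    exact is_const_of_deriv_eq_zero (fun y => (hgd y).differentiableAt)
      (fun y => (hgd y).deriv) x x₀
  intro x
  have := hgc x
  rw [hg] at this
  simp only [h0, zero_mul] at this
  have hexp : Real.exp (-B x) ≠ 0 := Real.exp_ne_zero _
  exact (mul_eq_zero.mp this).resolve_right hexp

/-- If `b` is continuous, `φ` is a positive `C²` function satisfying
`φ'' + b φ' + γ b φ = k φ` on `ℝ`, then either `φ' + γ φ ≡ 0` on `ℝ`, or
`φ' + γ φ` vanishes at most once. -/
theorem stmt0 (b : ℝ → ℝ) (γ k : ℝ) (φ : ℝ → ℝ)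
    (hb : Continuous b) (hφ : ContDiff ℝ 2 φ) (hφpos : ∀ x, 0 < φ x)
    (heq : ∀ x : ℝ,
      deriv (deriv φ) x + b x * deriv φ x + γ * b x * φ x = k * φ x) :
    (∀ x : ℝ, deriv φ x + γ * φ x = 0) ∨
      {x : ℝ | deriv φ x + γ * φ x = 0}.Subsingleton := by
  have hφ2 : ContDiff ℝ (1 + 1) φ := by
    convert hφ using 2
    norm_num
  have hd1 : Differentiable ℝ φ := hφ.differentiable (by norm_num)
  have hder : ContDiff ℝ 1 (deriv φ) := (contDiff_succ_iff_deriv.mp hφ2).2.2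
  have hd2 : Differentiable ℝ (deriv φ) := hder.differentiable one_ne_zero
  set ψ : ℝ → ℝ := fun x => deriv φ x + γ * φ x with hψdef
  set c : ℝ := k - γ ^ 2 with hc
  have hψd : ∀ x, HasDerivAt ψ ((γ - b x) * ψ x + c * φ x) x := by
    intro x
    have h1 : HasDerivAt ψ (deriv (deriv φ) x + γ * deriv φ x) x :=
      ((hd2 x).hasDerivAt).add (((hd1 x).hasDerivAt).const_mul γ)
    convert h1 using 1
    simp only [hψdef, hc]
    linear_combination -(heq x)
  have hψcont : Continuous ψ := by
    have := hder.continuous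
    fun_prop
  by_cases hc0 : c = 0
  · -- ψ' = (γ - b) ψ : all-or-nothing
    have hODE : ∀ x, HasDerivAt ψ ((γ - b x) * ψ x) x := by
      intro x; have := hψd x; rwa [hc0, zero_mul, add_zero] at this
    by_cases hex : ∃ x₀, ψ x₀ = 0
    · obtain ⟨x₀, hx₀⟩ := hex
      left
      exact allZeroODE (fun x => γ - b x) (continuous_const.sub hb) ψ hODE hx₀
    · right
      intro x hx
      exact absurd ⟨x, hx⟩ hex
  · right
    rcases lt_or_gt_of_ne hc0 with hneg | hpos
    · -- c < 0 : use -ψ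
      have hset : {x : ℝ | deriv φ x + γ * φ x = 0} = {x : ℝ | (-ψ) x = 0} := by
        ext x
        simp only [Set.mem_setOf_eq, Pi.neg_apply, neg_eq_zero]
        exact Iff.rfl
      rw [hset]
      apply atMostOneZero _ hψcont.neg
      intro z hz
      have hz' : ψ z = 0 := by simpa [neg_eq_zero] using hz
      refine ⟨-(c * φ z), by nlinarith [hφpos z], ?_⟩
      have := (hψd z).neg
      rw [hz'] at this
      simpa using this
    · -- c > 0
      have hset : {x : ℝ | deriv φ x + γ * φ x = 0} = {x : ℝ | ψ x = 0} := rfl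
      rw [hset]
      apply atMostOneZero _ hψcont
      intro z hz
      refine ⟨c * φ z, by nlinarith [hφpos z], ?_⟩
      have := hψd z
      rw [hz, mul_zero, zero_add] at this
      exact this
end

section
/- Let b : ℝ → ℝ be continuous, let γ ∈ ℝ with γ ≠ 0, let k ∈ ℝ, and let φ : ℝ → ℝ be twice continuously differentiable, 1-periodic, with φ(x) > 0 for all x ∈ ℝ, satisfying φ''(x) + b(x)φ'(x) + γ b(x)φ(x) = k φ(x) for all x ∈ ℝ. Then φ'(x) + γφ(x) ≠ 0 for all x ∈ ℝ; in particular φ' + γφ has a constant strict sign on ℝ. -/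
open MeasureTheory intervalIntegral

/-- derivative of a periodic function is periodic (for differentiable functions). -/
lemma periodic_deriv' {f : ℝ → ℝ} (hf : Differentiable ℝ f)
    (hp : Function.Periodic f 1) : Function.Periodic (deriv f) 1 := by
  intro x
  have h1 : HasDerivAt (fun y => f (y + 1)) (deriv f (x + 1)) x := by
    have := (hf (x + 1)).hasDerivAt
    simpa [Function.comp_def] using HasDerivAt.comp x this ((hasDerivAt_id x).add_const 1)
  have h2 : (fun y => f (y + 1)) = f := funext fun y => hp y
  rw [h2] at h1
  exact (h1.deriv).symm ▸ rfl

/-- If moreover `φ` is `1`-periodic, positive, and `γ ≠ 0`, then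
`φ' + γ φ` never vanishes, and in particular has a constant strict sign on `ℝ`. -/
theorem stmt1 (b : ℝ → ℝ) (γ k : ℝ) (φ : ℝ → ℝ)
    (hb : Continuous b) (hγ : γ ≠ 0)
    (hφ : ContDiff ℝ 2 φ) (hφper : Function.Periodic φ 1) (hφpos : ∀ x, 0 < φ x)
    (heq : ∀ x : ℝ,
      deriv (deriv φ) x + b x * deriv φ x + γ * b x * φ x = k * φ x) :
    (∀ x : ℝ, deriv φ x + γ * φ x ≠ 0) ∧
      ((∀ x : ℝ, 0 < deriv φ x + γ * φ x) ∨ (∀ x : ℝ, deriv φ x + γ * φ x < 0)) := by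
  set ψ : ℝ → ℝ := fun x => deriv φ x + γ * φ x with hψdef
  have hφd : Differentiable ℝ φ := hφ.differentiable (by norm_num)
  have hφ' : ContDiff ℝ 1 (deriv φ) := by
    have e : ((1 : WithTop ℕ∞) + 1) = 2 := by norm_num
    have h2 : ContDiff ℝ ((1 : WithTop ℕ∞) + 1) φ := by rw [e]; exact hφ
    exact (contDiff_succ_iff_deriv.mp h2).2.2
  have hφ'd : Differentiable ℝ (deriv φ) := hφ'.differentiable one_ne_zero
  -- derivative of ψ
  have hψd : ∀ x, HasDerivAt ψ (deriv (deriv φ) x + γ * deriv φ x) x := fun x =>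
    ((hφ'd x).hasDerivAt).add (((hφd x).hasDerivAt).const_mul γ)
  -- the integrating factor
  set B : ℝ → ℝ := fun x => ∫ t in (0:ℝ)..x, (γ - b t) with hBdef
  have hbc : Continuous fun t => γ - b t := continuous_const.sub hb
  have hBd : ∀ x, HasDerivAt B (γ - b x) x := fun x =>
    integral_hasDerivAt_right (hbc.intervalIntegrable 0 x)
      hbc.aestronglyMeasurable.stronglyMeasurableAtFilter hbc.continuousAt
  set g : ℝ → ℝ := fun x => ψ x * Real.exp (-B x) with hgdef
  have hgd : ∀ x, HasDerivAt g ((k - γ ^ 2) * φ x * Real.exp (-B x)) x := by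
    intro x
    have h1 : HasDerivAt (fun y => Real.exp (-B y)) (-(γ - b x) * Real.exp (-B x)) x := by
      simpa [mul_comm] using ((hBd x).neg).exp
    have h2 := (hψd x).mul h1
    refine h2.congr_deriv ?_
    have := heq x
    simp only [hψdef]
    ring_nf
    nlinarith [this, Real.exp_pos (-B x)]
  -- periodicity of ψ
  have hψper : Function.Periodic ψ 1 := fun x => by
    simp [hψdef, periodic_deriv' hφd hφper x, hφper x]
  -- main claim: ψ never vanishes
  have key : ∀ x : ℝ, ψ x ≠ 0 := by
    intro x₀ hx₀
    by_cases hk : k = γ ^ 2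
    · -- g is constant, hence ψ ≡ 0, hence φ = Ce^{-γx}, contradicting periodicity
      have hg0 : ∀ x, deriv g x = 0 := fun x => by
        rw [(hgd x).deriv]; rw [hk]; ring
      have hgdiff : Differentiable ℝ g := fun x => (hgd x).differentiableAt
      have hψ0 : ∀ x, ψ x = 0 := by
        intro x
        have := is_const_of_deriv_eq_zero hgdiff hg0 x x₀
        have hg : g x = 0 := by rw [this, hgdef]; simp [hx₀]
        have := Real.exp_pos (-B x)
        simp only [hgdef] at hg
        rcases mul_eq_zero.mp hg with h | h
        · exact h
        · exact absurd h (Real.exp_pos _).ne'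
      -- now φ' = -γ φ; consider h x = φ x * exp (γ x), constant
      set h : ℝ → ℝ := fun x => φ x * Real.exp (γ * x) with hhdef
      have hhd : ∀ x, HasDerivAt h (ψ x * Real.exp (γ * x)) x := by
        intro x
        have h1 : HasDerivAt (fun y => Real.exp (γ * y)) (γ * Real.exp (γ * x)) x := by
          simpa [mul_comm] using ((hasDerivAt_id x).const_mul γ).exp
        have := ((hφd x).hasDerivAt).mul h1
        refine this.congr_deriv ?_
        simp only [hψdef]; ring
      have hh0 : ∀ x, deriv h x = 0 := fun x => by rw [(hhd x).deriv, hψ0]; ring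
      have hhdiff : Differentiable ℝ h := fun x => (hhd x).differentiableAt
      have hcst := is_const_of_deriv_eq_zero hhdiff hh0 1 0
      have hc2 : φ 1 * Real.exp (γ * 1) = φ 0 * Real.exp (γ * 0) := hcst
      have hφ10 : φ 1 = φ 0 := by simpa using hφper 0
      rw [hφ10, mul_zero, Real.exp_zero, mul_one, mul_one] at hc2
      have hexp : Real.exp γ = 1 := by
        have h0 := (hφpos 0).ne'
        field_simp at hc2
        tauto
      exact hγ ((Real.exp_eq_one_iff γ).mp hexp)
    · -- g is strictly monotone or strictly antitone, but g x₀ = g (x₀ + 1) = 0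
      have hgx₀ : g x₀ = 0 := by simp [hgdef, hx₀]
      have hgx₁ : g (x₀ + 1) = 0 := by simp [hgdef, hψper x₀, hx₀]
      have hne : x₀ ≠ x₀ + 1 := by linarith
      rcases lt_or_gt_of_ne (sub_ne_zero.mpr hk) with hlt | hgt
      · have : StrictAnti g := strictAnti_of_deriv_neg fun x => by
          rw [(hgd x).deriv]
          rw [mul_assoc]
          exact mul_neg_of_neg_of_pos hlt (mul_pos (hφpos x) (Real.exp_pos _))
        exact hne (this.injective (hgx₀.trans hgx₁.symm))
      · have : StrictMono g := strictMono_of_deriv_pos fun x => by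
          rw [(hgd x).deriv, mul_assoc]
          exact mul_pos (mul_pos hgt (hφpos x)) (Real.exp_pos _) |>.trans_eq (mul_assoc _ _ _)
        exact hne (this.injective (hgx₀.trans hgx₁.symm))
  refine ⟨key, ?_⟩
  have hψc : Continuous ψ := (hφ'.continuous).add (continuous_const.mul hφd.continuous)
  by_contra hcon
  push_neg at hcon
  obtain ⟨⟨a, ha⟩, ⟨c, hc⟩⟩ := hcon
  have ha' : ψ a < 0 := lt_of_le_of_ne ha (key a)
  have hc' : ψ c > 0 := lt_of_le_of_ne hc (Ne.symm (key c))
  have : (0:ℝ) ∈ Set.Icc (ψ a) (ψ c) := ⟨le_of_lt ha', le_of_lt hc'⟩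
  obtain ⟨x, hx⟩ := intermediate_value_univ a c hψc this
  exact key x hx
end

section
/- Let b : ℝ → ℝ be continuously differentiable and 1-periodic, let β, γ ∈ ℝ, and set r := β + γ·b. Suppose φ⁺ : ℝ → ℝ is twice continuously differentiable, 1-periodic, positive on ℝ, and satisfies φ⁺'' + b φ⁺' + r φ⁺ = k⁺ φ⁺ on ℝ for some k⁺ ∈ ℝ, and suppose φ⁻ : ℝ → ℝ is twice continuously differentiable, 1-periodic, positive on ℝ, and satisfies φ⁻'' − b φ⁻' + r φ⁻ = k⁻ φ⁻ on ℝ for some k⁻ ∈ ℝ. Then k⁺ = k⁻. -/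
open Filter Set

/-- Second derivative test at a global max: if `f' = g` everywhere, `g x0 = 0`,
and `g` has derivative `a` at `x0`, and `x0` is a global max of `f`, then `a ≤ 0`. -/
lemma second_deriv_nonpos_at_max {f g : ℝ → ℝ} {x0 a : ℝ}
    (hf : ∀ x, HasDerivAt f (g x) x)
    (hg : HasDerivAt g a x0)
    (hg0 : g x0 = 0)
    (hmax : ∀ y, f y ≤ f x0) : a ≤ 0 := by
  by_contra hc
  push_neg at hc
  have hslope : Tendsto (slope g x0) (nhdsWithin x0 {x0}ᶜ) (nhds a) :=
    hasDerivAt_iff_tendsto_slope.mp hg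
  have h1 : ∀ᶠ x in nhdsWithin x0 {x0}ᶜ, 0 < slope g x0 x :=
    hslope.eventually (eventually_gt_nhds hc)
  have h2 : ∀ᶠ x in nhdsWithin x0 (Set.Ioi x0), 0 < slope g x0 x :=
    h1.filter_mono (nhdsWithin_mono x0 (fun y hy => ne_of_gt hy))
  have hev : ∀ᶠ x in nhdsWithin x0 (Set.Ioi x0), 0 < g x := by
    filter_upwards [h2, self_mem_nhdsWithin] with x hx hx'
    rw [slope_def_field, hg0, sub_zero] at hx
    have hd : (0:ℝ) < x - x0 := sub_pos.mpr hx'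
    have := mul_pos hx hd
    rw [div_mul_cancel₀] at this
    · exact this
    · exact ne_of_gt hd
  obtain ⟨u, hu, hsub⟩ := mem_nhdsGT_iff_exists_Ioo_subset.mp hev
  have hcont : Continuous f := by
    have : Differentiable ℝ f := fun x => (hf x).differentiableAt
    exact this.continuous
  have hmono : StrictMonoOn f (Set.Icc x0 u) := by
    apply strictMonoOn_of_deriv_pos (convex_Icc x0 u) hcont.continuousOn
    intro x hx
    rw [interior_Icc] at hx
    rw [(hf x).deriv]
    exact hsub hx
  have hu' : x0 < u := hu
  have hlt : f x0 < f u :=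
    hmono (Set.mem_Icc.mpr ⟨le_refl _, hu'.le⟩) (Set.mem_Icc.mpr ⟨hu'.le, le_refl _⟩) hu'
  exact absurd (hmax u) (not_le.mpr hlt)

lemma second_deriv_nonneg_at_min {f g : ℝ → ℝ} {x0 a : ℝ}
    (hf : ∀ x, HasDerivAt f (g x) x)
    (hg : HasDerivAt g a x0)
    (hg0 : g x0 = 0)
    (hmin : ∀ y, f x0 ≤ f y) : 0 ≤ a := by
  have := second_deriv_nonpos_at_max (f := fun x => -f x) (g := fun x => -g x)
    (fun x => (hf x).neg) hg.neg (by simp [hg0]) (fun y => neg_le_neg (hmin y))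
  linarith

/-- Key abstract lemma: if `F` is `1`-periodic with `F' = d • G`, `G' = H`, `d ≠ 0`,
and at every zero of `G` we have `H = κ • Q` with `Q > 0`, then `κ = 0`. -/
lemma crux {F G H Q : ℝ → ℝ} {d κ : ℝ} (hd : d ≠ 0)
    (hF : ∀ x, HasDerivAt F (d * G x) x)
    (hG : ∀ x, HasDerivAt G (H x) x)
    (hper : Function.Periodic F 1)
    (hkey : ∀ x, G x = 0 → H x = κ * Q x)
    (hQ : ∀ x, 0 < Q x) : κ = 0 := by
  have hFd : Differentiable ℝ F := fun x => (hF x).differentiableAt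
  have hFc : Continuous F := hFd.continuous
  obtain ⟨x0, _, hx0⟩ := isCompact_Icc.exists_isMaxOn (Set.nonempty_Icc.mpr zero_le_one)
    (hFc.continuousOn (s := Set.Icc (0:ℝ) 1))
  obtain ⟨x1, _, hx1⟩ := isCompact_Icc.exists_isMinOn (Set.nonempty_Icc.mpr zero_le_one)
    (hFc.continuousOn (s := Set.Icc (0:ℝ) 1))
  have hfr : ∀ y : ℝ, F (Int.fract y) = F y := by
    intro y
    have h := hper.sub_int_mul_eq (x := y) (n := ⌊y⌋)
    rw [mul_one] at h
    rwa [Int.self_sub_floor] at h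
  have hfrIcc : ∀ y : ℝ, Int.fract y ∈ Set.Icc (0:ℝ) 1 :=
    fun y => Set.mem_Icc.mpr ⟨Int.fract_nonneg y, (Int.fract_lt_one y).le⟩
  have hmax : ∀ y, F y ≤ F x0 := by
    intro y
    rw [← hfr y]
    exact isMaxOn_iff.mp hx0 _ (hfrIcc y)
  have hmin : ∀ y, F x1 ≤ F y := by
    intro y
    rw [← hfr y]
    exact isMinOn_iff.mp hx1 _ (hfrIcc y)
  -- first derivative vanishes at x0 and x1
  have hG0 : ∀ z : ℝ, (∀ y, F y ≤ F z) ∨ (∀ y, F z ≤ F y) → G z = 0 := by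
    intro z hz
    have hloc : deriv F z = 0 := by
      rcases hz with hz | hz
      · exact (IsMaxOn.isLocalMax (isMaxOn_iff.mpr fun y _ => hz y) Filter.univ_mem).deriv_eq_zero
      · exact (IsMinOn.isLocalMin (isMinOn_iff.mpr fun y _ => hz y) Filter.univ_mem).deriv_eq_zero
    rw [(hF z).deriv] at hloc
    exact (mul_eq_zero.mp hloc).resolve_left hd
  have hG00 : G x0 = 0 := hG0 x0 (Or.inl hmax)
  have hG01 : G x1 = 0 := hG0 x1 (Or.inr hmin)
  -- second derivative test
  have hmax2 : d * H x0 ≤ 0 := by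
    refine second_deriv_nonpos_at_max (f := F) (g := fun x => d * G x) hF
      ((hG x0).const_mul d) (by show d * G x0 = 0; rw [hG00, mul_zero]) hmax
  have hmin2 : 0 ≤ d * H x1 := by
    refine second_deriv_nonneg_at_min (f := F) (g := fun x => d * G x) hF
      ((hG x1).const_mul d) (by show d * G x1 = 0; rw [hG01, mul_zero]) hmin
  rw [hkey x0 hG00] at hmax2
  rw [hkey x1 hG01] at hmin2
  by_contra hκ
  rcases lt_trichotomy (d * κ) 0 with h | h | h
  · nlinarith [hQ x1]
  · exact hκ ((mul_eq_zero.mp h).resolve_left hd)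
  · nlinarith [hQ x0]

/-- If `r = β + γ b` with `b` of class `C¹` and `1`-periodic, then the principal
periodic eigenvalues of `ψ ↦ ψ'' + bψ' + rψ` and of `ψ ↦ ψ'' - bψ' + rψ` (characterized by
positive `1`-periodic eigenfunctions) coincide: `k⁺ = k⁻`. -/
theorem stmt3 (b : ℝ → ℝ) (β γ : ℝ)
    (hb : ContDiff ℝ 1 b) (hbper : Function.Periodic b 1)
    (r : ℝ → ℝ) (hr : r = fun x => β + γ * b x)
    (φp φm : ℝ → ℝ) (kp km : ℝ)
    (hφp : ContDiff ℝ 2 φp) (hφpper : Function.Periodic φp 1) (hφppos : ∀ x, 0 < φp x)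
    (heqp : ∀ x : ℝ,
      deriv (deriv φp) x + b x * deriv φp x + r x * φp x = kp * φp x)
    (hφm : ContDiff ℝ 2 φm) (hφmper : Function.Periodic φm 1) (hφmpos : ∀ x, 0 < φm x)
    (heqm : ∀ x : ℝ,
      deriv (deriv φm) x - b x * deriv φm x + r x * φm x = km * φm x) :
    kp = km := by
  subst hr
  by_contra hne
  have hδ : kp - km ≠ 0 := sub_ne_zero.mpr hne
  -- differentiability facts
  have hφp2 : ContDiff ℝ (1 + 1) φp := by exact_mod_cast hφp
  have hφm2 : ContDiff ℝ (1 + 1) φm := by exact_mod_cast hφm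
  have hφpd : Differentiable ℝ φp := hφp.differentiable (by norm_num)
  have hφmd : Differentiable ℝ φm := hφm.differentiable (by norm_num)
  have hDp1 : ContDiff ℝ 1 (deriv φp) := (contDiff_succ_iff_deriv.mp hφp2).2.2
  have hDm1 : ContDiff ℝ 1 (deriv φm) := (contDiff_succ_iff_deriv.mp hφm2).2.2
  have hDpd : Differentiable ℝ (deriv φp) := hDp1.differentiable one_ne_zero
  have hDmd : Differentiable ℝ (deriv φm) := hDm1.differentiable one_ne_zero
  have hp : ∀ x, HasDerivAt φp (deriv φp x) x := fun x => (hφpd x).hasDerivAt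
  have hm : ∀ x, HasDerivAt φm (deriv φm x) x := fun x => (hφmd x).hasDerivAt
  have hp2 : ∀ x, HasDerivAt (deriv φp) (deriv (deriv φp) x) x := fun x => (hDpd x).hasDerivAt
  have hm2 : ∀ x, HasDerivAt (deriv φm) (deriv (deriv φm) x) x := fun x => (hDmd x).hasDerivAt
  -- periodicity of derivatives
  have hDpper : Function.Periodic (deriv φp) 1 := by
    intro x
    have h : (fun y => φp (y + 1)) = φp := funext fun y => hφpper y
    calc deriv φp (x + 1) = deriv (fun y => φp (y + 1)) x := (deriv_comp_add_const φp 1 x).symm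
    _ = deriv φp x := by rw [h]
  have hDmper : Function.Periodic (deriv φm) 1 := by
    intro x
    have h : (fun y => φm (y + 1)) = φm := funext fun y => hφmper y
    calc deriv φm (x + 1) = deriv (fun y => φm (y + 1)) x := (deriv_comp_add_const φm 1 x).symm
    _ = deriv φm x := by rw [h]
  -- the auxiliary functions
  set ν : ℝ → ℝ := fun x => deriv φp x + γ * φp x with hνdef
  set μ : ℝ → ℝ := fun x => deriv φm x - γ * φm x with hμdef
  have hν : ∀ x, HasDerivAt ν (deriv (deriv φp) x + γ * deriv φp x) x :=
    fun x => (hp2 x).add ((hp x).const_mul γ)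
  have hμ : ∀ x, HasDerivAt μ (deriv (deriv φm) x - γ * deriv φm x) x :=
    fun x => (hm2 x).sub ((hm x).const_mul γ)
  have hP : ∀ x, HasDerivAt (fun x => φp x * φm x) (deriv φp x * φm x + φp x * deriv φm x) x :=
    fun x => (hp x).mul (hm x)
  have hPpos : ∀ x, 0 < φp x * φm x := fun x => mul_pos (hφppos x) (hφmpos x)
  -- F_V := κp * P - ν * μ  with derivative (kp - km) * (φm * ν)
  have hVder : ∀ x, HasDerivAt (fun x => (kp - β - γ^2) * (φp x * φm x) - ν x * μ x)
      ((kp - km) * (φm x * ν x)) x := by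
    intro x
    have h := ((hP x).const_mul (kp - β - γ^2)).sub ((hν x).mul (hμ x))
    refine h.congr_deriv ?_
    symm
    simp only [hνdef, hμdef]
    linear_combination (deriv φm x - γ * φm x) * heqp x + (deriv φp x + γ * φp x) * heqm x
  have hWder : ∀ x, HasDerivAt (fun x => (km - β - γ^2) * (φp x * φm x) - ν x * μ x)
      (-(kp - km) * (φp x * μ x)) x := by
    intro x
    have h := ((hP x).const_mul (km - β - γ^2)).sub ((hν x).mul (hμ x))
    refine h.congr_deriv ?_
    symm
    simp only [hνdef, hμdef]
    linear_combination (deriv φm x - γ * φm x) * heqp x + (deriv φp x + γ * φp x) * heqm x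
  -- G functions and their derivatives
  have hGV : ∀ x, HasDerivAt (fun x => φm x * ν x)
      (deriv φm x * ν x + φm x * (deriv (deriv φp) x + γ * deriv φp x)) x :=
    fun x => (hm x).mul (hν x)
  have hGW : ∀ x, HasDerivAt (fun x => φp x * μ x)
      (deriv φp x * μ x + φp x * (deriv (deriv φm) x - γ * deriv φm x)) x :=
    fun x => (hp x).mul (hμ x)
  -- periodicity of the two F's
  have hVper : Function.Periodic (fun x => (kp - β - γ^2) * (φp x * φm x) - ν x * μ x) 1 := by
    intro x
    simp only [hνdef, hμdef, hφpper x, hφmper x, hDpper x, hDmper x]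
  have hWper : Function.Periodic (fun x => (km - β - γ^2) * (φp x * φm x) - ν x * μ x) 1 := by
    intro x
    simp only [hνdef, hμdef, hφpper x, hφmper x, hDpper x, hDmper x]
  -- key pointwise identities at zeros
  have hkeyV : ∀ x, φm x * ν x = 0 →
      deriv φm x * ν x + φm x * (deriv (deriv φp) x + γ * deriv φp x)
        = (kp - β - γ^2) * (φp x * φm x) := by
    intro x hx
    have hν0 : ν x = 0 := by
      rcases mul_eq_zero.mp hx with h | h
      · exact absurd h (ne_of_gt (hφmpos x))
      · exact h
    have hν0' : deriv φp x + γ * φp x = 0 := hν0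
    have e1 := heqp x
    simp only [hνdef]
    linear_combination φm x * e1 + (deriv φm x + γ * φm x - b x * φm x) * hν0'
  have hkeyW : ∀ x, φp x * μ x = 0 →
      deriv φp x * μ x + φp x * (deriv (deriv φm) x - γ * deriv φm x)
        = (km - β - γ^2) * (φp x * φm x) := by
    intro x hx
    have hμ0 : μ x = 0 := by
      rcases mul_eq_zero.mp hx with h | h
      · exact absurd h (ne_of_gt (hφppos x))
      · exact h
    have hμ0' : deriv φm x - γ * φm x = 0 := hμ0
    have e2 := heqm x
    simp only [hμdef]
    linear_combination φp x * e2 + (deriv φp x + (b x - γ) * φp x) * hμ0'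
  -- apply crux twice
  have hκp : kp - β - γ^2 = 0 :=
    crux hδ hVder hGV hVper hkeyV hPpos
  have hκm : km - β - γ^2 = 0 :=
    crux (neg_ne_zero.mpr hδ) hWder hGW hWper hkeyW hPpos
  exact hne (by linarith)
end

section
/- Let b : ℝ → ℝ be continuously differentiable and 1-periodic, let β, γ, λ ∈ ℝ, and set r := β + γ·b. Suppose ψ⁺ : ℝ → ℝ is twice continuously differentiable, 1-periodic, positive on ℝ, and satisfies ψ⁺'' + (b + 2λ)ψ⁺' + (λ² + λ b + r)ψ⁺ = k⁺ ψ⁺ on ℝ for some k⁺ ∈ ℝ, and suppose ψ⁻ : ℝ → ℝ is twice continuously differentiable, 1-periodic, positive on ℝ, and satisfies ψ⁻'' − (b + 2λ)ψ⁻' + (λ² + λ b + r)ψ⁻ = k⁻ ψ⁻ on ℝ for some k⁻ ∈ ℝ. Then k⁺ = k⁻. -/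
open Set intervalIntegral

/-- Crossing lemma: if a differentiable function is negative at `a`, positive at `c > a`,
and at every zero its derivative equals `e * ψ` with `ψ > 0`, then `e ≥ 0`. -/
private lemma crossA (φ ψ : ℝ → ℝ) (e : ℝ) (hφ : Differentiable ℝ φ)
    (hψ : ∀ x, 0 < ψ x) (hz : ∀ x, φ x = 0 → deriv φ x = e * ψ x)
    (a c : ℝ) (hac : a < c) (ha : φ a < 0) (hc : 0 < φ c) : 0 ≤ e := by
  have hcont : Continuous φ := hφ.continuous
  set S : Set ℝ := Icc a c ∩ φ ⁻¹' Iic 0 with hS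
  have hSne : S.Nonempty := ⟨a, ⟨le_refl a, hac.le⟩, ha.le⟩
  have hSbdd : BddAbove S := ⟨c, fun x hx => hx.1.2⟩
  have hSclosed : IsClosed S := (isClosed_Icc).inter (isClosed_Iic.preimage hcont)
  set z := sSup S with hzdef
  have hzS : z ∈ S := hSclosed.csSup_mem hSne hSbdd
  have hzc : z < c := by
    rcases eq_or_lt_of_le hzS.1.2 with h | h
    · exfalso
      have : φ c ≤ 0 := h ▸ hzS.2
      linarith
    · exact h
  have hpos : ∀ x, x ∈ Ioc z c → 0 < φ x := by
    intro x hx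
    by_contra hle
    push_neg at hle
    have hxS : x ∈ S := ⟨⟨hzS.1.1.trans hx.1.le, hx.2⟩, hle⟩
    exact absurd (le_csSup hSbdd hxS) (not_le.mpr hx.1)
  have hz0 : φ z = 0 := by
    have hzle : φ z ≤ 0 := hzS.2
    rcases lt_or_eq_of_le hzle with hlt | heq
    · exfalso
      have hsub : Icc (0:ℝ) (φ c) ⊆ φ '' Icc z c := by
        have := intermediate_value_Icc hzc.le (hcont.continuousOn (s := Icc z c))
        intro y hy
        exact this ⟨hlt.le.trans hy.1, hy.2⟩
      obtain ⟨y, hyI, hy0⟩ := hsub ⟨le_refl 0, hc.le⟩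
      have hyz : y ≠ z := fun h => by rw [h] at hy0; linarith
      have : 0 < φ y := hpos y ⟨lt_of_le_of_ne hyI.1 (Ne.symm hyz), hyI.2⟩
      linarith
    · exact heq
  -- derivative at z is a limit of nonnegative slopes from the right
  have hder : HasDerivAt φ (deriv φ z) z := (hφ z).hasDerivAt
  have htend : Filter.Tendsto (slope φ z) (nhdsWithin z (Ioi z)) (nhds (deriv φ z)) := by
    refine (hasDerivAt_iff_tendsto_slope.mp hder).mono_left ?_
    exact nhdsWithin_mono z (fun x hx => ne_of_gt hx)
  have hge : 0 ≤ deriv φ z := by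
    refine ge_of_tendsto htend ?_
    filter_upwards [Ioo_mem_nhdsGT_of_mem (⟨le_refl z, hzc⟩ : z ∈ Ico z c)] with x hx
    rw [slope_def_field]
    have h1 : 0 < φ x := hpos x ⟨hx.1, hx.2.le⟩
    have h2 : 0 < x - z := by linarith [hx.1]
    have : (0:ℝ) ≤ φ x - φ z := by rw [hz0]; linarith
    exact div_nonneg this h2.le
  have := hz z hz0
  rw [this] at hge
  by_contra hneg
  push_neg at hneg
  nlinarith [hψ z]

/-- If a continuous 1-periodic function is everywhere `≤ 0` and somewhere `< 0`,
its integral over a period is `< 0`. -/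
private lemma intNeg (F : ℝ → ℝ) (hF : Continuous F) (hper : Function.Periodic F 1)
    (hle : ∀ x, F x ≤ 0) (x1 : ℝ) (hx1 : F x1 < 0) :
    (∫ x in (0:ℝ)..1, F x) < 0 := by
  have h1 : (∫ x in (0:ℝ)..1, F x) = ∫ x in (x1 - 2⁻¹)..(x1 - 2⁻¹ + 1), F x := by
    simpa using (hper.intervalIntegral_add_eq 0 (x1 - 2⁻¹))
  have hpos : 0 < ∫ x in (x1 - 2⁻¹)..(x1 - 2⁻¹ + 1), (-F x) := by
    refine intervalIntegral.integral_pos (by linarith) ?_ ?_ ?_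
    · exact (hF.neg).continuousOn
    · intro x _; linarith [hle x]
    · exact ⟨x1, ⟨by linarith, by linarith⟩, by linarith⟩
  rw [intervalIntegral.integral_neg] at hpos
  linarith [h1 ▸ (by linarith [hpos] : (∫ x in (x1 - 2⁻¹)..(x1 - 2⁻¹ + 1), F x) < 0)]

/-- Key lemma: a differentiable 1-periodic function `φ` whose derivative at every zero equals
`e * ψ` with `ψ > 0`, and with `∫₀¹ φ w = 0` for a positive continuous periodic weight `w`,
forces `e = 0`. -/
private lemma keyB (φ ψ w : ℝ → ℝ) (e : ℝ)
    (hφ : Differentiable ℝ φ) (hφper : Function.Periodic φ 1)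
    (hψ : ∀ x, 0 < ψ x)
    (hw : Continuous w) (hwpos : ∀ x, 0 < w x) (hwper : Function.Periodic w 1)
    (hz : ∀ x, φ x = 0 → deriv φ x = e * ψ x)
    (hint : (∫ x in (0:ℝ)..1, φ x * w x) = 0) : e = 0 := by
  have hcont : Continuous φ := hφ.continuous
  have hFcont : Continuous (fun x => φ x * w x) := hcont.mul hw
  have hFper : Function.Periodic (fun x => φ x * w x) 1 := fun x => by
    simp [hφper x, hwper x]
  by_cases hpos : ∃ x, 0 < φ x
  · by_cases hneg : ∃ x, φ x < 0
    · obtain ⟨x2, hx2⟩ := hpos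
      obtain ⟨x1, hx1⟩ := hneg
      -- e ≥ 0 : find a negative point to the left of x2
      obtain ⟨n, hn⟩ := exists_nat_gt (x1 - x2)
      have hshift : φ (x1 - n) = φ x1 := by
        have := hφper.sub_nat_mul_eq (x := x1) n
        simpa using this
      have h1 : 0 ≤ e :=
        crossA φ ψ e hφ hψ hz (x1 - n) x2 (by linarith) (by rw [hshift]; exact hx1) hx2
      -- e ≤ 0 : apply crossA to -φ
      obtain ⟨m, hm⟩ := exists_nat_gt (x2 - x1)
      have hshift2 : φ (x2 - m) = φ x2 := by
        have := hφper.sub_nat_mul_eq (x := x2) m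
        simpa using this
      have hz' : ∀ x, (fun y => -φ y) x = 0 → deriv (fun y => -φ y) x = (-e) * ψ x := by
        intro x hx0
        simp only [neg_eq_zero] at hx0
        rw [deriv.fun_neg, hz x hx0]
        ring
      have h2 : 0 ≤ -e := by
        refine crossA (fun y => -φ y) ψ (-e) hφ.neg hψ hz' (x2 - m) x1 (by linarith) ?_ ?_
        · show -φ (x2 - (m:ℝ)) < 0
          rw [hshift2]; linarith
        · simpa using hx1.le.lt_of_ne (ne_of_lt hx1)
      linarith
    · -- φ ≥ 0 everywhere, positive somewhere: integral would be positive
      push_neg at hneg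
      obtain ⟨x2, hx2⟩ := hpos
      exfalso
      have := intNeg (fun x => -(φ x * w x)) hFcont.neg (fun x => by simp [hFper x])
        (fun x => by simp; exact mul_nonneg (hneg x) (hwpos x).le) x2
        (by simp; exact mul_pos hx2 (hwpos x2))
      rw [intervalIntegral.integral_neg, hint] at this
      simp at this
  · push_neg at hpos
    by_cases hneg : ∃ x, φ x < 0
    · obtain ⟨x1, hx1⟩ := hneg
      exfalso
      have := intNeg (fun x => φ x * w x) hFcont hFper
        (fun x => mul_nonpos_of_nonpos_of_nonneg (hpos x) (hwpos x).le) x1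
        (mul_neg_of_neg_of_pos hx1 (hwpos x1))
      rw [hint] at this
      simp at this
    · push_neg at hneg
      have hall : ∀ x, φ x = 0 := fun x => le_antisymm (hpos x) (hneg x)
      have hφ0 : φ = fun _ => (0:ℝ) := funext hall
      have := hz 0 (hall 0)
      rw [hφ0] at this
      simp at this
      rcases this with h | h
      · exact h
      · exfalso; linarith [hψ 0]

/-- If `r = β + γ b` with `b` of class `C¹` and `1`-periodic, then the principal
periodic eigenvalues `k⁺ = k_λ[r;b]` and `k⁻ = k_{-λ}[r;-b]`, characterized by the existence
of positive `1`-periodic eigenfunctions `ψ⁺`, `ψ⁻`, coincide. -/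
theorem stmt4 (b : ℝ → ℝ) (β γ lam : ℝ)
    (hb : ContDiff ℝ 1 b) (hbper : Function.Periodic b 1)
    (r : ℝ → ℝ) (hr : r = fun x => β + γ * b x)
    (ψp ψm : ℝ → ℝ) (kp km : ℝ)
    (hψp : ContDiff ℝ 2 ψp) (hψpper : Function.Periodic ψp 1) (hψppos : ∀ x, 0 < ψp x)
    (heqp : ∀ x : ℝ,
      deriv (deriv ψp) x + (b x + 2 * lam) * deriv ψp x
        + (lam ^ 2 + lam * b x + r x) * ψp x = kp * ψp x)
    (hψm : ContDiff ℝ 2 ψm) (hψmper : Function.Periodic ψm 1) (hψmpos : ∀ x, 0 < ψm x)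
    (heqm : ∀ x : ℝ,
      deriv (deriv ψm) x - (b x + 2 * lam) * deriv ψm x
        + (lam ^ 2 + lam * b x + r x) * ψm x = km * ψm x) :
    kp = km := by
  subst hr
  by_contra hne
  -- regularity of ψp, ψm
  have hψp' : ContDiff ℝ ((1:ℕ) + 1) ψp := by exact_mod_cast hψp
  have hψm' : ContDiff ℝ ((1:ℕ) + 1) ψm := by exact_mod_cast hψm
  have hdp : Differentiable ℝ ψp := hψp.differentiable (by norm_num)
  have hdm : Differentiable ℝ ψm := hψm.differentiable (by norm_num)
  have hcp1 : ContDiff ℝ (1:ℕ) (deriv ψp) := (contDiff_succ_iff_deriv.mp hψp').2.2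
  have hcm1 : ContDiff ℝ (1:ℕ) (deriv ψm) := (contDiff_succ_iff_deriv.mp hψm').2.2
  have hdp1 : Differentiable ℝ (deriv ψp) := hcp1.differentiable (by norm_num)
  have hdm1 : Differentiable ℝ (deriv ψm) := hcm1.differentiable (by norm_num)
  -- periodicity of derivatives
  have hdpper : Function.Periodic (deriv ψp) 1 := by
    intro x
    have h : (fun y => ψp (y + 1)) = ψp := funext hψpper
    calc deriv ψp (x + 1) = deriv (fun y => ψp (y + 1)) x := (deriv_comp_add_const ψp 1 x).symm
      _ = deriv ψp x := by rw [h]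
  have hdmper : Function.Periodic (deriv ψm) 1 := by
    intro x
    have h : (fun y => ψm (y + 1)) = ψm := funext hψmper
    calc deriv ψm (x + 1) = deriv (fun y => ψm (y + 1)) x := (deriv_comp_add_const ψm 1 x).symm
      _ = deriv ψm x := by rw [h]
  set μ := β + γ ^ 2 with hμ
  set f : ℝ → ℝ := fun x => deriv ψp x + (γ + lam) * ψp x with hfdef
  set g : ℝ → ℝ := fun x => deriv ψm x - (γ + lam) * ψm x with hgdef
  have hfD : ∀ x, HasDerivAt f ((kp - μ) * ψp x - (b x + lam - γ) * f x) x := by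
    intro x
    have h1 : HasDerivAt (deriv ψp) (deriv (deriv ψp) x) x := (hdp1 x).hasDerivAt
    have h2 : HasDerivAt ψp (deriv ψp x) x := (hdp x).hasDerivAt
    have h3 := h1.add (h2.const_mul (γ + lam))
    refine h3.congr_deriv (Eq.symm ?_)
    simp only [hfdef, hμ]
    linear_combination (-1 : ℝ) * heqp x
  have hgD : ∀ x, HasDerivAt g ((km - μ) * ψm x + (b x + lam - γ) * g x) x := by
    intro x
    have h1 : HasDerivAt (deriv ψm) (deriv (deriv ψm) x) x := (hdm1 x).hasDerivAt
    have h2 : HasDerivAt ψm (deriv ψm x) x := (hdm x).hasDerivAt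
    have h3 := h1.sub (h2.const_mul (γ + lam))
    refine h3.congr_deriv (Eq.symm ?_)
    simp only [hgdef, hμ]
    linear_combination (-1 : ℝ) * heqm x
  have hfdiff : Differentiable ℝ f := fun x => ((hfD x).differentiableAt)
  have hgdiff : Differentiable ℝ g := fun x => ((hgD x).differentiableAt)
  have hfper : Function.Periodic f 1 := fun x => by
    simp only [hfdef]; rw [hdpper x, hψpper x]
  have hgper : Function.Periodic g 1 := fun x => by
    simp only [hgdef]; rw [hdmper x, hψmper x]
  have hfderiv : ∀ x, deriv f x = (kp - μ) * ψp x - (b x + lam - γ) * f x :=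
    fun x => (hfD x).deriv
  have hgderiv : ∀ x, deriv g x = (km - μ) * ψm x + (b x + lam - γ) * g x :=
    fun x => (hgD x).deriv
  -- the two conserved-type quantities
  have hPD : ∀ x, HasDerivAt (fun y => ψp y * ψm y) (deriv ψp x * ψm x + ψp x * deriv ψm x) x :=
    fun x => ((hdp x).hasDerivAt).mul ((hdm x).hasDerivAt)
  set G : ℝ → ℝ := fun x => f x * g x + (μ - km) * (ψp x * ψm x) with hGdef
  set H : ℝ → ℝ := fun x => f x * g x + (μ - kp) * (ψp x * ψm x) with hHdef
  have hGD : ∀ x, HasDerivAt G ((kp - km) * (ψp x * g x)) x := by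
    intro x
    have h1 := ((hfD x).mul (hgD x)).add ((hPD x).const_mul (μ - km))
    refine h1.congr_deriv (Eq.symm ?_)
    simp only [hfdef, hgdef]
    ring
  have hHD : ∀ x, HasDerivAt H ((km - kp) * (f x * ψm x)) x := by
    intro x
    have h1 := ((hfD x).mul (hgD x)).add ((hPD x).const_mul (μ - kp))
    refine h1.congr_deriv (Eq.symm ?_)
    simp only [hfdef, hgdef]
    ring
  -- integrate the derivatives over one period
  have hcontf : Continuous f := hfdiff.continuous
  have hcontg : Continuous g := hgdiff.continuous
  have hGint : (∫ x in (0:ℝ)..1, (kp - km) * (ψp x * g x)) = G 1 - G 0 := by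
    refine intervalIntegral.integral_eq_sub_of_hasDerivAt (fun x _ => hGD x) ?_
    exact (continuous_const.mul ((hdp.continuous).mul hcontg)).intervalIntegrable 0 1
  have hHint : (∫ x in (0:ℝ)..1, (km - kp) * (f x * ψm x)) = H 1 - H 0 := by
    refine intervalIntegral.integral_eq_sub_of_hasDerivAt (fun x _ => hHD x) ?_
    exact (continuous_const.mul (hcontf.mul (hdm.continuous))).intervalIntegrable 0 1
  have hG10 : G 1 = G 0 := by
    simp only [hGdef]
    rw [show (1:ℝ) = 0 + 1 by norm_num, hfper 0, hgper 0, hψpper 0, hψmper 0]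
  have hH10 : H 1 = H 0 := by
    simp only [hHdef]
    rw [show (1:ℝ) = 0 + 1 by norm_num, hfper 0, hgper 0, hψpper 0, hψmper 0]
  rw [hG10, sub_self] at hGint
  rw [hH10, sub_self] at hHint
  rw [intervalIntegral.integral_const_mul] at hGint hHint
  have hint1 : (∫ x in (0:ℝ)..1, ψp x * g x) = 0 := by
    rcases mul_eq_zero.mp hGint with h | h
    · exact absurd (sub_eq_zero.mp h) hne
    · exact h
  have hint2 : (∫ x in (0:ℝ)..1, f x * ψm x) = 0 := by
    rcases mul_eq_zero.mp hHint with h | h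
    · exact absurd (sub_eq_zero.mp h).symm hne
    · exact h
  -- apply the key lemma to g and to f
  have hkm : km - μ = 0 := by
    refine keyB g ψm ψp (km - μ) hgdiff hgper hψmpos (hdp.continuous) hψppos hψpper ?_ ?_
    · intro x hx0
      rw [hgderiv x, hx0]
      ring
    · rw [← hint1]
      congr 1
      ext x
      ring
  have hkp : kp - μ = 0 := by
    refine keyB f ψp ψm (kp - μ) hfdiff hfper hψppos (hdm.continuous) hψmpos hψmper ?_ ?_
    · intro x hx0
      rw [hfderiv x, hx0]
      ring
    · exact hint2
  exact hne (by linarith)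
end

section
/- Let b : ℝ → ℝ be continuous, let γ, k ∈ ℝ, and let φ : ℝ → ℝ be twice continuously differentiable with φ(x) > 0 for all x ∈ ℝ, satisfying φ'' + b φ' + γ b φ = k φ on ℝ, and such that φ'(x) + γφ(x) > 0 for all x ∈ ℝ. Define g(x) := ∫₀ˣ (γφ'(y) + kφ(y)) / (φ'(y) + γφ(y)) dy. Then the function μ := exp ∘ g is twice continuously differentiable and satisfies μ'' − b μ' + (γ b − k) μ = 0 on ℝ. -/
/-- If `φ > 0` is a `C²` solution of `φ'' + bφ' + γbφ = kφ` on `ℝ` with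
`φ' + γφ > 0` everywhere, and `g(x) := ∫₀ˣ (γφ' + kφ)/(φ' + γφ)`, then `μ := exp ∘ g` is
`C²` and satisfies `μ'' - bμ' + (γb - k)μ = 0` on `ℝ`. -/
theorem stmt5 (b : ℝ → ℝ) (γ k : ℝ) (φ : ℝ → ℝ)
    (hb : Continuous b) (hφ : ContDiff ℝ 2 φ) (hφpos : ∀ x, 0 < φ x)
    (heq : ∀ x : ℝ,
      deriv (deriv φ) x + b x * deriv φ x + γ * b x * φ x = k * φ x)
    (hm : ∀ x : ℝ, 0 < deriv φ x + γ * φ x)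
    (g : ℝ → ℝ)
    (hg : g = fun x => ∫ y in (0:ℝ)..x,
      (γ * deriv φ y + k * φ y) / (deriv φ y + γ * φ y))
    (μ : ℝ → ℝ) (hμ : μ = fun x => Real.exp (g x)) :
    ContDiff ℝ 2 μ ∧
    ∀ x : ℝ, deriv (deriv μ) x - b x * deriv μ x + (γ * b x - k) * μ x = 0 := by
  have hφ1 : ContDiff ℝ 1 (deriv φ) := (contDiff_succ_iff_deriv.mp hφ).2.2
  set ψ : ℝ → ℝ := fun x => deriv φ x + γ * φ x with hψdef
  set N : ℝ → ℝ := fun x => γ * deriv φ x + k * φ x with hNdef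
  set f : ℝ → ℝ := fun x => N x / ψ x with hfdef
  have hψne : ∀ x, ψ x ≠ 0 := fun x => (hm x).ne'
  have hψC1 : ContDiff ℝ 1 ψ := hφ1.add (contDiff_const.mul (hφ.of_le one_le_two))
  have hNC1 : ContDiff ℝ 1 N :=
    (contDiff_const.mul hφ1).add (contDiff_const.mul (hφ.of_le one_le_two))
  have hfC1 : ContDiff ℝ 1 f := hNC1.div hψC1 hψne
  have hfcont : Continuous f := hfC1.continuous
  have hgderiv : ∀ x, HasDerivAt g (f x) x := by
    intro x
    rw [hg]
    exact intervalIntegral.integral_hasDerivAt_right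
      (hfcont.intervalIntegrable _ _)
      (hfcont.stronglyMeasurableAtFilter _ _) hfcont.continuousAt
  have hgd : deriv g = f := funext fun x => (hgderiv x).deriv
  have hgC2 : ContDiff ℝ 2 g := by
    rw [show (2 : WithTop ℕ∞) = 1 + 1 from by norm_num, contDiff_succ_iff_deriv]
    exact ⟨fun x => (hgderiv x).differentiableAt, by simp, hgd ▸ hfC1⟩
  have hμC2 : ContDiff ℝ 2 μ := by
    rw [hμ]; exact Real.contDiff_exp.comp hgC2
  have hμderiv : ∀ x, HasDerivAt μ (Real.exp (g x) * f x) x := by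
    intro x; rw [hμ]; exact (hgderiv x).exp
  have hμd : deriv μ = fun x => Real.exp (g x) * f x :=
    funext fun x => (hμderiv x).deriv
  refine ⟨hμC2, fun x => ?_⟩
  have hφd : HasDerivAt φ (deriv φ x) x :=
    ((hφ.differentiable two_ne_zero) x).hasDerivAt
  have hφ'd : HasDerivAt (deriv φ) (deriv (deriv φ) x) x :=
    ((hφ1.differentiable one_ne_zero) x).hasDerivAt
  have hNd : HasDerivAt N (γ * deriv (deriv φ) x + k * deriv φ x) x :=
    (hφ'd.const_mul γ).add (hφd.const_mul k)
  have hψd : HasDerivAt ψ (deriv (deriv φ) x + γ * deriv φ x) x :=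
    hφ'd.add (hφd.const_mul γ)
  have hfd : HasDerivAt f
      (((γ * deriv (deriv φ) x + k * deriv φ x) * ψ x -
        N x * (deriv (deriv φ) x + γ * deriv φ x)) / ψ x ^ 2) x :=
    hNd.div hψd (hψne x)
  have hμ2 : HasDerivAt (deriv μ)
      (Real.exp (g x) * f x * f x + Real.exp (g x) *
        (((γ * deriv (deriv φ) x + k * deriv φ x) * ψ x -
          N x * (deriv (deriv φ) x + γ * deriv φ x)) / ψ x ^ 2)) x := by
    rw [hμd]
    exact (hgderiv x).exp.mul hfd
  rw [hμ2.deriv, hμd, hμ]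
  have hpp : deriv (deriv φ) x = k * φ x - b x * deriv φ x - γ * b x * φ x := by
    linarith [heq x]
  simp only [hfdef, hNdef, hψdef, hpp]
  have hne : deriv φ x + γ * φ x ≠ 0 := hψne x
  field_simp
  ring
end

section
/- Let b : ℝ → ℝ be continuous and 1-periodic, let γ, k ∈ ℝ with γ ≠ 0, and let φ : ℝ → ℝ be twice continuously differentiable, 1-periodic, positive on ℝ, satisfying φ'' + b φ' + γ b φ = k φ on ℝ, and such that φ'(x) + γφ(x) > 0 for all x ∈ ℝ. Define g(x) := ∫₀ˣ (γφ'(y) + kφ(y)) / (φ'(y) + γφ(y)) dy and h(x) := ∫₀ˣ e^{−g(y)} / (φ'(y) + γφ(y)) dy. Then h(1) ≠ 0, and, setting C := (e^{−g(1)} − 1)/h(1), the function φ⁻(x) := e^{g(x)}(1 + C h(x)) is twice continuously differentiable, 1-periodic, positive on ℝ, and satisfies (φ⁻)'' − b (φ⁻)' + γ b φ⁻ = k φ⁻ on ℝ. -/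
/-- the explicit transformation producing from a positive `1`-periodic principal
eigenfunction `φ` of `ψ ↦ ψ'' + bψ' + γbψ` a positive `1`-periodic principal eigenfunction
`φ⁻(x) = e^{g(x)}(1 + C h(x))` of `ψ ↦ ψ'' - bψ' + γbψ` with the same eigenvalue `k`. -/
theorem stmt6 (b : ℝ → ℝ) (γ k : ℝ) (φ : ℝ → ℝ)
    (hb : Continuous b) (hbper : Function.Periodic b 1) (hγ : γ ≠ 0)
    (hφ : ContDiff ℝ 2 φ) (hφper : Function.Periodic φ 1) (hφpos : ∀ x, 0 < φ x)
    (heq : ∀ x : ℝ,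
      deriv (deriv φ) x + b x * deriv φ x + γ * b x * φ x = k * φ x)
    (hm : ∀ x : ℝ, 0 < deriv φ x + γ * φ x)
    (g h : ℝ → ℝ)
    (hg : g = fun x => ∫ y in (0:ℝ)..x,
      (γ * deriv φ y + k * φ y) / (deriv φ y + γ * φ y))
    (hh : h = fun x => ∫ y in (0:ℝ)..x,
      Real.exp (-g y) / (deriv φ y + γ * φ y))
    (C : ℝ) (hC : C = (Real.exp (-g 1) - 1) / h 1)
    (φm : ℝ → ℝ) (hφm : φm = fun x => Real.exp (g x) * (1 + C * h x)) :
    h 1 ≠ 0 ∧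
    ContDiff ℝ 2 φm ∧
    Function.Periodic φm 1 ∧
    (∀ x : ℝ, 0 < φm x) ∧
    (∀ x : ℝ,
      deriv (deriv φm) x - b x * deriv φm x + γ * b x * φm x = k * φm x) := by
  -- smoothness basics
  have hφ1 : ContDiff ℝ 1 φ := hφ.of_le (by norm_num)
  have hφd : Differentiable ℝ φ := hφ1.differentiable one_ne_zero
  have hφ'1 : ContDiff ℝ 1 (deriv φ) := by
    have : ContDiff ℝ (1+1) φ := by norm_num; exact hφ
    exact (contDiff_succ_iff_deriv.mp this).2.2
  have hφ'd : Differentiable ℝ (deriv φ) := hφ'1.differentiable one_ne_zero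
  have hφ''c : Continuous (deriv (deriv φ)) := (contDiff_one_iff_deriv.mp hφ'1).2
  have hφ'per : Function.Periodic (deriv φ) 1 := by
    intro x; rw [← deriv_comp_add_const]; simp only [hφper.funext]
  -- the function m
  set M : ℝ → ℝ := fun x => deriv φ x + γ * φ x with hM
  have hM1 : ContDiff ℝ 1 M := hφ'1.add (contDiff_const.mul hφ1)
  have hMc : Continuous M := hM1.continuous
  have hMne : ∀ x, M x ≠ 0 := fun x => (hm x).ne'
  have hMper : Function.Periodic M 1 := fun x => by simp only [M, hφ'per x, hφper x]
  have hM' : ∀ x, HasDerivAt M (deriv (deriv φ) x + γ * deriv φ x) x := by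
    intro x
    exact ((hφ'd x).hasDerivAt).add (((hφd x).hasDerivAt).const_mul γ)
  -- the function N
  set N : ℝ → ℝ := fun x => γ * deriv φ x + k * φ x with hN
  have hN1 : ContDiff ℝ 1 N := (contDiff_const.mul hφ'1).add (contDiff_const.mul hφ1)
  have hNper : Function.Periodic N 1 := fun x => by simp only [N, hφ'per x, hφper x]
  have hN' : ∀ x, HasDerivAt N (γ * deriv (deriv φ) x + k * deriv φ x) x := by
    intro x
    exact (((hφ'd x).hasDerivAt).const_mul γ).add (((hφd x).hasDerivAt).const_mul k)
  -- the function f1 = N / M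
  set f1 : ℝ → ℝ := fun x => N x / M x with hf1
  have hf11 : ContDiff ℝ 1 f1 := hN1.div hM1 hMne
  have hf1c : Continuous f1 := hf11.continuous
  have hf1per : Function.Periodic f1 1 := fun x => by simp only [f1, hNper x, hMper x]
  -- g basics
  have hgd : ∀ x, HasDerivAt g (f1 x) x := by
    intro x
    rw [hg]
    exact (hf1c.integral_hasStrictDerivAt 0 x).hasDerivAt
  have hgdiff : Differentiable ℝ g := fun x => (hgd x).differentiableAt
  have hgderiv : deriv g = f1 := funext fun x => (hgd x).deriv
  have hg2 : ContDiff ℝ 2 g := by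
    have : ContDiff ℝ (1+1) g := by
      rw [contDiff_succ_iff_deriv]
      refine ⟨hgdiff, by simp, ?_⟩
      rw [hgderiv]; exact hf11
    norm_num at this; exact this
  have hgadd : ∀ x, g (x + 1) = g x + g 1 := by
    intro x
    have hint : ∀ a c : ℝ, IntervalIntegrable f1 MeasureTheory.volume a c :=
      fun a c => hf1c.intervalIntegrable a c
    have h1 : g (x + 1) = (∫ y in (0:ℝ)..1, f1 y) + ∫ y in (1:ℝ)..(x+1), f1 y := by
      rw [hg]
      exact (intervalIntegral.integral_add_adjacent_intervals (hint 0 1) (hint 1 (x+1))).symm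
    have h2 : (∫ y in (1:ℝ)..(x+1), f1 y) = ∫ y in (0:ℝ)..x, f1 (y + 1) := by
      rw [intervalIntegral.integral_comp_add_right]
      norm_num
    have h3 : (∫ y in (0:ℝ)..x, f1 (y + 1)) = ∫ y in (0:ℝ)..x, f1 y := by
      congr 1; ext y; exact hf1per y
    rw [h1, h2, h3, hg]
    ring
  -- u = exp(-g)/M
  set u : ℝ → ℝ := fun x => Real.exp (-g x) / M x with hu
  have hu1 : ContDiff ℝ 1 u :=
    (Real.contDiff_exp.comp (hg2.of_le (by norm_num)).neg).div hM1 hMne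
  have huc : Continuous u := hu1.continuous
  have hupos : ∀ x, 0 < u x := fun x => div_pos (Real.exp_pos _) (hm x)
  have huadd : ∀ y, u (y + 1) = Real.exp (-g 1) * u y := by
    intro y
    simp only [u, hgadd y, hMper y, neg_add, Real.exp_add]
    ring
  -- h basics
  have hhd : ∀ x, HasDerivAt h (u x) x := by
    intro x
    rw [hh]
    exact (huc.integral_hasStrictDerivAt 0 x).hasDerivAt
  have hhdiff : Differentiable ℝ h := fun x => (hhd x).differentiableAt
  have hhderiv : deriv h = u := funext fun x => (hhd x).deriv
  have hh2 : ContDiff ℝ 2 h := by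
    have : ContDiff ℝ (1+1) h := by
      rw [contDiff_succ_iff_deriv]
      refine ⟨hhdiff, by simp, ?_⟩
      rw [hhderiv]; exact hu1
    norm_num at this; exact this
  have hh1pos : 0 < h 1 := by
    rw [hh]
    exact intervalIntegral.intervalIntegral_pos_of_pos
      (huc.intervalIntegrable 0 1) hupos one_pos
  have hh1ne : h 1 ≠ 0 := hh1pos.ne'
  have hhadd : ∀ x, h (x + 1) = h 1 + Real.exp (-g 1) * h x := by
    intro x
    have hint : ∀ a c : ℝ, IntervalIntegrable u MeasureTheory.volume a c :=
      fun a c => huc.intervalIntegrable a c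
    have h1 : h (x + 1) = (∫ y in (0:ℝ)..1, u y) + ∫ y in (1:ℝ)..(x+1), u y := by
      rw [hh]
      exact (intervalIntegral.integral_add_adjacent_intervals (hint 0 1) (hint 1 (x+1))).symm
    have h2 : (∫ y in (1:ℝ)..(x+1), u y) = ∫ y in (0:ℝ)..x, u (y + 1) := by
      rw [intervalIntegral.integral_comp_add_right]
      norm_num
    have h3 : (∫ y in (0:ℝ)..x, u (y + 1)) = Real.exp (-g 1) * ∫ y in (0:ℝ)..x, u y := by
      rw [← intervalIntegral.integral_const_mul]
      congr 1; ext y; exact huadd y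
    rw [h1, h2, h3, hh]
  have hCh1 : C * h 1 = Real.exp (-g 1) - 1 := by
    rw [hC]; field_simp
  -- periodicity of φm
  have hφmper : Function.Periodic φm 1 := by
    intro x
    rw [hφm]
    simp only
    rw [hgadd x, hhadd x]
    have e1 : 1 + C * (h 1 + Real.exp (-g 1) * h x) = Real.exp (-g 1) * (1 + C * h x) := by
      rw [mul_add, ← mul_assoc, mul_comm C (Real.exp (-g 1)), mul_assoc]
      rw [mul_add]
      have : (1:ℝ) + C * h 1 = Real.exp (-g 1) := by linarith [hCh1]
      linarith [this]
    calc Real.exp (g x + g 1) * (1 + C * (h 1 + Real.exp (-g 1) * h x))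
        = Real.exp (g x) * Real.exp (g 1) * (Real.exp (-g 1) * (1 + C * h x)) := by
          rw [Real.exp_add, e1]
      _ = Real.exp (g x) * (Real.exp (g 1) * Real.exp (-g 1)) * (1 + C * h x) := by ring
      _ = Real.exp (g x) * (1 + C * h x) := by
          rw [← Real.exp_add, add_neg_cancel, Real.exp_zero, mul_one]
  -- positivity
  have hφmpos : ∀ x, 0 < φm x := by
    have key : ∀ x ∈ Set.Icc (0:ℝ) 1, 0 < φm x := by
      intro x hx
      rw [hφm]
      simp only
      have hg0 : h 0 = 0 := by rw [hh]; simp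
      have hxnn : 0 ≤ h x := by
        rw [hh]
        exact intervalIntegral.integral_nonneg hx.1 (fun y _ => (hupos y).le)
      have hxle : h x ≤ h 1 := by
        have : h 1 - h x = ∫ y in x..(1:ℝ), u y := by
          rw [hh]
          simp only
          rw [← intervalIntegral.integral_add_adjacent_intervals
            (huc.intervalIntegrable 0 x) (huc.intervalIntegrable x 1)]
          ring
        have hnn : 0 ≤ ∫ y in x..(1:ℝ), u y :=
          intervalIntegral.integral_nonneg hx.2 (fun y _ => (hupos y).le)
        linarith
      have hpos : 0 < 1 + C * h x := by
        rcases le_or_gt 0 C with hC0 | hC0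
        · nlinarith
        · have : C * h 1 ≤ C * h x := by nlinarith
          have := Real.exp_pos (-g 1)
          nlinarith [hCh1]
      positivity
    intro x
    obtain ⟨y, hy, hxy⟩ := hφmper.exists_mem_Ico₀ one_pos x
    rw [hxy]
    exact key y ⟨hy.1, hy.2.le⟩
  -- smoothness of φm
  have hφm2 : ContDiff ℝ 2 φm := by
    rw [hφm]
    exact (Real.contDiff_exp.comp hg2).mul
      (contDiff_const.add (contDiff_const.mul hh2))
  -- first derivative of φm
  set P : ℝ → ℝ := fun x => f1 x * φm x + C / M x with hP
  have hφmd : ∀ x, HasDerivAt φm (P x) x := by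
    intro x
    have h1 : HasDerivAt (fun y => Real.exp (g y) * (1 + C * h y))
        (Real.exp (g x) * f1 x * (1 + C * h x) + Real.exp (g x) * (C * u x)) x := by
      exact (((hgd x).exp).mul (((hhd x).const_mul C).const_add 1))
    have e2 : Real.exp (g x) * (C * u x) = C / M x := by
      simp only [hu, Real.exp_neg]
      field_simp
    have e : Real.exp (g x) * f1 x * (1 + C * h x) + Real.exp (g x) * (C * u x) = P x := by
      simp only [hP, hφm]
      rw [e2]
      ring
    rw [hφm]
    exact e ▸ h1
  have hφmderiv : deriv φm = P := funext fun x => (hφmd x).deriv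
  -- derivative pieces at a point
  have hODE : ∀ x : ℝ,
      deriv (deriv φm) x - b x * deriv φm x + γ * b x * φm x = k * φm x := by
    intro x
    have hf1d : HasDerivAt f1
        (((γ * deriv (deriv φ) x + k * deriv φ x) * M x -
          N x * (deriv (deriv φ) x + γ * deriv φ x)) / (M x)^2) x :=
      (hN' x).div (hM' x) (hMne x)
    have hCd : HasDerivAt (fun y => C / M y)
        ((0 * M x - C * (deriv (deriv φ) x + γ * deriv φ x)) / (M x)^2) x :=
      (hasDerivAt_const x C).div (hM' x) (hMne x)
    have hPd : HasDerivAt P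
        ((((γ * deriv (deriv φ) x + k * deriv φ x) * M x -
          N x * (deriv (deriv φ) x + γ * deriv φ x)) / (M x)^2) * φm x
          + f1 x * P x
          + (0 * M x - C * (deriv (deriv φ) x + γ * deriv φ x)) / (M x)^2) x :=
      ((hf1d.mul (hφmd x)).add hCd)
    have hderiv2 : deriv (deriv φm) x =
        (((γ * deriv (deriv φ) x + k * deriv φ x) * M x -
          N x * (deriv (deriv φ) x + γ * deriv φ x)) / (M x)^2) * φm x
          + f1 x * P x
          + (0 * M x - C * (deriv (deriv φ) x + γ * deriv φ x)) / (M x)^2 := by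
      rw [hφmderiv]
      exact hPd.deriv
    rw [hderiv2, hφmderiv]
    have hφ2x : deriv (deriv φ) x = k * φ x - b x * deriv φ x - γ * b x * φ x := by
      linarith [heq x]
    simp only [hP, hf1, hN, hM, hφ2x]
    have hMx : deriv φ x + γ * φ x ≠ 0 := hMne x
    field_simp
    ring
  exact ⟨hh1ne, hφm2, hφmper, hφmpos, hODE⟩
end

section
/- Let b : ℝ → ℝ be continuously differentiable, let γ, k ∈ ℝ, and let φ : ℝ → ℝ be twice continuously differentiable with φ(x) > 0 for all x ∈ ℝ, satisfying φ'' + b φ' + γ b φ = k φ on ℝ. Define y₁(x) := (φ'(x) + γφ(x)) · exp(∫₀ˣ b(s) ds). Then y₁ is twice continuously differentiable and satisfies y₁'' − b y₁' + (γ b − k) y₁ = 0 on ℝ. If moreover b and φ are 1-periodic and ∫₀¹ b(s) ds = 0, then y₁ is 1-periodic. -/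
/-- If `φ > 0` is a `C²` solution of `φ'' + bφ' + γbφ = kφ` on `ℝ` with `b` of
class `C¹`, then `y₁(x) := (φ'(x) + γφ(x)) exp(∫₀ˣ b)` is `C²` and satisfies
`y₁'' - b y₁' + (γb - k) y₁ = 0` on `ℝ`; moreover if `b` and `φ` are `1`-periodic and `b` has
zero mean, then `y₁` is `1`-periodic. -/
theorem stmt7 (b : ℝ → ℝ) (γ k : ℝ) (φ : ℝ → ℝ)
    (hb : ContDiff ℝ 1 b) (hφ : ContDiff ℝ 2 φ) (hφpos : ∀ x, 0 < φ x)
    (heq : ∀ x : ℝ,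
      deriv (deriv φ) x + b x * deriv φ x + γ * b x * φ x = k * φ x)
    (y₁ : ℝ → ℝ)
    (hy₁ : y₁ = fun x => (deriv φ x + γ * φ x) * Real.exp (∫ s in (0:ℝ)..x, b s)) :
    (ContDiff ℝ 2 y₁ ∧
      ∀ x : ℝ, deriv (deriv y₁) x - b x * deriv y₁ x + (γ * b x - k) * y₁ x = 0) ∧
    (Function.Periodic b 1 → Function.Periodic φ 1 → (∫ s in (0:ℝ)..1, b s) = 0 →
      Function.Periodic y₁ 1) := by
  have hbc : Continuous b := hb.continuous
  set B : ℝ → ℝ := fun x => ∫ s in (0:ℝ)..x, b s with hBdef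
  have hB : ∀ x : ℝ, HasDerivAt B (b x) x := fun x =>
    intervalIntegral.integral_hasDerivAt_right (hbc.intervalIntegrable 0 x)
      (hbc.stronglyMeasurableAtFilter _ _) hbc.continuousAt
  -- φ is C² : derivatives
  have hφ1 : ContDiff ℝ 1 (deriv φ) := by
    have := (contDiff_succ_iff_deriv (n := 1)).1 (by exact_mod_cast hφ)
    exact this.2.2
  have hφd : Differentiable ℝ φ := hφ.differentiable (by norm_num)
  have hφ'd : Differentiable ℝ (deriv φ) := hφ1.differentiable one_ne_zero
  have hφ' : ∀ x, HasDerivAt φ (deriv φ x) x := fun x => (hφd x).hasDerivAt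
  have hφ'' : ∀ x, HasDerivAt (deriv φ) (deriv (deriv φ) x) x := fun x => (hφ'd x).hasDerivAt
  -- derivative of y₁
  have hy₁d : ∀ x, HasDerivAt y₁ ((γ * deriv φ x + k * φ x) * Real.exp (B x)) x := by
    intro x
    rw [hy₁]
    have h1 : HasDerivAt (fun x => deriv φ x + γ * φ x)
        (deriv (deriv φ) x + γ * deriv φ x) x := (hφ'' x).add ((hφ' x).const_mul γ)
    have h2 : HasDerivAt (fun x => Real.exp (B x)) (b x * Real.exp (B x)) x := by
      simpa [mul_comm] using (hB x).exp
    have := h1.fun_mul h2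
    refine this.congr_deriv (Eq.symm ?_)
    simp only [hBdef]
    linear_combination (-Real.exp (∫ s in (0:ℝ)..x, b s)) * heq x
  have hdy₁ : deriv y₁ = fun x => (γ * deriv φ x + k * φ x) * Real.exp (B x) :=
    funext fun x => (hy₁d x).deriv
  -- second derivative
  have hy₁dd : ∀ x, HasDerivAt (deriv y₁)
      ((γ * deriv (deriv φ) x + k * deriv φ x + b x * (γ * deriv φ x + k * φ x))
        * Real.exp (B x)) x := by
    intro x
    rw [hdy₁]
    have h1 : HasDerivAt (fun x => γ * deriv φ x + k * φ x)
        (γ * deriv (deriv φ) x + k * deriv φ x) x :=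
      ((hφ'' x).const_mul γ).add ((hφ' x).const_mul k)
    have h2 : HasDerivAt (fun x => Real.exp (B x)) (b x * Real.exp (B x)) x := by
      simpa [mul_comm] using (hB x).exp
    have := h1.fun_mul h2
    refine this.congr_deriv (Eq.symm ?_)
    ring
  constructor
  · constructor
    · -- C²
      have hBcd : ContDiff ℝ 2 B := by
        rw [show (2 : WithTop ℕ∞) = 1 + 1 from rfl, contDiff_succ_iff_deriv]
        refine ⟨fun x => (hB x).differentiableAt, by simp, ?_⟩
        have : deriv B = b := funext fun x => (hB x).deriv
        rw [this]; exact hb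
      have hy1diff : Differentiable ℝ y₁ := fun x => (hy₁d x).differentiableAt
      rw [show (2 : WithTop ℕ∞) = 1 + 1 from rfl, contDiff_succ_iff_deriv]
      refine ⟨hy1diff, by simp, ?_⟩
      rw [hdy₁]
      exact ((contDiff_const.mul hφ1).add (contDiff_const.mul (hφ.of_le (by norm_num)))).mul
        (hBcd.of_le (by norm_num)).exp
    · intro x
      rw [(hy₁dd x).deriv, hdy₁, hy₁]
      simp only [hBdef]
      linear_combination γ * Real.exp (∫ s in (0:ℝ)..x, b s) * heq x
  · intro hbp hφp hmean
    intro x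
    have hφ'per : deriv φ (x + 1) = deriv φ x := by
      have : (fun x => φ (x + 1)) = φ := funext fun x => hφp x
      calc deriv φ (x + 1) = deriv (fun x => φ (x + 1)) x := (deriv_comp_add_const φ 1 x).symm
        _ = deriv φ x := by rw [this]
    have hBper : B (x + 1) = B x := by
      have h1 : B (x + 1) = B x + ∫ s in x..(x+1), b s := by
        rw [hBdef]
        simp only
        rw [← intervalIntegral.integral_add_adjacent_intervals
          (hbc.intervalIntegrable 0 x) (hbc.intervalIntegrable x (x+1))]
      have h2 : (∫ s in x..(x+1), b s) = ∫ s in (0:ℝ)..(0+1), b s :=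
        hbp.intervalIntegral_add_eq x 0
      rw [h1, h2]
      simpa using hmean
    simp only [hBdef] at hBper
    rw [hy₁]
    simp only
    rw [hφ'per, hφp x, hBper]
end

section
/- Let q : ℝ → ℝ be continuous and 1-periodic, let λ, k ∈ ℝ, and let ψ : ℝ → ℝ be twice continuously differentiable, 1-periodic, positive on ℝ, satisfying ψ'' + 2λψ' + (q + λ²)ψ = k ψ on ℝ. Then k = ∫₀¹ (ψ'(x)/ψ(x))² dx + λ² + ∫₀¹ q(x) dx. In particular k ≥ λ² + ∫₀¹ q, with equality if and only if ψ is constant. -/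
/-- integrating the eigenvalue equation against `1/ψ` over a period gives
`k = ∫₀¹ (ψ'/ψ)² + λ² + ∫₀¹ q`; in particular `k ≥ λ² + ∫₀¹ q`, with equality iff `ψ` is
constant. -/
theorem stmt10 (q : ℝ → ℝ) (lam k : ℝ)
    (hq : Continuous q) (hqper : Function.Periodic q 1)
    (ψ : ℝ → ℝ) (hψ : ContDiff ℝ 2 ψ) (hψper : Function.Periodic ψ 1)
    (hψpos : ∀ x, 0 < ψ x)
    (heq : ∀ x : ℝ,
      deriv (deriv ψ) x + 2 * lam * deriv ψ x + (q x + lam ^ 2) * ψ x = k * ψ x) :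
    k = (∫ x in (0:ℝ)..1, (deriv ψ x / ψ x) ^ 2) + lam ^ 2 + ∫ x in (0:ℝ)..1, q x ∧
    lam ^ 2 + (∫ x in (0:ℝ)..1, q x) ≤ k ∧
    (k = lam ^ 2 + (∫ x in (0:ℝ)..1, q x) ↔ ∃ c : ℝ, ∀ x, ψ x = c) := by
  have hψne : ∀ x, ψ x ≠ 0 := fun x => (hψpos x).ne'
  have hψc : Continuous ψ := hψ.continuous
  have hψ1 : ContDiff ℝ 1 (deriv ψ) := by
    have h2 : ContDiff ℝ ((1:ℕ)+1) ψ := by norm_num [hψ]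
    exact (contDiff_succ_iff_deriv.mp h2).2.2
  have hd1 : Differentiable ℝ ψ := hψ.differentiable (by norm_num)
  have hd2 : Differentiable ℝ (deriv ψ) := hψ1.differentiable one_ne_zero
  have hd1c : Continuous (deriv ψ) := hd2.continuous
  have hd2c : Continuous (deriv (deriv ψ)) := hψ1.continuous_deriv le_rfl
  -- periodicity of deriv ψ
  have hdper : Function.Periodic (deriv ψ) 1 := by
    intro x
    have h1 : deriv (fun y => ψ (y + 1)) x = deriv ψ (x + 1) := deriv_comp_add_const ψ 1 x
    have h2 : (fun y => ψ (y + 1)) = ψ := funext fun y => hψper y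
    rw [h2] at h1
    exact h1.symm
  set F : ℝ → ℝ := fun x => deriv ψ x / ψ x with hF
  have hFc : Continuous F := hd1c.div hψc hψne
  -- F 1 = F 0, ψ 1 = ψ 0
  have hψ10 : ψ 1 = ψ 0 := by simpa using hψper 0
  have hF10 : F 1 = F 0 := by
    show deriv ψ 1 / ψ 1 = deriv ψ 0 / ψ 0
    rw [show (1:ℝ) = 0 + 1 by norm_num, hdper 0, hψper 0]
  -- ∫₀¹ F = log ψ 1 - log ψ 0 = 0
  have hIF : ∫ x in (0:ℝ)..1, F x = 0 := by
    have h1 : ∀ x ∈ Set.uIcc (0:ℝ) 1,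
        HasDerivAt (fun y => Real.log (ψ y)) (F x) x := fun x _ =>
      ((hd1 x).hasDerivAt).log (hψne x)
    have := intervalIntegral.integral_eq_sub_of_hasDerivAt h1
      (hFc.intervalIntegrable 0 1)
    rw [this, hψ10, sub_self]
  -- derivative of F
  have hF' : ∀ x, HasDerivAt F (deriv (deriv ψ) x / ψ x - F x ^ 2) x := by
    intro x
    have h : HasDerivAt F _ x := ((hd2 x).hasDerivAt).div ((hd1 x).hasDerivAt) (hψne x)
    convert h using 1
    have hne := hψne x
    show deriv (deriv ψ) x / ψ x - (deriv ψ x / ψ x) ^ 2 = _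
    field_simp
  have hF'c : Continuous (fun x => deriv (deriv ψ) x / ψ x - F x ^ 2) :=
    (hd2c.div hψc hψne).sub (hFc.pow 2)
  -- ∫₀¹ F' = F 1 - F 0 = 0
  have hIF' : ∫ x in (0:ℝ)..1, (deriv (deriv ψ) x / ψ x - F x ^ 2) = 0 := by
    rw [intervalIntegral.integral_eq_sub_of_hasDerivAt (fun x _ => hF' x)
      (hF'c.intervalIntegrable 0 1), hF10, sub_self]
  -- pointwise identity from the eigenvalue equation
  have hpt : ∀ x, deriv (deriv ψ) x / ψ x - F x ^ 2
      = k - lam ^ 2 - q x - 2 * lam * F x - F x ^ 2 := by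
    intro x
    have h := heq x
    have hne := hψne x
    show deriv (deriv ψ) x / ψ x - (deriv ψ x / ψ x) ^ 2
      = k - lam ^ 2 - q x - 2 * lam * (deriv ψ x / ψ x) - (deriv ψ x / ψ x) ^ 2
    field_simp
    linear_combination ψ x * h
  -- integrate the pointwise identity
  have hIq : IntervalIntegrable q MeasureTheory.volume 0 1 := hq.intervalIntegrable 0 1
  have hIFi : IntervalIntegrable F MeasureTheory.volume 0 1 := hFc.intervalIntegrable 0 1
  have hIF2i : IntervalIntegrable (fun x => F x ^ 2) MeasureTheory.volume 0 1 :=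
    (hFc.pow 2).intervalIntegrable 0 1
  have hsplit : ∫ x in (0:ℝ)..1, (k - lam ^ 2 - q x - 2 * lam * F x - F x ^ 2)
      = (k - lam ^ 2) - (∫ x in (0:ℝ)..1, q x) - 2 * lam * (∫ x in (0:ℝ)..1, F x)
        - ∫ x in (0:ℝ)..1, F x ^ 2 := by
    rw [intervalIntegral.integral_sub (((intervalIntegrable_const).sub hIq).sub
        (hIFi.const_mul (2*lam))) hIF2i,
      intervalIntegral.integral_sub ((intervalIntegrable_const).sub hIq)
        (hIFi.const_mul (2*lam)),
      intervalIntegral.integral_sub intervalIntegrable_const hIq,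
      intervalIntegral.integral_const, intervalIntegral.integral_const_mul]
    simp
  have hkey : k = (∫ x in (0:ℝ)..1, F x ^ 2) + lam ^ 2 + ∫ x in (0:ℝ)..1, q x := by
    have h0 : ∫ x in (0:ℝ)..1, (k - lam ^ 2 - q x - 2 * lam * F x - F x ^ 2) = 0 :=
      (intervalIntegral.integral_congr fun x _ => (hpt x).symm).trans hIF'
    rw [hsplit, hIF] at h0
    linarith
  have hF2nonneg : (0:ℝ) ≤ ∫ x in (0:ℝ)..1, F x ^ 2 :=
    intervalIntegral.integral_nonneg (by norm_num) (fun x _ => sq_nonneg _)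
  refine ⟨hkey, by linarith, ?_⟩
  constructor
  · intro hkeq
    have hzero : ∫ x in (0:ℝ)..1, F x ^ 2 = 0 := by linarith
    -- F = 0 on Ioc 0 1
    have hae : (fun x => F x ^ 2) =ᵐ[MeasureTheory.volume.restrict (Set.Ioc (0:ℝ) 1)] 0 := by
      rw [← intervalIntegral.integral_eq_zero_iff_of_le_of_nonneg_ae (by norm_num)
        (Filter.Eventually.of_forall fun x => sq_nonneg _) hIF2i]
      exact hzero
    have heqOn : Set.EqOn (fun x => F x ^ 2) 0 (Set.Ioc (0:ℝ) 1) :=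
      MeasureTheory.Measure.eqOn_Ioc_of_ae_eq (μ := MeasureTheory.volume) hae (hFc.pow 2).continuousOn
        continuousOn_const
    have hFzero : ∀ x ∈ Set.Ioc (0:ℝ) 1, deriv ψ x = 0 := by
      intro x hx
      have h2 : F x ^ 2 = 0 := heqOn hx
      have h3 : F x = 0 := by nlinarith [sq_nonneg (F x)]
      have h4 : deriv ψ x / ψ x = 0 := h3
      exact (div_eq_zero_iff.mp h4).resolve_right (hψne x)
    have hderiv0 : ∀ x, deriv ψ x = 0 := by
      intro x
      have hfr : deriv ψ x = deriv ψ (Int.fract x) := by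
        have h := hdper.sub_int_mul_eq (x := x) ⌊x⌋
        rw [mul_one] at h
        rw [Int.fract]
        exact h.symm
      rcases eq_or_lt_of_le (Int.fract_nonneg x) with h0 | h0
      · rw [hfr, ← h0]
        have : deriv ψ (0:ℝ) = deriv ψ 1 := by
          rw [show (1:ℝ) = 0 + 1 by norm_num, hdper 0]
        rw [this]
        exact hFzero 1 ⟨by norm_num, le_refl 1⟩
      · rw [hfr]
        exact hFzero _ ⟨h0, (Int.fract_lt_one x).le⟩
    refine ⟨ψ 0, fun x => ?_⟩
    exact is_const_of_deriv_eq_zero hd1 hderiv0 x 0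
  · rintro ⟨c, hc⟩
    have hψconst : ψ = fun _ => c := funext hc
    have hF0 : ∀ x, F x = 0 := by
      intro x
      simp [hF, hψconst]
    have : ∫ x in (0:ℝ)..1, F x ^ 2 = 0 := by
      simp [funext hF0]
    rw [hkey, this, zero_add]
end

section
/- Let b : ℝ → ℝ be continuously differentiable and 1-periodic, with b not identically zero and ∫₀¹ b(s) ds = 0. Let η > 0, let λ, k ∈ ℝ, and set r := b²/4 + b'/2 + η. If ψ : ℝ → ℝ is twice continuously differentiable, 1-periodic, positive on ℝ, and satisfies ψ'' + (−b + 2λ)ψ' + (λ² − λ b + r)ψ = k ψ on ℝ, then k > λ² + η. -/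
/-- with `r := b²/4 + b'/2 + η` and `b ≢ 0` of zero mean, the principal
periodic eigenvalue of `𝓛_λ[r;-b]`, associated with a positive `1`-periodic eigenfunction
`ψ`, is strictly larger than `λ² + η`. -/
theorem stmt12 (b : ℝ → ℝ) (η lam k : ℝ)
    (hb : ContDiff ℝ 1 b) (hbper : Function.Periodic b 1)
    (hbne : b ≠ 0) (hbmean : (∫ s in (0:ℝ)..1, b s) = 0) (hη : 0 < η)
    (r : ℝ → ℝ) (hr : r = fun x => (b x) ^ 2 / 4 + deriv b x / 2 + η)
    (ψ : ℝ → ℝ) (hψ : ContDiff ℝ 2 ψ) (hψper : Function.Periodic ψ 1)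
    (hψpos : ∀ x, 0 < ψ x)
    (heq : ∀ x : ℝ,
      deriv (deriv ψ) x + (-b x + 2 * lam) * deriv ψ x
        + (lam ^ 2 - lam * b x + r x) * ψ x = k * ψ x) :
    lam ^ 2 + η < k := by
  -- basic differentiability facts
  have hψd : Differentiable ℝ ψ := hψ.differentiable (by norm_num)
  have hψ2 : ContDiff ℝ 1 (deriv ψ) := by
    have := (contDiff_succ_iff_deriv (n := 1)).mp (by exact_mod_cast hψ)
    exact this.2.2
  have hψ'd : Differentiable ℝ (deriv ψ) := hψ2.differentiable one_ne_zero
  have hψ''c : Continuous (deriv (deriv ψ)) := hψ2.continuous_deriv le_rfl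
  have hbd : Differentiable ℝ b := hb.differentiable one_ne_zero
  have hb'c : Continuous (deriv b) := hb.continuous_deriv le_rfl
  have hψne : ∀ x, ψ x ≠ 0 := fun x => (hψpos x).ne'
  set p : ℝ → ℝ := fun x => deriv ψ x / ψ x with hpdef
  have hpd : Differentiable ℝ p := hψ'd.div hψd hψne
  have hpc : Continuous p := hpd.continuous
  -- derivative of p
  have hderivp : ∀ x, deriv p x
      = (deriv (deriv ψ) x * ψ x - deriv ψ x * deriv ψ x) / (ψ x) ^ 2 := by
    intro x
    rw [hpdef, deriv_fun_div (hψ'd x) (hψd x) (hψne x)]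
  -- pointwise identity for deriv p
  have hpe : ∀ x, deriv p x
      = (k - lam ^ 2 - η) - (p x - b x / 2) ^ 2
        - (2 * lam * p x - lam * b x + deriv b x / 2) := by
    intro x
    have h := heq x
    rw [hr] at h
    have hne := hψne x
    have hA : deriv (deriv ψ) x = k * ψ x - (-b x + 2 * lam) * deriv ψ x
        - (lam ^ 2 - lam * b x + ((b x) ^ 2 / 4 + deriv b x / 2 + η)) * ψ x := by
      simp only [] at h; linarith [h]
    rw [hderivp x, hA]
    simp only [hpdef]
    field_simp
    ring
  -- periodicity of deriv ψ and p
  have hψ'per : Function.Periodic (deriv ψ) 1 := by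
    intro x
    have : (fun y => ψ (y + 1)) = ψ := funext fun y => hψper y
    calc deriv ψ (x + 1) = deriv (fun y => ψ (y + 1)) x := by
          rw [deriv_comp_add_const]
      _ = deriv ψ x := by rw [this]
  have hpper : Function.Periodic p 1 := by
    intro x; simp only [hpdef, hψ'per x, hψper x]
  have hbper' : Function.Periodic (deriv b) 1 := by
    intro x
    have : (fun y => b (y + 1)) = b := funext fun y => hbper y
    calc deriv b (x + 1) = deriv (fun y => b (y + 1)) x := by
          rw [deriv_comp_add_const]
      _ = deriv b x := by rw [this]
  -- integrals over a period
  have hI1 : (∫ x in (0:ℝ)..1, deriv p x) = 0 := by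
    rw [intervalIntegral.integral_deriv_eq_sub
      (fun x _ => hpd x)]
    · have := hpper 0
      simp at this
      rw [this]; ring
    · apply Continuous.intervalIntegrable
      have : deriv p = fun x => (k - lam ^ 2 - η) - (p x - b x / 2) ^ 2
          - (2 * lam * p x - lam * b x + deriv b x / 2) := funext hpe
      rw [this]; fun_prop
  have hI2 : (∫ x in (0:ℝ)..1, p x) = 0 := by
    have hlog : ∀ x ∈ Set.uIcc (0:ℝ) 1,
        HasDerivAt (fun y => Real.log (ψ y)) (p x) x := by
      intro x _
      simpa [hpdef] using (hψd x).hasDerivAt.log (hψne x)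
    rw [intervalIntegral.integral_eq_sub_of_hasDerivAt hlog
      (hpc.intervalIntegrable 0 1)]
    have := hψper 0
    simp at this
    rw [this]; ring
  have hI3 : (∫ x in (0:ℝ)..1, deriv b x) = 0 := by
    rw [intervalIntegral.integral_deriv_eq_sub
      (fun x _ => hbd x) (hb'c.intervalIntegrable 0 1)]
    have := hbper 0
    simp at this
    rw [this]; ring
  set F : ℝ → ℝ := fun x => (p x - b x / 2) ^ 2 with hFdef
  have hFc : Continuous F := by rw [hFdef]; fun_prop
  have hFnn : ∀ x, 0 ≤ F x := fun x => sq_nonneg _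
  -- main identity : ∫ F = k - lam^2 - η
  have hkey : (∫ x in (0:ℝ)..1, F x) = k - lam ^ 2 - η := by
    have hsplit : (∫ x in (0:ℝ)..1, deriv p x)
        = (∫ x in (0:ℝ)..1, ((k - lam ^ 2 - η) - F x
            - (2 * lam * p x - lam * b x + deriv b x / 2))) := by
      congr 1; funext x; exact hpe x
    rw [hsplit] at hI1
    have hiF : IntervalIntegrable F MeasureTheory.volume 0 1 :=
      hFc.intervalIntegrable 0 1
    have hic : IntervalIntegrable (fun _ : ℝ => k - lam ^ 2 - η)
        MeasureTheory.volume 0 1 := intervalIntegrable_const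
    have hig : IntervalIntegrable
        (fun x => 2 * lam * p x - lam * b x + deriv b x / 2)
        MeasureTheory.volume 0 1 := by
      apply Continuous.intervalIntegrable; fun_prop
    rw [intervalIntegral.integral_sub (hic.sub hiF) hig,
        intervalIntegral.integral_sub hic hiF] at hI1
    have hG : (∫ x in (0:ℝ)..1,
        (2 * lam * p x - lam * b x + deriv b x / 2)) = 0 := by
      have h1 : IntervalIntegrable (fun x => 2 * lam * p x)
          MeasureTheory.volume 0 1 := by
        apply Continuous.intervalIntegrable; fun_prop
      have h2 : IntervalIntegrable (fun x => lam * b x)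
          MeasureTheory.volume 0 1 := by
        apply Continuous.intervalIntegrable
        exact continuous_const.mul hb.continuous
      have h3 : IntervalIntegrable (fun x => deriv b x / 2)
          MeasureTheory.volume 0 1 := by
        apply Continuous.intervalIntegrable; fun_prop
      rw [intervalIntegral.integral_add (h1.sub h2) h3,
          intervalIntegral.integral_sub h1 h2]
      have e1 : (∫ x in (0:ℝ)..1, 2 * lam * p x) = 2 * lam * ∫ x in (0:ℝ)..1, p x := by
        rw [intervalIntegral.integral_const_mul]
      have e2 : (∫ x in (0:ℝ)..1, lam * b x) = lam * ∫ x in (0:ℝ)..1, b x := by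
        rw [intervalIntegral.integral_const_mul]
      have e3 : (∫ x in (0:ℝ)..1, deriv b x / 2) = (∫ x in (0:ℝ)..1, deriv b x) / 2 := by
        rw [intervalIntegral.integral_div]
      rw [e1, e2, e3, hI2, hbmean, hI3]; ring
    rw [hG] at hI1
    simp at hI1
    linarith
  -- suppose for contradiction k ≤ lam^2 + η
  by_contra hcon
  push_neg at hcon
  have hFint0 : (∫ x in (0:ℝ)..1, F x) = 0 := by
    have h1 : (0:ℝ) ≤ ∫ x in (0:ℝ)..1, F x :=
      intervalIntegral.integral_nonneg (by norm_num) (fun x _ => hFnn x)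
    linarith [hkey]
  have hc0 : k - lam ^ 2 - η = 0 := by rw [← hkey]; exact hFint0
  -- F is periodic, so its integral over any period vanishes
  have hFper : Function.Periodic F 1 := by
    intro x; simp only [hFdef, hpper x, hbper x]
  have hFany : ∀ a : ℝ, (∫ x in a..(a+1), F x) = 0 := by
    intro a
    have := hFper.intervalIntegral_add_eq a 0
    simpa [this] using hFint0
  -- hence F vanishes identically
  have hF0 : ∀ x, F x = 0 := by
    intro x
    by_contra hx
    have hxpos : 0 < F x := lt_of_le_of_ne (hFnn x) (Ne.symm hx)
    set a : ℝ := x - 1/2 with ha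
    have hmem : x ∈ Set.Ioo a (a + 1) := by
      constructor <;> simp [ha] <;> linarith
    have hpos : 0 < ∫ t in a..(a+1), F t := by
      rw [intervalIntegral.integral_pos_iff_support_of_nonneg_ae
        (Filter.Eventually.of_forall hFnn) (hFc.intervalIntegrable a (a+1))]
      refine ⟨by linarith, ?_⟩
      have hopen : IsOpen (F ⁻¹' Set.Ioi 0 ∩ Set.Ioo a (a+1)) :=
        (isOpen_Ioi.preimage hFc).inter isOpen_Ioo
      have hsub : F ⁻¹' Set.Ioi 0 ∩ Set.Ioo a (a+1)
          ⊆ Function.support F ∩ Set.Ioc a (a+1) := by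
        rintro y ⟨hy1, hy2⟩
        exact ⟨ne_of_gt hy1, hy2.1, le_of_lt hy2.2⟩
      have hne : (F ⁻¹' Set.Ioi 0 ∩ Set.Ioo a (a+1)).Nonempty :=
        ⟨x, hxpos, hmem⟩
      calc (0:ENNReal) < MeasureTheory.volume (F ⁻¹' Set.Ioi 0 ∩ Set.Ioo a (a+1)) :=
            hopen.measure_pos _ hne
        _ ≤ _ := MeasureTheory.measure_mono hsub
    rw [hFany a] at hpos
    exact lt_irrefl _ hpos
  -- so p = b/2 everywhere
  have hpb : ∀ x, p x = b x / 2 := by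
    intro x
    have := hF0 x
    rw [hFdef] at this
    have := pow_eq_zero_iff (n := 2) (by norm_num) |>.mp this
    linarith
  have hpfun : p = fun x => b x / 2 := funext hpb
  -- hence deriv b = 0 everywhere
  have hb'0 : ∀ x, deriv b x = 0 := by
    intro x
    have h1 : deriv p x = deriv b x / 2 := by
      rw [hpfun, deriv_div_const]
    have h2 := hpe x
    have hz : (p x - b x / 2) ^ 2 = (0:ℝ) := hF0 x
    rw [h1, hz, hpb x, hc0] at h2
    linarith
  -- so b is constant, and by zero mean b = 0; contradiction
  have hbconst : ∀ x, b x = b 0 := fun x =>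
    is_const_of_deriv_eq_zero hbd hb'0 x 0
  have : (∫ s in (0:ℝ)..1, b s) = b 0 := by
    have : (fun s => b s) = fun _ => b 0 := funext hbconst
    rw [this, intervalIntegral.integral_const]
    simp
  have hb0 : b 0 = 0 := by rw [← this, hbmean]
  apply hbne
  funext x
  rw [hbconst x, hb0]
  rfl
end

section
/- Let r : [−1,1] → ℝ be continuous, and let k, k' ∈ ℝ. Suppose φ, ψ : [−1,1] → ℝ are twice continuously differentiable, positive on (−1,1), with φ(−1) = φ(1) = ψ(−1) = ψ(1) = 0, and satisfy φ''(x) + x φ'(x) + r(x)φ(x) = k φ(x) and ψ''(x) − x ψ'(x) + r(x)ψ(x) = k' ψ(x) for all x ∈ [−1,1]. Then k = k' − 1. -/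
/-- for `b(x) = x` on `[-1,1]` with Dirichlet boundary conditions, the
principal eigenvalues of `φ ↦ φ'' + xφ' + rφ` and `ψ ↦ ψ'' - xψ' + rψ` (characterized by
eigenfunctions positive in `(-1,1)` and vanishing at `±1`) satisfy `k = k' - 1`. -/
theorem stmt13 (r : ℝ → ℝ) (k k' : ℝ)
    (hr : ContinuousOn r (Set.Icc (-1:ℝ) 1))
    (φ ψ : ℝ → ℝ) (hφ : ContDiff ℝ 2 φ) (hψ : ContDiff ℝ 2 ψ)
    (hφpos : ∀ x ∈ Set.Ioo (-1:ℝ) 1, 0 < φ x)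
    (hψpos : ∀ x ∈ Set.Ioo (-1:ℝ) 1, 0 < ψ x)
    (hφbd : φ (-1) = 0 ∧ φ 1 = 0) (hψbd : ψ (-1) = 0 ∧ ψ 1 = 0)
    (heqφ : ∀ x ∈ Set.Icc (-1:ℝ) 1,
      deriv (deriv φ) x + x * deriv φ x + r x * φ x = k * φ x)
    (heqψ : ∀ x ∈ Set.Icc (-1:ℝ) 1,
      deriv (deriv ψ) x - x * deriv ψ x + r x * ψ x = k' * ψ x) :
    k = k' - 1 := by
  have hφd : Differentiable ℝ φ := hφ.differentiable (by norm_num)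
  have hψd : Differentiable ℝ ψ := hψ.differentiable (by norm_num)
  have hφ1 : ContDiff ℝ 1 (deriv φ) := by
    have := ((contDiff_succ_iff_deriv (n := 1)).mp hφ).2.2; exact_mod_cast this
  have hψ1 : ContDiff ℝ 1 (deriv ψ) := by
    have := ((contDiff_succ_iff_deriv (n := 1)).mp hψ).2.2; exact_mod_cast this
  have hφ1d : Differentiable ℝ (deriv φ) := hφ1.differentiable (by norm_num)
  have hψ1d : Differentiable ℝ (deriv ψ) := hψ1.differentiable (by norm_num)
  set W : ℝ → ℝ := fun x => deriv φ x * ψ x - φ x * deriv ψ x + x * (φ x * ψ x) with hWdef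
  have hW : ∀ x ∈ Set.Icc (-1:ℝ) 1, HasDerivAt W ((k - k' + 1) * (φ x * ψ x)) x := by
    intro x hx
    have h1 : HasDerivAt W
        ((deriv (deriv φ) x * ψ x + deriv φ x * deriv ψ x)
          - (deriv φ x * deriv ψ x + φ x * deriv (deriv ψ) x)
          + (1 * (φ x * ψ x) + x * (deriv φ x * ψ x + φ x * deriv ψ x))) x := by
      exact ((((hφ1d x).hasDerivAt.mul (hψd x).hasDerivAt).sub
        ((hφd x).hasDerivAt.mul (hψ1d x).hasDerivAt)).add
        ((hasDerivAt_id x).mul ((hφd x).hasDerivAt.mul (hψd x).hasDerivAt)))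
    convert h1 using 1
    have e1 := heqφ x hx
    have e2 := heqψ x hx
    have hφ'' : deriv (deriv φ) x = k * φ x - x * deriv φ x - r x * φ x := by linarith
    have hψ'' : deriv (deriv ψ) x = k' * ψ x + x * deriv ψ x - r x * ψ x := by linarith
    rw [hφ'', hψ'']; ring
  have hcont : Continuous fun x => (k - k' + 1) * (φ x * ψ x) :=
    continuous_const.mul (hφd.continuous.mul hψd.continuous)
  have hint : ∫ x in (-1:ℝ)..1, (k - k' + 1) * (φ x * ψ x) = W 1 - W (-1) := by
    apply intervalIntegral.integral_eq_sub_of_hasDerivAt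
    · intro x hx
      exact hW x (by rwa [Set.uIcc_of_le (by norm_num)] at hx)
    · exact hcont.intervalIntegrable _ _
  have hW1 : W 1 = 0 := by simp [hWdef, hφbd.2, hψbd.2]
  have hWm1 : W (-1) = 0 := by simp [hWdef, hφbd.1, hψbd.1]
  have hIpos : 0 < ∫ x in (-1:ℝ)..1, φ x * ψ x := by
    apply intervalIntegral.intervalIntegral_pos_of_pos_on
    · exact ((hφd.continuous.mul hψd.continuous).intervalIntegrable _ _)
    · intro x hx; exact mul_pos (hφpos x hx) (hψpos x hx)
    · norm_num
  rw [hW1, hWm1, sub_zero, intervalIntegral.integral_const_mul] at hint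
  rcases mul_eq_zero.mp hint with h' | h'
  · linarith
  · exact absurd h' (ne_of_gt hIpos)
end

section
/- Let r : ℝ → ℝ be continuous and 1-periodic, let b : ℝ → ℝ be continuously differentiable and 1-periodic, and let λ ∈ ℝ. Suppose that for every L > 0 there are a real number K(L) and a twice continuously differentiable function φ_L : ℝ → ℝ that is L-periodic, positive on ℝ, normalized by ∫₀¹ φ_L(x)² dx = 1, and satisfies φ_L''(x) − d/dx[(b(x/L) + 2λ) φ_L(x)] + (r(x/L) + λ b(x/L) + λ²) φ_L(x) = K(L) φ_L(x) for all x ∈ ℝ. Then K(L) converges, as L → 0⁺, to ∫₀¹ r(s) ds + λ ∫₀¹ b(s) ds + λ². -/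
open Set Filter intervalIntegral

private lemma stmt14_per_rep {f : ℝ → ℝ} {c : ℝ} (hc : 0 < c)
    (hp : Function.Periodic f c) (t x : ℝ) :
    ∃ y ∈ Set.Icc t (t + c), f x = f y := by
  refine ⟨x - ⌊(x - t) / c⌋ * c, ?_, (hp.sub_int_mul_eq _).symm⟩
  have h1 : (⌊(x - t) / c⌋ : ℝ) ≤ (x - t) / c := Int.floor_le _
  have h2 : (x - t) / c - 1 < ⌊(x - t) / c⌋ := Int.sub_one_lt_floor _
  rw [div_sub' hc.ne', div_lt_iff₀ hc] at h2
  rw [le_div_iff₀ hc] at h1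
  constructor <;> nlinarith

private lemma stmt14_per_bound {f : ℝ → ℝ} {c : ℝ} (hc : 0 < c) (hf : Continuous f)
    (hp : Function.Periodic f c) : ∃ C : ℝ, 0 ≤ C ∧ ∀ x, |f x| ≤ C := by
  obtain ⟨a, -, ha⟩ := isCompact_Icc.exists_isMaxOn (Set.nonempty_Icc.2 (by linarith : (0:ℝ) ≤ 0 + c))
    (hf.abs.continuousOn (s := Set.Icc 0 (0 + c)))
  refine ⟨|f a|, abs_nonneg _, fun x => ?_⟩
  obtain ⟨y, hy, hxy⟩ := stmt14_per_rep hc hp 0 x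
  rw [hxy]
  exact ha hy

private lemma stmt14_exists_zero {f : ℝ → ℝ} {L : ℝ} (hL : 0 < L) (hf : Continuous f)
    (h0 : (∫ x in (0:ℝ)..L, f x) = 0) : ∃ x₀ ∈ Set.Icc 0 L, f x₀ = 0 := by
  by_contra h
  push_neg at h
  rcases lt_or_gt_of_ne (h 0 (Set.left_mem_Icc.2 hL.le)) with h0neg | h0pos
  · have hneg : ∀ x ∈ Set.Icc (0:ℝ) L, f x < 0 := by
      intro x hx
      rcases lt_or_gt_of_ne (h x hx) with hx' | hx'
      · exact hx'
      · exfalso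
        have : (0:ℝ) ∈ Set.Icc (f 0) (f x) := ⟨h0neg.le, hx'.le⟩
        obtain ⟨y, hy, hy0⟩ := intermediate_value_Icc hx.1 (hf.continuousOn) this
        exact h y (⟨hy.1, hy.2.trans hx.2⟩) hy0
    have : (∫ x in (0:ℝ)..L, f x) < 0 := by
      have := intervalIntegral_pos_of_pos_on (f := fun x => -f x)
        ((hf.neg).intervalIntegrable _ _) (fun x hx => by
          have := hneg x ⟨hx.1.le, hx.2.le⟩; simpa using this) hL
      rw [intervalIntegral.integral_neg] at this
      linarith
    exact this.ne h0
  · have hpos : ∀ x ∈ Set.Icc (0:ℝ) L, 0 < f x := by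
      intro x hx
      rcases lt_or_gt_of_ne (h x hx) with hx' | hx'
      · exfalso
        have : (0:ℝ) ∈ Set.Icc (f x) (f 0) := ⟨hx'.le, h0pos.le⟩
        obtain ⟨y, hy, hy0⟩ := intermediate_value_Icc' hx.1 (hf.continuousOn) this
        exact h y (⟨hy.1, hy.2.trans hx.2⟩) hy0
      · exact hx'
    have : 0 < (∫ x in (0:ℝ)..L, f x) :=
      intervalIntegral_pos_of_pos_on (hf.intervalIntegrable _ _)
        (fun x hx => hpos x ⟨hx.1.le, hx.2.le⟩) hL
    exact this.ne' h0

set_option maxHeartbeats 1000000 in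
/-- homogenization limit in rapidly oscillating media. If for every `L > 0`
the adjoint principal eigenvalue problem for `𝓛_λ[r_L;b_L]` (with `r_L(x) = r(x/L)`,
`b_L(x) = b(x/L)`) has an `L`-periodic positive normalized eigenfunction `Φ L` with
eigenvalue `K L`, then `K L → ∫₀¹ r + λ∫₀¹ b + λ²` as `L → 0⁺`. -/
theorem stmt14 (r b : ℝ → ℝ) (lam : ℝ)
    (hr : Continuous r) (hrper : Function.Periodic r 1)
    (hb : ContDiff ℝ 1 b) (hbper : Function.Periodic b 1)
    (K : ℝ → ℝ) (Φ : ℝ → ℝ → ℝ)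
    (hyp : ∀ L : ℝ, 0 < L →
      ContDiff ℝ 2 (Φ L) ∧
      Function.Periodic (Φ L) L ∧
      (∀ x, 0 < Φ L x) ∧
      (∫ x in (0:ℝ)..1, (Φ L x) ^ 2) = 1 ∧
      (∀ x : ℝ,
        deriv (deriv (Φ L)) x
          - deriv (fun y => (b (y / L) + 2 * lam) * Φ L y) x
          + (r (x / L) + lam * b (x / L) + lam ^ 2) * Φ L x = K L * Φ L x)) :
    Filter.Tendsto K (nhdsWithin 0 (Set.Ioi 0))
      (nhds ((∫ s in (0:ℝ)..1, r s) + lam * (∫ s in (0:ℝ)..1, b s) + lam ^ 2)) := by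
  have tri : ∀ A B : ℝ, |A - B| ≤ |A| + |B| := fun A B => by
    calc |A - B| = |A + -B| := by rw [sub_eq_add_neg]
    _ ≤ |A| + |-B| := abs_add_le _ _
    _ = |A| + |B| := by rw [abs_neg]
  have hbc : Continuous b := hb.continuous
  have hbd : Differentiable ℝ b := hb.differentiable one_ne_zero
  have hb'c : Continuous (deriv b) := hb.continuous_deriv le_rfl
  have hb'per : Function.Periodic (deriv b) 1 := by
    intro x
    have h1 : (fun y => b (y + 1)) = b := funext fun y => hbper y
    have h2 : deriv (fun y => b (y + 1)) x = deriv b (x + 1) := deriv_comp_add_const b 1 x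
    rw [h1] at h2
    exact h2.symm
  obtain ⟨Cr, hCr0, hCr⟩ := stmt14_per_bound one_pos hr hrper
  obtain ⟨Cb, hCb0, hCb⟩ := stmt14_per_bound one_pos hbc hbper
  obtain ⟨Cb', hCb'0, hCb'⟩ := stmt14_per_bound one_pos hb'c hb'per
  set β : ℝ := ∫ s in (0:ℝ)..1, b s with hβdef
  have hβb : |β| ≤ Cb := by
    have h1 : ‖∫ s in (0:ℝ)..1, b s‖ ≤ Cb * |1 - 0| :=
      intervalIntegral.norm_integral_le_of_norm_le_const
        (fun t _ => by rw [Real.norm_eq_abs]; exact hCb t)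
    rw [Real.norm_eq_abs, ← hβdef] at h1
    simpa using h1
  set T : ℝ := (∫ s in (0:ℝ)..1, r s) + lam * β + lam ^ 2 with hTdef
  set CV : ℝ := Cr + |lam| * Cb + lam ^ 2 with hCVdef
  set Cc : ℝ := Cb + 2 * |lam| with hCcdef
  set D : ℝ := 2 * CV + Cb' with hDdef
  have hCV0 : 0 ≤ CV := by positivity
  have hCc0 : 0 ≤ Cc := by positivity
  have hD0 : 0 ≤ D := by positivity
  set E : ℝ := 2 * CV + 2 * Cc ^ 2 + 3 * Cc * Real.sqrt D + D with hEdef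
  have hE0 : 0 ≤ E := by positivity
  set F : ℝ := E + Cb + |β| with hFdef
  have hF0 : 0 ≤ F := by positivity
  set G : ℝ := 2 * CV + Cc * F + F ^ 2 with hGdef
  have hG0 : 0 ≤ G := by positivity
  clear_value β T CV Cc D E F G
  have key : ∀ L : ℝ, 0 < L → L ≤ 1 → |K L - T| ≤ F * G * L := by
    intro L hL hL1
    obtain ⟨hφC, hperφ, hpos, -, heq⟩ := hyp L hL
    set φ : ℝ → ℝ := Φ L with hφdef
    clear_value φ
    have hLne : L ≠ 0 := hL.ne'
    have hφd : Differentiable ℝ φ := hφC.differentiable (by norm_num)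
    have hd1 : ContDiff ℝ 1 (deriv φ) := by
      have h2 : ContDiff ℝ (1 + 1 : ℕ) φ := by exact_mod_cast hφC
      exact (contDiff_succ_iff_deriv.mp (by exact_mod_cast h2)).2.2
    have hφ'd : Differentiable ℝ (deriv φ) := hd1.differentiable one_ne_zero
    have hφc : Continuous φ := hφd.continuous
    have hφ'c : Continuous (deriv φ) := hd1.continuous
    have hφ''c : Continuous (deriv (deriv φ)) := hd1.continuous_deriv le_rfl
    have hφne : ∀ x, φ x ≠ 0 := fun x => (hpos x).ne'
    -- derivative of x ↦ b (x / L)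
    have hdivL : Continuous (fun x : ℝ => x / L) := continuous_id.div_const L
    have hbL : ∀ x : ℝ, HasDerivAt (fun y => b (y / L)) (deriv b (x / L) * (1 / L)) x := by
      intro x
      have h1 : HasDerivAt (fun y : ℝ => y / L) (1 / L) x := by
        simpa using (hasDerivAt_id x).div_const L
      have h2 := ((hbd (x / L)).hasDerivAt).comp x h1
      simpa [Function.comp_def] using h2
    have hbLc : Continuous (fun x : ℝ => b (x / L)) := hbc.comp' hdivL
    have hrLc : Continuous (fun x : ℝ => r (x / L)) := hr.comp' hdivL
    have hbL'c : Continuous (fun x : ℝ => deriv b (x / L) * (1 / L)) :=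
      (hb'c.comp' hdivL).mul continuous_const
    have hVc : Continuous (fun x : ℝ => r (x / L) + lam * b (x / L) + lam ^ 2) :=
      (hrLc.add (continuous_const.mul hbLc)).add continuous_const
    have hbLper : Function.Periodic (fun x : ℝ => b (x / L)) L := by
      intro x
      have h1 : (x + L) / L = x / L + 1 := by field_simp
      simp only [h1, hbper (x / L)]
    -- u and its properties
    set u : ℝ → ℝ := fun x => deriv φ x / φ x with hudef
    have hue : Continuous u := hφ'c.div hφc hφne
    have hφ'per : Function.Periodic (deriv φ) L := by
      intro x
      have h1 : (fun y => φ (y + L)) = φ := funext fun y => hperφ y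
      have h2 : deriv (fun y => φ (y + L)) x = deriv φ (x + L) := deriv_comp_add_const φ L x
      rw [h1] at h2
      exact h2.symm
    have huper : Function.Periodic u L := by
      intro x
      simp only [hudef, hφ'per x, hperφ x]
    -- pointwise bounds on coefficients
    have hVb : ∀ x : ℝ, |r (x / L) + lam * b (x / L) + lam ^ 2| ≤ CV := by
      intro x
      have h1 := abs_add_le (r (x / L) + lam * b (x / L)) (lam ^ 2)
      have h2 := abs_add_le (r (x / L)) (lam * b (x / L))
      have h3 : |lam * b (x / L)| = |lam| * |b (x / L)| := abs_mul _ _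
      have h4 : |lam ^ 2| = lam ^ 2 := abs_of_nonneg (sq_nonneg lam)
      have h5 := hCr (x / L)
      have h6 := hCb (x / L)
      have h7 : |lam| * |b (x / L)| ≤ |lam| * Cb :=
        mul_le_mul_of_nonneg_left h6 (abs_nonneg lam)
      rw [hCVdef]
      linarith
    have hccb : ∀ x : ℝ, |b (x / L) + 2 * lam| ≤ Cc := by
      intro x
      have h1 := abs_add_le (b (x / L)) (2 * lam)
      have h2 : |2 * lam| = 2 * |lam| := by rw [abs_mul]; norm_num
      have h3 := hCb (x / L)
      rw [hCcdef]
      linarith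
    -- the pointwise equation
    have hprod : ∀ x : ℝ, deriv (fun y => (b (y / L) + 2 * lam) * φ y) x
        = deriv b (x / L) * (1 / L) * φ x + (b (x / L) + 2 * lam) * deriv φ x := by
      intro x
      exact (((hbL x).add_const (2 * lam)).mul (hφd x).hasDerivAt).deriv
    have hφ'' : ∀ x : ℝ, deriv (deriv φ) x
        = K L * φ x + deriv b (x / L) * (1 / L) * φ x + (b (x / L) + 2 * lam) * deriv φ x
          - (r (x / L) + lam * b (x / L) + lam ^ 2) * φ x := by
      intro x
      have h := heq x
      rw [hprod x] at h
      linarith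
    set ρ : ℝ → ℝ := fun x =>
      (K L + (b (x / L) + 2 * lam) * u x)
        - ((r (x / L) + lam * b (x / L) + lam ^ 2) + u x ^ 2) with hρdef
    have hρc : Continuous ρ := by
      apply Continuous.sub
      · exact continuous_const.add ((hbLc.add continuous_const).mul hue)
      · exact hVc.add (hue.pow 2)
    clear_value ρ
    have hu' : ∀ x : ℝ, HasDerivAt u (ρ x + deriv b (x / L) * (1 / L)) x := by
      intro x
      have h := ((hφ'd x).hasDerivAt).fun_div ((hφd x).hasDerivAt) (hφne x)
      refine h.congr_deriv ?_
      rw [hφ'' x]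
      simp only [hρdef, hudef]
      field_simp [hφne x, hLne]
      ring
    set ω : ℝ → ℝ := fun x => u x - (b (x / L) - β) with hωdef
    have hωc : Continuous ω := hue.sub (hbLc.sub continuous_const)
    clear_value ω
    have hωper : Function.Periodic ω L := by
      intro x
      simp only [hωdef, huper x, hbLper x]
    have hω' : ∀ x : ℝ, HasDerivAt ω (ρ x) x := by
      intro x
      have h := (hu' x).fun_sub ((hbL x).sub_const β)
      rw [hωdef]
      refine h.congr_deriv ?_
      ring
    -- basic integrability
    have hi_u : IntervalIntegrable u MeasureTheory.volume 0 L := hue.intervalIntegrable _ _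
    have hi_u2 : IntervalIntegrable (fun x => u x ^ 2) MeasureTheory.volume 0 L :=
      (hue.pow 2).intervalIntegrable _ _
    have hi_bu : IntervalIntegrable (fun x => b (x / L) * u x) MeasureTheory.volume 0 L :=
      (hbLc.mul hue).intervalIntegrable _ _
    have hi_V : IntervalIntegrable (fun x => r (x / L) + lam * b (x / L) + lam ^ 2)
        MeasureTheory.volume 0 L := hVc.intervalIntegrable _ _
    -- ∫ u = 0
    have hU0 : (∫ x in (0:ℝ)..L, u x) = 0 := by
      rw [integral_eq_sub_of_hasDerivAt
        (f := fun y => Real.log (φ y))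
        (fun x _ => ((hφd x).hasDerivAt).log (hφne x)) hi_u]
      have h1 : φ L = φ 0 := by simpa using hperφ 0
      rw [h1, sub_self]
    -- ∫ ρ = 0
    have hρ0 : (∫ x in (0:ℝ)..L, ρ x) = 0 := by
      rw [integral_eq_sub_of_hasDerivAt (fun x _ => hω' x) (hρc.intervalIntegrable _ _)]
      have h1 : ω L = ω 0 := by simpa using hωper 0
      rw [h1, sub_self]
    -- scaling of integrals
    have hscale : ∀ f : ℝ → ℝ, (∫ x in (0:ℝ)..L, f (x / L)) = L * ∫ s in (0:ℝ)..1, f s := by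
      intro f
      rw [intervalIntegral.integral_comp_div (c := L) (f := f) hLne]
      rw [zero_div, div_self hLne, smul_eq_mul]
    have hVint : (∫ x in (0:ℝ)..L, (r (x / L) + lam * b (x / L) + lam ^ 2)) = L * T := by
      have h0 := hscale (fun s => r s + lam * b s + lam ^ 2)
      rw [h0]
      congr 1
      rw [hTdef, hβdef]
      rw [intervalIntegral.integral_add (((hr).fun_add (continuous_const.fun_mul hbc)).intervalIntegrable _ _)
        (intervalIntegrable_const),
        intervalIntegral.integral_add (hr.intervalIntegrable _ _)
        ((continuous_const.fun_mul hbc).intervalIntegrable _ _),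
        intervalIntegral.integral_const_mul, intervalIntegral.integral_const]
      simp
    have hbint : (∫ x in (0:ℝ)..L, b (x / L)) = L * β := by
      rw [hscale b, hβdef]
    -- the key identity:  ∫ u ω = L (K - T)
    have hsplit : (∫ x in (0:ℝ)..L, ρ x)
        = L * K L + (∫ x in (0:ℝ)..L, b (x / L) * u x)
          - L * T - (∫ x in (0:ℝ)..L, u x ^ 2) := by
      rw [hρdef]
      rw [intervalIntegral.integral_sub
        ((continuous_const.fun_add ((hbLc.fun_add continuous_const).fun_mul hue)).intervalIntegrable _ _)
        (hi_V.add hi_u2)]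
      rw [intervalIntegral.integral_add intervalIntegrable_const
        (((hbLc.fun_add continuous_const).fun_mul hue).intervalIntegrable _ _)]
      rw [intervalIntegral.integral_add hi_V hi_u2]
      have hmul : (∫ x in (0:ℝ)..L, (b (x / L) + 2 * lam) * u x)
          = (∫ x in (0:ℝ)..L, b (x / L) * u x) + 2 * lam * (∫ x in (0:ℝ)..L, u x) := by
        rw [intervalIntegral.integral_congr
          (g := fun x => b (x / L) * u x + 2 * lam * u x) (fun x _ => by ring)]
        rw [intervalIntegral.integral_add hi_bu ((continuous_const.fun_mul hue).intervalIntegrable _ _)]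
        rw [intervalIntegral.integral_const_mul]
      rw [hmul, hU0, hVint, intervalIntegral.integral_const]
      simp only [smul_eq_mul]
      ring
    have hKT : (∫ x in (0:ℝ)..L, u x * ω x) = L * (K L - T) := by
      have huω : (∫ x in (0:ℝ)..L, u x * ω x)
          = (∫ x in (0:ℝ)..L, u x ^ 2) - (∫ x in (0:ℝ)..L, b (x / L) * u x)
            + β * (∫ x in (0:ℝ)..L, u x) := by
        rw [intervalIntegral.integral_congr
          (g := fun x => (u x ^ 2 - b (x / L) * u x) + β * u x)
          (fun x _ => by simp only [hωdef, hudef]; ring)]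
        rw [intervalIntegral.integral_add (hi_u2.sub hi_bu)
          ((continuous_const.fun_mul hue).intervalIntegrable _ _)]
        rw [intervalIntegral.integral_sub hi_u2 hi_bu, intervalIntegral.integral_const_mul]
      rw [huω, hU0]
      rw [hsplit] at hρ0
      linarith
    -- K bound : |K L| ≤ CV
    have hKb : |K L| ≤ CV := by
      have hI1 : (∫ x in (0:ℝ)..L, deriv (deriv φ) x) = 0 := by
        rw [integral_eq_sub_of_hasDerivAt (fun x _ => (hφ'd x).hasDerivAt)
          (hφ''c.intervalIntegrable _ _)]
        have h1 : deriv φ L = deriv φ 0 := by simpa using hφ'per 0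
        rw [h1, sub_self]
      have hder_eq : deriv (fun y => (b (y / L) + 2 * lam) * φ y)
          = fun x => deriv b (x / L) * (1 / L) * φ x + (b (x / L) + 2 * lam) * deriv φ x :=
        funext hprod
      have hderc : Continuous (deriv (fun y => (b (y / L) + 2 * lam) * φ y)) := by
        rw [hder_eq]
        exact (hbL'c.mul hφc).add ((hbLc.add continuous_const).mul hφ'c)
      have hI2 : (∫ x in (0:ℝ)..L, deriv (fun y => (b (y / L) + 2 * lam) * φ y) x) = 0 := by
        rw [integral_eq_sub_of_hasDerivAt
          (fun x _ => (((hbL x).add_const (2 * lam)).fun_mul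
            (hφd x).hasDerivAt).differentiableAt.hasDerivAt)
          (hderc.intervalIntegrable _ _)]
        have h1 : (L : ℝ) / L = 1 := div_self hLne
        have h2 : (0 : ℝ) / L = 0 := zero_div L
        have h3 : b 1 = b 0 := by simpa using hbper 0
        have h4 : φ L = φ 0 := by simpa using hperφ 0
        rw [h1, h2, h3, h4, sub_self]
      have hVφ : (∫ x in (0:ℝ)..L, (r (x / L) + lam * b (x / L) + lam ^ 2) * φ x)
          = K L * (∫ x in (0:ℝ)..L, φ x) := by
        have hcongr := intervalIntegral.integral_congr (a := (0:ℝ)) (b := L)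
          (μ := MeasureTheory.volume)
          (f := fun x => deriv (deriv φ) x - deriv (fun y => (b (y / L) + 2 * lam) * φ y) x
            + (r (x / L) + lam * b (x / L) + lam ^ 2) * φ x)
          (g := fun x => K L * φ x) (fun x _ => heq x)
        rw [intervalIntegral.integral_add
          ((hφ''c.fun_sub hderc).intervalIntegrable _ _)
          ((hVc.fun_mul hφc).intervalIntegrable _ _)] at hcongr
        rw [intervalIntegral.integral_sub (hφ''c.intervalIntegrable _ _)
          (hderc.intervalIntegrable _ _)] at hcongr
        rw [hI1, hI2, intervalIntegral.integral_const_mul] at hcongr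
        linarith
      have hφpos : 0 < (∫ x in (0:ℝ)..L, φ x) :=
        intervalIntegral_pos_of_pos (hφc.intervalIntegrable _ _) hpos hL
      have habs : |∫ x in (0:ℝ)..L, (r (x / L) + lam * b (x / L) + lam ^ 2) * φ x|
          ≤ CV * (∫ x in (0:ℝ)..L, φ x) := by
        have h1 : |∫ x in (0:ℝ)..L, (r (x / L) + lam * b (x / L) + lam ^ 2) * φ x|
            ≤ ∫ x in (0:ℝ)..L, |(r (x / L) + lam * b (x / L) + lam ^ 2) * φ x| :=
          intervalIntegral.abs_integral_le_integral_abs hL.le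
        have h2 : (∫ x in (0:ℝ)..L, |(r (x / L) + lam * b (x / L) + lam ^ 2) * φ x|)
            ≤ ∫ x in (0:ℝ)..L, CV * φ x := by
          apply intervalIntegral.integral_mono_on hL.le
            (((hVc.fun_mul hφc).abs).intervalIntegrable _ _)
            ((continuous_const.fun_mul hφc).intervalIntegrable _ _)
          intro x _
          rw [abs_mul, abs_of_pos (hpos x)]
          exact mul_le_mul_of_nonneg_right (hVb x) (hpos x).le
        rw [intervalIntegral.integral_const_mul] at h2
        linarith
      have h3 : |K L| * (∫ x in (0:ℝ)..L, φ x)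
          = |∫ x in (0:ℝ)..L, (r (x / L) + lam * b (x / L) + lam ^ 2) * φ x| := by
        rw [hVφ, abs_mul, abs_of_pos hφpos]
      exact le_of_mul_le_mul_right (by linarith [habs, h3]) hφpos
    -- extrema of u
    obtain ⟨a1, -, ha1⟩ := isCompact_Icc.exists_isMaxOn
      (Set.nonempty_Icc.2 (by linarith : (0:ℝ) ≤ 0 + L)) (hue.continuousOn)
    obtain ⟨a2, -, ha2⟩ := isCompact_Icc.exists_isMinOn
      (Set.nonempty_Icc.2 (by linarith : (0:ℝ) ≤ 0 + L)) (hue.continuousOn)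
    have ha1g : ∀ x, u x ≤ u a1 := by
      intro x
      obtain ⟨y, hy, hxy⟩ := stmt14_per_rep hL huper 0 x
      rw [hxy]; exact ha1 hy
    have ha2g : ∀ x, u a2 ≤ u x := by
      intro x
      obtain ⟨y, hy, hxy⟩ := stmt14_per_rep hL huper 0 x
      rw [hxy]; exact ha2 hy
    set m : ℝ := max |u a1| |u a2| with hmdef
    have hm0 : 0 ≤ m := le_trans (abs_nonneg _) (le_max_left _ _)
    have hm : ∀ x, |u x| ≤ m := by
      intro x
      refine abs_le.2 ⟨?_, ?_⟩
      · have h1 : -|u a2| ≤ u a2 := neg_abs_le _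
        have h2 : -m ≤ -|u a2| := neg_le_neg (le_max_right _ _)
        linarith [ha2g x]
      · exact le_trans (ha1g x) (le_trans (le_abs_self _) (le_max_left _ _))
    have hsq : ∀ a : ℝ, ρ a + deriv b (a / L) * (1 / L) = 0 →
        u a ^ 2 ≤ 2 * CV + Cc * m + Cb' / L := by
      intro a hza
      have h1 : u a ^ 2 = K L + (b (a / L) + 2 * lam) * u a
          - (r (a / L) + lam * b (a / L) + lam ^ 2) + deriv b (a / L) * (1 / L) := by
        rw [hρdef] at hza
        simp only at hza
        linarith
      have h2 : (b (a / L) + 2 * lam) * u a ≤ Cc * m := by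
        calc (b (a / L) + 2 * lam) * u a ≤ |(b (a / L) + 2 * lam) * u a| := le_abs_self _
        _ = |b (a / L) + 2 * lam| * |u a| := abs_mul _ _
        _ ≤ Cc * m := mul_le_mul (hccb a) (hm a) (abs_nonneg _) hCc0
      have h3 : -(r (a / L) + lam * b (a / L) + lam ^ 2) ≤ CV := by
        have := hVb a
        have := neg_abs_le (r (a / L) + lam * b (a / L) + lam ^ 2)
        linarith
      have h4 : deriv b (a / L) * (1 / L) ≤ Cb' / L := by
        have h5 := hCb' (a / L)
        have h6 : deriv b (a / L) * (1 / L) ≤ |deriv b (a / L)| * (1 / L) :=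
          mul_le_mul_of_nonneg_right (le_abs_self _) (by positivity)
        have h7 : |deriv b (a / L)| * (1 / L) ≤ Cb' * (1 / L) :=
          mul_le_mul_of_nonneg_right h5 (by positivity)
        have h8 : Cb' * (1 / L) = Cb' / L := by ring
        linarith
      have h5 : K L ≤ CV := le_trans (le_abs_self _) hKb
      linarith
    have hmax0 : ρ a1 + deriv b (a1 / L) * (1 / L) = 0 := by
      have hloc : IsLocalMax u a1 := Filter.Eventually.of_forall ha1g
      exact hloc.hasDerivAt_eq_zero (hu' a1)
    have hmin0 : ρ a2 + deriv b (a2 / L) * (1 / L) = 0 := by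
      have hloc : IsLocalMin u a2 := Filter.Eventually.of_forall ha2g
      exact hloc.hasDerivAt_eq_zero (hu' a2)
    have hm2 : m ^ 2 ≤ 2 * CV + Cc * m + Cb' / L := by
      have hsq1 := hsq a1 hmax0
      have hsq2 := hsq a2 hmin0
      rcases max_cases |u a1| |u a2| with ⟨he, -⟩ | ⟨he, -⟩
      · have hmeq : m = |u a1| := by rw [hmdef]; exact he
        rw [hmeq] at hsq1 ⊢
        rw [sq_abs]
        exact hsq1
      · have hmeq : m = |u a2| := by rw [hmdef]; exact he
        rw [hmeq] at hsq2 ⊢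
        rw [sq_abs]
        exact hsq2
    clear_value m
    -- m ≤ Cc + sqrt(D/L)
    have hDL : m ^ 2 ≤ D / L + Cc * m := by
      have h1 : 2 * CV ≤ 2 * CV / L := by
        rw [le_div_iff₀ hL]
        calc 2 * CV * L ≤ 2 * CV * 1 := mul_le_mul_of_nonneg_left hL1 (by positivity)
        _ = 2 * CV := mul_one _
      have h2 : D / L = 2 * CV / L + Cb' / L := by rw [hDdef]; ring
      linarith
    set s : ℝ := Real.sqrt (D / L) with hsdef
    have hs0 : 0 ≤ s := Real.sqrt_nonneg _
    have hs2 : s ^ 2 = D / L := Real.sq_sqrt (by positivity)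
    clear_value s
    have hms : m ≤ Cc + s := by
      by_contra hcon
      push_neg at hcon
      have hmpos : 0 < m := lt_of_le_of_lt (by positivity) hcon
      have k1 : m * s < m * (m - Cc) := by
        apply mul_lt_mul_of_pos_left ?_ hmpos
        linarith
      have k2 : s * s ≤ m * s := mul_le_mul_of_nonneg_right (by linarith) hs0
      have e1 : m * (m - Cc) = m ^ 2 - Cc * m := by ring
      have e2 : s ^ 2 = s * s := sq s
      linarith [hDL, hs2]
    have hLs : L * s ≤ Real.sqrt D := by
      have h1 : (L * s) ^ 2 ≤ D := by
        have h2 : (L * s) ^ 2 = L * D := by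
          rw [mul_pow, hs2]; field_simp
        rw [h2]
        calc L * D ≤ 1 * D := mul_le_mul_of_nonneg_right hL1 hD0
        _ = D := one_mul _
      calc L * s = Real.sqrt ((L * s) ^ 2) := (Real.sqrt_sq (by positivity)).symm
      _ ≤ Real.sqrt D := Real.sqrt_le_sqrt h1
    -- zero of ω and bound machinery
    have hω0 : (∫ x in (0:ℝ)..L, ω x) = 0 := by
      have h1 : (∫ x in (0:ℝ)..L, ω x)
          = (∫ x in (0:ℝ)..L, u x) - ((∫ x in (0:ℝ)..L, b (x / L)) - ∫ x in (0:ℝ)..L, (β:ℝ)) := by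
        rw [hωdef]
        rw [intervalIntegral.integral_sub hi_u ((hbLc.fun_sub continuous_const).intervalIntegrable _ _)]
        rw [intervalIntegral.integral_sub (hbLc.intervalIntegrable _ _) intervalIntegrable_const]
      rw [h1, hU0, hbint, intervalIntegral.integral_const]
      simp only [smul_eq_mul]
      ring
    obtain ⟨x₀, -, hx₀⟩ := stmt14_exists_zero hL hωc hω0
    have hWgen : ∀ P : ℝ, (∀ x, |ρ x| ≤ P) → ∀ x, |ω x| ≤ L * P := by
      intro P hP x
      have hP0 : 0 ≤ P := le_trans (abs_nonneg _) (hP 0)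
      obtain ⟨y, hy, hxy⟩ := stmt14_per_rep hL hωper x₀ x
      rw [hxy]
      have hFTC : (∫ t in x₀..y, ρ t) = ω y - ω x₀ :=
        integral_eq_sub_of_hasDerivAt (fun t _ => hω' t) (hρc.intervalIntegrable _ _)
      have hnorm := intervalIntegral.norm_integral_le_of_norm_le_const
        (a := x₀) (b := y) (C := P) (f := ρ)
        (fun t _ => by rw [Real.norm_eq_abs]; exact hP t)
      rw [hFTC, hx₀, sub_zero, Real.norm_eq_abs] at hnorm
      have hyx : |y - x₀| ≤ L := abs_le.2 ⟨by linarith [hy.1], by linarith [hy.2]⟩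
      calc |ω y| ≤ P * |y - x₀| := hnorm
      _ ≤ P * L := mul_le_mul_of_nonneg_left hyx hP0
      _ = L * P := mul_comm _ _
    have hρgen : ∀ M : ℝ, (∀ x, |u x| ≤ M) → ∀ x, |ρ x| ≤ 2 * CV + Cc * M + M ^ 2 := by
      intro M hM x
      have hM0 : 0 ≤ M := le_trans (abs_nonneg _) (hM 0)
      have h1 : |ρ x| ≤ |K L + (b (x / L) + 2 * lam) * u x|
          + |(r (x / L) + lam * b (x / L) + lam ^ 2) + u x ^ 2| := by
        rw [hρdef]
        exact tri _ _
      have h2 : |K L + (b (x / L) + 2 * lam) * u x| ≤ |K L| + |(b (x / L) + 2 * lam) * u x| :=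
        abs_add_le _ _
      have h3 : |(r (x / L) + lam * b (x / L) + lam ^ 2) + u x ^ 2|
          ≤ |r (x / L) + lam * b (x / L) + lam ^ 2| + |u x ^ 2| := abs_add_le _ _
      have h4 : |(b (x / L) + 2 * lam) * u x| ≤ Cc * M := by
        rw [abs_mul]
        exact mul_le_mul (hccb x) (hM x) (abs_nonneg _) hCc0
      have h5 : |u x ^ 2| ≤ M ^ 2 := by
        rw [abs_pow]
        exact pow_le_pow_left₀ (abs_nonneg _) (hM x) 2
      linarith [hKb, hVb x]
    -- bound on u by F
    have hLP1 : L * (2 * CV + Cc * m + m ^ 2) ≤ E := by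
      have h1 : L * m ≤ Cc + Real.sqrt D := by
        have h2 : L * m ≤ L * (Cc + s) := mul_le_mul_of_nonneg_left hms hL.le
        have e : L * (Cc + s) = L * Cc + L * s := by ring
        have k : L * Cc ≤ 1 * Cc := mul_le_mul_of_nonneg_right hL1 hCc0
        rw [one_mul] at k
        linarith [hLs]
      have h2 : L * m ^ 2 ≤ Cc ^ 2 + 2 * Cc * Real.sqrt D + D := by
        have hLs2 : L * s ^ 2 = D := by rw [hs2]; field_simp
        have hm2' : m ^ 2 ≤ (Cc + s) ^ 2 := pow_le_pow_left₀ hm0 hms 2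
        have h3 : L * m ^ 2 ≤ L * (Cc + s) ^ 2 := mul_le_mul_of_nonneg_left hm2' hL.le
        have e : L * (Cc + s) ^ 2 = L * Cc ^ 2 + 2 * Cc * (L * s) + L * s ^ 2 := by ring
        have k1 : L * Cc ^ 2 ≤ 1 * Cc ^ 2 := mul_le_mul_of_nonneg_right hL1 (sq_nonneg Cc)
        rw [one_mul] at k1
        have k2 : 2 * Cc * (L * s) ≤ 2 * Cc * Real.sqrt D :=
          mul_le_mul_of_nonneg_left hLs (by positivity)
        linarith
      have h3 : L * (2 * CV) ≤ 2 * CV := by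
        calc L * (2 * CV) ≤ 1 * (2 * CV) := mul_le_mul_of_nonneg_right hL1 (by positivity)
        _ = 2 * CV := one_mul _
      rw [hEdef]
      linarith [mul_le_mul_of_nonneg_left h1 hCc0, h2, h3]
    have hmF : ∀ x, |u x| ≤ F := by
      intro x
      have h1 : |ω x| ≤ L * (2 * CV + Cc * m + m ^ 2) := hWgen _ (hρgen m hm) x
      have h2 : |u x| ≤ |ω x| + |b (x / L) - β| := by
        have h3 : u x = ω x + (b (x / L) - β) := by simp only [hωdef]; ring
        rw [h3]
        exact abs_add_le _ _
      have h4 : |b (x / L) - β| ≤ Cb + |β| := le_trans (tri _ _) (by linarith [hCb (x / L)])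
      rw [hFdef]
      linarith [hLP1]
    have hρF : ∀ x, |ρ x| ≤ G := by
      have h := hρgen F hmF
      rw [← hGdef] at h
      exact h
    have hωG : ∀ x, |ω x| ≤ L * G := hWgen G hρF
    -- conclusion
    have hfin : |∫ x in (0:ℝ)..L, u x * ω x| ≤ F * (L * G) * L := by
      have h := intervalIntegral.norm_integral_le_of_norm_le_const (a := (0:ℝ)) (b := L)
        (C := F * (L * G)) (f := fun x => u x * ω x) (fun t _ => by
          rw [Real.norm_eq_abs, abs_mul]
          exact mul_le_mul (hmF t) (hωG t) (abs_nonneg _) hF0)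
      rw [Real.norm_eq_abs] at h
      have h2 : |L - (0:ℝ)| = L := by rw [sub_zero, abs_of_pos hL]
      rw [h2] at h
      exact h
    rw [hKT, abs_mul, abs_of_pos hL] at hfin
    have h2 : L * |K L - T| ≤ L * (F * G * L) := by
      have e : F * (L * G) * L = L * (F * G * L) := by ring
      linarith [hfin]
    exact le_of_mul_le_mul_left h2 hL
  -- conclude the limit
  rw [Metric.tendsto_nhdsWithin_nhds]
  intro ε hε
  refine ⟨min 1 (ε / (F * G + 1)), lt_min one_pos (by positivity), ?_⟩
  intro L hLmem hdist
  have hLpos : 0 < L := hLmem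
  rw [Real.dist_eq, sub_zero, abs_of_pos hLpos] at hdist
  have hL1 : L ≤ 1 := le_of_lt (lt_of_lt_of_le hdist (min_le_left _ _))
  have h2 : L < ε / (F * G + 1) := lt_of_lt_of_le hdist (min_le_right _ _)
  have h3 := key L hLpos hL1
  rw [Real.dist_eq]
  have hFG0 : 0 ≤ F * G := mul_nonneg hF0 hG0
  have hεd : 0 < ε / (F * G + 1) := by positivity
  calc |K L - T| ≤ F * G * L := h3
  _ < (F * G + 1) * (ε / (F * G + 1)) := by
        have k1 : F * G * L ≤ F * G * (ε / (F * G + 1)) :=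
          mul_le_mul_of_nonneg_left h2.le hFG0
        have k2 : F * G * (ε / (F * G + 1)) < (F * G + 1) * (ε / (F * G + 1)) :=
          mul_lt_mul_of_pos_right (by linarith) hεd
        linarith
  _ = ε := by field_simp
end

section
/- Let r, b : ℝ → ℝ be continuous 1-periodic functions, let k ∈ ℝ, and let φ : ℝ → ℝ be twice continuously differentiable, 1-periodic, positive on ℝ, satisfying φ'' + b φ' + r φ = k φ on ℝ. Let x₁ < x₂ be real numbers, let k_d ∈ ℝ, and let ψ : [x₁,x₂] → ℝ be twice continuously differentiable, positive on (x₁,x₂), with ψ(x₁) = ψ(x₂) = 0, satisfying ψ'' + b ψ' + r ψ = k_d ψ on [x₁,x₂]. Then k_d < k. -/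
open Set

private lemma c2facts (f : ℝ → ℝ) (hf : ContDiff ℝ 2 f) :
    Differentiable ℝ f ∧ Differentiable ℝ (deriv f) ∧ Continuous (deriv (deriv f)) := by
  have h1 : ContDiff ℝ (1 + 1) f := by norm_num; exact hf
  have h2 := contDiff_succ_iff_deriv.mp h1
  have h3 : ContDiff ℝ (0 + 1) (deriv f) := by norm_num; exact h2.2.2
  have h4 := contDiff_succ_iff_deriv.mp h3
  exact ⟨h2.1, h4.1, h4.2.2.continuous⟩

/-- the principal Dirichlet eigenvalue `k_d` on any bounded interval
`[x₁,x₂]` of `ψ ↦ ψ'' + bψ' + rψ` is strictly below the principal periodic eigenvalue `k`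
of the same operator. -/
theorem stmt15 (r b : ℝ → ℝ) (k : ℝ)
    (hr : Continuous r) (hrper : Function.Periodic r 1)
    (hb : Continuous b) (hbper : Function.Periodic b 1)
    (φ : ℝ → ℝ) (hφ : ContDiff ℝ 2 φ) (hφper : Function.Periodic φ 1)
    (hφpos : ∀ x, 0 < φ x)
    (heqφ : ∀ x : ℝ,
      deriv (deriv φ) x + b x * deriv φ x + r x * φ x = k * φ x)
    (x₁ x₂ : ℝ) (hx : x₁ < x₂) (kd : ℝ)
    (ψ : ℝ → ℝ) (hψ : ContDiff ℝ 2 ψ)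
    (hψpos : ∀ x ∈ Set.Ioo x₁ x₂, 0 < ψ x)
    (hψbd : ψ x₁ = 0 ∧ ψ x₂ = 0)
    (heqψ : ∀ x ∈ Set.Icc x₁ x₂,
      deriv (deriv ψ) x + b x * deriv ψ x + r x * ψ x = kd * ψ x) :
    kd < k := by
  have hφne : ∀ x, φ x ≠ 0 := fun x => (hφpos x).ne'
  set W : ℝ → ℝ := fun x => ψ x / φ x with hWdef
  have hWc2 : ContDiff ℝ 2 W := hψ.div hφ hφne
  obtain ⟨hφd, hφ'd, hφ''c⟩ := c2facts φ hφ
  obtain ⟨hWd, hW'd, hW''c⟩ := c2facts W hWc2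
  -- ψ = W * φ
  have hψ_eq : ψ = fun x => W x * φ x := by
    funext x; simp only [hWdef]
    rw [div_mul_cancel₀ _ (hφne x)]
  have hdψ : ∀ x, deriv ψ x = deriv W x * φ x + W x * deriv φ x := by
    intro x
    rw [hψ_eq]
    exact deriv_mul (hWd x) (hφd x)
  have hdψfun : deriv ψ = fun x => deriv W x * φ x + W x * deriv φ x := funext hdψ
  have hd2ψ : ∀ x, deriv (deriv ψ) x =
      (deriv (deriv W) x * φ x + deriv W x * deriv φ x)
      + (deriv W x * deriv φ x + W x * deriv (deriv φ) x) := by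
    intro x
    rw [hdψfun]
    rw [deriv_fun_add (f := fun y => deriv W y * φ y) (g := fun y => W y * deriv φ y) ((hW'd x).mul (hφd x)) ((hWd x).mul (hφ'd x)),
      deriv_fun_mul (hW'd x) (hφd x), deriv_fun_mul (hWd x) (hφ'd x)]
  -- key identity
  have key : ∀ x ∈ Icc x₁ x₂,
      deriv (deriv W) x * φ x + deriv W x * (2 * deriv φ x + b x * φ x)
        = (kd - k) * (W x * φ x) := by
    intro x hxm
    have h1 := heqψ x hxm
    have h2 := heqφ x
    have hψx : ψ x = W x * φ x := by rw [hψ_eq]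
    rw [hd2ψ x, hdψ x, hψx] at h1
    linear_combination h1 - W x * h2
  -- max point
  have hcont : ContinuousOn W (Icc x₁ x₂) := hWc2.continuous.continuousOn
  obtain ⟨c, hc, hcmax⟩ :=
    (isCompact_Icc).exists_isMaxOn (nonempty_Icc.mpr hx.le) hcont
  have hWmid : 0 < W ((x₁ + x₂) / 2) :=
    div_pos (hψpos _ ⟨by linarith, by linarith⟩) (hφpos _)
  have hWc_pos : 0 < W c :=
    lt_of_lt_of_le hWmid (hcmax ⟨by linarith, by linarith⟩)
  have hWx₁ : W x₁ = 0 := by simp [hWdef, hψbd.1]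
  have hWx₂ : W x₂ = 0 := by simp [hWdef, hψbd.2]
  have hc1 : x₁ < c :=
    lt_of_le_of_ne hc.1 (fun h => by rw [← h, hWx₁] at hWc_pos; linarith)
  have hc2 : c < x₂ :=
    lt_of_le_of_ne hc.2 (fun h => by rw [h, hWx₂] at hWc_pos; linarith)
  have hnbhd : Icc x₁ x₂ ∈ nhds c := Icc_mem_nhds hc1 hc2
  have hW'c : deriv W c = 0 := (hcmax.isLocalMax hnbhd).deriv_eq_zero
  -- second derivative nonpositive at the max
  have hW''c : deriv (deriv W) c ≤ 0 := by
    by_contra h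
    push_neg at h
    have hev : ∀ᶠ x in nhds c, 0 < deriv (deriv W) x :=
      hW''c.continuousAt.eventually (eventually_gt_nhds h)
    obtain ⟨ε, hε, hball⟩ := Metric.eventually_nhds_iff.mp hev
    set d := min (c + ε / 2) x₂ with hd
    have hcd : c < d := lt_min (by linarith) hc2
    have hsub : Icc c d ⊆ Metric.ball c ε := by
      intro y hy
      have h1 : y ≤ c + ε / 2 := le_trans hy.2 (min_le_left _ _)
      have h2 : c ≤ y := hy.1
      simp only [Metric.mem_ball, Real.dist_eq]
      rw [abs_lt]; constructor <;> linarith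
    have hmono' : StrictMonoOn (deriv W) (Icc c d) := by
      apply strictMonoOn_of_deriv_pos (convex_Icc c d)
        (hW'd.continuous.continuousOn)
      intro y hy
      rw [interior_Icc] at hy
      exact hball (by
        have := hsub (Ioo_subset_Icc_self hy)
        simpa [Real.dist_eq] using this)
    have hmono : StrictMonoOn W (Icc c d) := by
      apply strictMonoOn_of_deriv_pos (convex_Icc c d) (hWd.continuous.continuousOn)
      intro y hy
      rw [interior_Icc] at hy
      have := hmono' (left_mem_Icc.mpr hcd.le) (Ioo_subset_Icc_self hy) hy.1
      rw [hW'c] at this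
      exact this
    have hlt : W c < W d :=
      hmono (left_mem_Icc.mpr hcd.le) (right_mem_Icc.mpr hcd.le) hcd
    have hdm : d ∈ Icc x₁ x₂ := ⟨by linarith [min_le_left (c + ε / 2) x₂, hc.1, hcd.le], min_le_right _ _⟩
    exact absurd (hcmax hdm) (not_le.mpr hlt)
  -- kd ≤ k
  have hle : kd ≤ k := by
    have := key c hc
    rw [hW'c] at this
    nlinarith [hφpos c, mul_pos hWc_pos (hφpos c)]
  -- strictness
  by_contra hcon
  push_neg at hcon
  have hkeq : kd = k := le_antisymm hle hcon
  -- now W'' φ + W' (2φ' + bφ) = 0 on Icc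
  have key0 : ∀ x ∈ Icc x₁ x₂,
      deriv (deriv W) x = -((2 * deriv φ x + b x * φ x) / φ x) * deriv W x := by
    intro x hxm
    have h := key x hxm
    rw [hkeq, sub_self, zero_mul] at h
    have hfx := hφne x
    field_simp
    linear_combination h
  set B : ℝ → ℝ := fun x => (2 * deriv φ x + b x * φ x) / φ x with hB
  have hBcont : Continuous B := by
    apply Continuous.div
    · exact (continuous_const.mul hφ'd.continuous).add (hb.mul hφd.continuous)
    · exact hφd.continuous
    · exact hφne
  obtain ⟨K, hK⟩ := (isCompact_Icc (a := x₁) (b := x₂)).exists_bound_of_continuousOn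
    hBcont.continuousOn
  -- Gronwall on [c, x₂]: deriv W vanishes there
  have hgron : ∀ x ∈ Icc c x₂, ‖deriv W x‖ ≤ gronwallBound 0 K 0 (x - c) := by
    apply norm_le_gronwallBound_of_norm_deriv_right_le
      (hW'd.continuous.continuousOn)
      (fun x _ => (hW'd x).hasDerivAt.hasDerivWithinAt)
    · simp [hW'c]
    · intro x hxm
      have hxIcc : x ∈ Icc x₁ x₂ := ⟨le_trans hc.1 hxm.1, hxm.2.le⟩
      rw [key0 x hxIcc]
      rw [norm_mul, norm_neg]
      have h1 : ‖B x‖ ≤ K := hK x hxIcc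
      have h2 : (0:ℝ) ≤ ‖deriv W x‖ := norm_nonneg _
      nlinarith
  have hW'0 : ∀ x ∈ Icc c x₂, deriv W x = 0 := by
    intro x hxm
    have := hgron x hxm
    rw [gronwallBound_ε0] at this
    simp at this
    exact norm_le_zero_iff.mp (by simpa using this)
  have hconst := constant_of_has_deriv_right_zero
    (f := W) (a := c) (b := x₂) (hWd.continuous.continuousOn)
    (fun x hxm => by
      have := hW'0 x (Ico_subset_Icc_self hxm)
      have hda := (hWd x).hasDerivAt
      rw [this] at hda
      exact hda.hasDerivWithinAt)
  have : W x₂ = W c := hconst x₂ (right_mem_Icc.mpr hc2.le)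
  rw [hWx₂] at this
  linarith
end

section
/- Let M > 0 and set R := M + 16π². For A ∈ ℝ, let r̃^A : ℝ → ℝ be the 1-periodic function defined on [0,1) by: r̃^A(x) = R for 0 ≤ x ≤ 1/4; r̃^A(x) = R + 4(A−R)(x − 1/4) for 1/4 < x < 1/2; r̃^A(x) = A for 1/2 ≤ x ≤ 3/4; r̃^A(x) = R + 4(A−R)(1 − x) for 3/4 < x < 1. Let λ, k ∈ ℝ and let ψ : ℝ → ℝ be twice continuously differentiable, 1-periodic, positive on ℝ, satisfying ψ'' + 2λψ' + (r̃^A + λ²)ψ = k ψ on ℝ. Then k > M. -/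
open Real


/-- with `R = M + 16π²` and `r̃^A` the `1`-periodic piecewise-linear function
equal to `R` on `[0,1/4]`, to `A` on `[1/2,3/4]`, and affine in between, any principal
periodic eigenvalue `k` of `ψ ↦ ψ'' + 2λψ' + (r̃^A + λ²)ψ`, associated with a positive
`1`-periodic eigenfunction, satisfies `k > M`. -/
theorem stmt16 (M A lam k : ℝ) (hM : 0 < M)
    (R : ℝ) (hR : R = M + 16 * Real.pi ^ 2)
    (rt : ℝ → ℝ) (hrtper : Function.Periodic rt 1)
    (hrt1 : ∀ x : ℝ, 0 ≤ x → x ≤ 1/4 → rt x = R)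
    (hrt2 : ∀ x : ℝ, 1/4 < x → x < 1/2 → rt x = R + 4 * (A - R) * (x - 1/4))
    (hrt3 : ∀ x : ℝ, 1/2 ≤ x → x ≤ 3/4 → rt x = A)
    (hrt4 : ∀ x : ℝ, 3/4 < x → x < 1 → rt x = R + 4 * (A - R) * (1 - x))
    (ψ : ℝ → ℝ) (hψ : ContDiff ℝ 2 ψ) (hψper : Function.Periodic ψ 1)
    (hψpos : ∀ x, 0 < ψ x)
    (heq : ∀ x : ℝ,
      deriv (deriv ψ) x + 2 * lam * deriv ψ x + (rt x + lam ^ 2) * ψ x = k * ψ x) :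
    M < k := by
  by_contra hk
  push_neg at hk
  have hψd : Differentiable ℝ ψ := hψ.differentiable (by norm_num)
  have hψ2 : ContDiff ℝ (1+1) ψ := by
    convert hψ using 2 <;> norm_num
  have hψ'c : ContDiff ℝ 1 (deriv ψ) := (contDiff_succ_iff_deriv.mp hψ2).2.2
  have hψ'd : Differentiable ℝ (deriv ψ) := hψ'c.differentiable one_ne_zero
  set W : ℝ → ℝ := fun x => Real.exp (lam*x) *
    ((deriv ψ x + lam * ψ x) * Real.sin (4*π*x) - ψ x * (4*π*Real.cos (4*π*x))) with hWdef
  have hWd : ∀ x, HasDerivAt W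
      (Real.exp (lam*x) * (ψ x * Real.sin (4*π*x) * (k - rt x + 16*π^2))) x := by
    intro x
    have h1 : HasDerivAt (fun y => Real.exp (lam*y)) (Real.exp (lam*x) * lam) x := by
      simpa [Function.comp_def] using (Real.hasDerivAt_exp (lam*x)).comp x ((hasDerivAt_id x).const_mul lam)
    have hs : HasDerivAt (fun y => Real.sin (4*π*y)) (Real.cos (4*π*x) * (4*π)) x := by
      simpa [Function.comp_def] using (Real.hasDerivAt_sin (4*π*x)).comp x ((hasDerivAt_id x).const_mul (4*π))
    have hc : HasDerivAt (fun y => Real.cos (4*π*y)) (-Real.sin (4*π*x) * (4*π)) x := by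
      simpa [Function.comp_def] using (Real.hasDerivAt_cos (4*π*x)).comp x ((hasDerivAt_id x).const_mul (4*π))
    have hp : HasDerivAt ψ (deriv ψ x) x := (hψd x).hasDerivAt
    have hp' : HasDerivAt (deriv ψ) (deriv (deriv ψ) x) x := (hψ'd x).hasDerivAt
    have hin : HasDerivAt (fun y => (deriv ψ y + lam * ψ y) * Real.sin (4*π*y) - ψ y * (4*π*Real.cos (4*π*y)))
        ((deriv (deriv ψ) x + lam * deriv ψ x) * Real.sin (4*π*x)
          + (deriv ψ x + lam * ψ x) * (Real.cos (4*π*x) * (4*π))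
          - (deriv ψ x * (4*π*Real.cos (4*π*x)) + ψ x * (4*π*(-Real.sin (4*π*x) * (4*π))))) x :=
      ((hp'.add (hp.const_mul lam)).mul hs).sub (hp.mul (hc.const_mul (4*π)))
    have := h1.mul hin
    refine HasDerivAt.congr_deriv this ?_
    have hkey := heq x
    have hψ'' : deriv (deriv ψ) x = k * ψ x - 2 * lam * deriv ψ x - (rt x + lam ^ 2) * ψ x := by
      linarith
    rw [hψ'']
    ring
  have hWc : Continuous W := by
    have : Differentiable ℝ W := fun x => (hWd x).differentiableAt
    exact this.continuous
  have hant : AntitoneOn W (Set.Icc 0 (1/4)) := by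
    apply antitoneOn_of_deriv_nonpos (convex_Icc _ _) hWc.continuousOn
    · intro x hx
      exact (hWd x).differentiableAt.differentiableWithinAt
    · intro x hx
      rw [interior_Icc] at hx
      rw [(hWd x).deriv]
      have hxr : rt x = R := hrt1 x hx.1.le hx.2.le
      have hsin : 0 < Real.sin (4*π*x) := by
        apply Real.sin_pos_of_pos_of_lt_pi
        · nlinarith [mul_pos Real.pi_pos hx.1]
        · nlinarith [Real.pi_pos, hx.2]
      have hkM : k - rt x + 16*π^2 ≤ 0 := by rw [hxr, hR]; linarith
      have := hψpos x
      have he := Real.exp_pos (lam*x)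
      nlinarith [mul_pos (mul_pos he this) hsin]
  have h0 : W 0 = -(ψ 0 * (4*π)) := by
    simp [hWdef]
  have h14 : W (1/4) = Real.exp (lam*(1/4)) * (4*π*ψ (1/4)) := by
    have h4 : (4:ℝ)*π*(1/4) = π := by ring
    rw [hWdef]
    simp only [h4, Real.sin_pi, Real.cos_pi]
    ring
  have hle : W (1/4) ≤ W 0 := hant (by constructor <;> norm_num) (by constructor <;> norm_num) (by norm_num)
  rw [h0, h14] at hle
  have hp0 := hψpos 0
  have hp14 := hψpos (1/4)
  have he := Real.exp_pos (lam*(1/4))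
  nlinarith [Real.pi_pos, mul_pos he (mul_pos (mul_pos (by norm_num : (0:ℝ) < 4) Real.pi_pos) hp14)]
end

section
/- Let M > 0 and set R := M + 16π². For A ∈ ℝ, let r̃^A : ℝ → ℝ be the 1-periodic function defined on [0,1) by: r̃^A(x) = R for 0 ≤ x ≤ 1/4; r̃^A(x) = R + 4(A−R)(x − 1/4) for 1/4 < x < 1/2; r̃^A(x) = A for 1/2 ≤ x ≤ 3/4; r̃^A(x) = R + 4(A−R)(1 − x) for 3/4 < x < 1. Let λ ∈ ℝ, and suppose that for every A ≤ 0 there are a real number K(A) and a twice continuously differentiable function φ_A : ℝ → ℝ that is 1-periodic, positive on ℝ, normalized by ∫₀¹ φ_A(x)² dx = 1, and satisfies φ_A'' + 2λφ_A' + (r̃^A + λ²)φ_A = K(A) φ_A on ℝ. Then K(A) converges to R − 16π² = M as A → −∞. -/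
set_option maxHeartbeats 1000000

open Set Filter Real


/-- reduction to fundamental domain -/
lemma periodic_rep (x : ℝ) : ∃ y, y ∈ Set.Ico (0:ℝ) 1 ∧
    ∀ g : ℝ → ℝ, Function.Periodic g 1 → g y = g x := by
  refine ⟨Int.fract x, ⟨Int.fract_nonneg x, Int.fract_lt_one x⟩, fun g hg => ?_⟩
  have h1 : g (x - (⌊x⌋ : ℤ) * 1) = g x := hg.sub_int_mul_eq (x := x) ⌊x⌋
  rw [← h1, ← Int.self_sub_floor]
  norm_num

/-- second derivative test at a global max -/
lemma second_deriv_test {f f1 : ℝ → ℝ} {x₀ c : ℝ}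
    (hd : ∀ x, HasDerivAt f (f1 x) x) (hd2 : HasDerivAt f1 c x₀)
    (hmax : ∀ y, f y ≤ f x₀) : c ≤ 0 := by
  by_contra hc
  push_neg at hc
  have h0 : f1 x₀ = 0 := by
    have hloc : IsLocalMax f x₀ := by
      apply IsMaxOn.isLocalMax (s := Set.univ)
      · intro y _; exact hmax y
      · exact Filter.univ_mem
    have := hloc.deriv_eq_zero
    rwa [(hd x₀).deriv] at this
  rw [hasDerivAt_iff_tendsto_slope] at hd2
  have hev : ∀ᶠ y in nhdsWithin x₀ {x₀}ᶜ, 0 < slope f1 x₀ y :=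
    hd2.eventually (eventually_gt_nhds hc)
  have hev2 : ∀ᶠ y in nhdsWithin x₀ (Set.Ioi x₀), 0 < f1 y := by
    have hmono : nhdsWithin x₀ (Set.Ioi x₀) ≤ nhdsWithin x₀ {x₀}ᶜ :=
      nhdsWithin_mono _ (fun y hy => ne_of_gt hy)
    filter_upwards [hev.filter_mono hmono, self_mem_nhdsWithin] with y hy hy'
    have hyx : (0:ℝ) < y - x₀ := sub_pos.mpr hy'
    rw [slope_def_field, h0, sub_zero] at hy
    have := mul_pos hy hyx
    rwa [div_mul_cancel₀ _ hyx.ne'] at this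
  rw [eventually_nhdsWithin_iff] at hev2
  rw [Metric.eventually_nhds_iff] at hev2
  obtain ⟨δ, hδ, hball⟩ := hev2
  set b := x₀ + δ/2 with hb
  have hx₀b : x₀ < b := by simp [hb]; linarith
  have hmono : StrictMonoOn f (Set.Icc x₀ b) := by
    apply strictMonoOn_of_deriv_pos (convex_Icc _ _)
    · exact fun y _ => ((hd y).differentiableAt.continuousAt).continuousWithinAt
    · intro y hy
      rw [interior_Icc] at hy
      rw [(hd y).deriv]
      apply hball
      · rw [Real.dist_eq, abs_of_pos (sub_pos.mpr hy.1)]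
        have := hy.2; simp [hb] at this ⊢; linarith
      · exact hy.1
  have := hmono (Set.left_mem_Icc.mpr hx₀b.le) (Set.right_mem_Icc.mpr hx₀b.le) hx₀b
  exact absurd (hmax b) (not_le.mpr this)


lemma u_derivs (lam KA : ℝ) (r P : ℝ → ℝ) (hP : ContDiff ℝ 2 P)
    (heq : ∀ x, deriv (deriv P) x + 2*lam*deriv P x + (r x + lam^2)*P x = KA * P x) :
    (∀ x, HasDerivAt (fun y => Real.exp (lam*y) * P y)
        (Real.exp (lam*x) * (lam * P x + deriv P x)) x) ∧
    (∀ x, HasDerivAt (fun y => Real.exp (lam*y) * (lam * P y + deriv P y))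
        ((KA - r x) * (Real.exp (lam*x) * P x)) x) := by
  have hP1 : Differentiable ℝ P := hP.differentiable (by norm_num)
  have h2 : ContDiff ℝ 1 (deriv P) := by
    have := (contDiff_succ_iff_deriv (n := 1)).mp (by norm_num [show ((2:ℕ):WithTop ℕ∞) = 1 + 1 by rfl] at hP ⊢; exact hP)
    exact this.2.2
  have hP2 : Differentiable ℝ (deriv P) := h2.differentiable (by norm_num)
  have hexp : ∀ x : ℝ, HasDerivAt (fun y => Real.exp (lam*y)) (Real.exp (lam*x) * lam) x := by
    intro x
    have hl : HasDerivAt (fun y : ℝ => lam*y) lam x := by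
      simpa using (hasDerivAt_id x).const_mul lam
    exact hl.exp
  constructor
  · intro x
    have := (hexp x).mul (hP1 x).hasDerivAt
    refine this.congr_deriv ?_
    ring
  · intro x
    have hin : HasDerivAt (fun y => lam * P y + deriv P y)
        (lam * deriv P x + deriv (deriv P) x) x :=
      (((hP1 x).hasDerivAt.const_mul lam)).add (hP2 x).hasDerivAt
    have := (hexp x).mul hin
    refine this.congr_deriv ?_
    linear_combination (Real.exp (lam*x)) * heq x

lemma lower_bound (M lam R KA : ℝ) (hR : R = M + 16*Real.pi^2) (r P : ℝ → ℝ)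
    (hr1 : ∀ x, 0 ≤ x → x ≤ 1/4 → r x = R)
    (hP : ContDiff ℝ 2 P) (hpos : ∀ x, 0 < P x)
    (heq : ∀ x, deriv (deriv P) x + 2*lam*deriv P x + (r x + lam^2)*P x = KA * P x) :
    M < KA := by
  obtain ⟨hu1, hu2⟩ := u_derivs lam KA r P hP heq
  set u : ℝ → ℝ := fun y => Real.exp (lam*y) * P y with hu
  set u1 : ℝ → ℝ := fun y => Real.exp (lam*y) * (lam * P y + deriv P y) with hu1d
  have hupos : ∀ x, 0 < u x := fun x => mul_pos (Real.exp_pos _) (hpos x)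
  set w : ℝ → ℝ := fun x => Real.sin (4*Real.pi*x) with hw
  set w1 : ℝ → ℝ := fun x => 4*Real.pi*Real.cos (4*Real.pi*x) with hw1
  have hwd : ∀ x, HasDerivAt w (w1 x) x := by
    intro x
    have := ((hasDerivAt_id x).const_mul (4*Real.pi)).sin
    refine this.congr_deriv ?_
    simp [hw1]; ring
  have hw1d : ∀ x, HasDerivAt w1 (-(16*Real.pi^2) * w x) x := by
    intro x
    have := (((hasDerivAt_id x).const_mul (4*Real.pi)).cos).const_mul (4*Real.pi)
    refine this.congr_deriv ?_
    simp [hw]; ring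
  set F : ℝ → ℝ := fun x => u1 x * w x - u x * w1 x with hF
  have hFd : ∀ x ∈ Set.uIcc (0:ℝ) (1/4), HasDerivAt F ((KA - M) * (u x * w x)) x := by
    intro x hx
    rw [Set.uIcc_of_le (by norm_num : (0:ℝ) ≤ 1/4)] at hx
    have hrx : r x = R := hr1 x hx.1 hx.2
    have := ((hu2 x).mul (hwd x)).sub ((hu1 x).mul (hw1d x))
    refine this.congr_deriv ?_
    rw [hrx, hR]
    ring
  have hcont : Continuous (fun x => (KA - M) * (u x * w x)) := by
    apply Continuous.mul continuous_const
    exact ((Real.continuous_exp.comp (continuous_const.mul continuous_id)).mul hP.continuous).mul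
      (Real.continuous_sin.comp (continuous_const.mul continuous_id))
  have hftc := intervalIntegral.integral_eq_sub_of_hasDerivAt hFd
    (hcont.intervalIntegrable _ _)
  have hIpos : 0 < ∫ x in (0:ℝ)..(1/4), u x * w x := by
    apply intervalIntegral.intervalIntegral_pos_of_pos_on
    · exact (((Real.continuous_exp.comp (continuous_const.mul continuous_id)).mul hP.continuous).mul
        (Real.continuous_sin.comp (continuous_const.mul continuous_id))).intervalIntegrable _ _
    · intro x hx
      apply mul_pos (hupos x)
      apply Real.sin_pos_of_pos_of_lt_pi
      · have := Real.pi_pos; nlinarith [hx.1]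
      · have := Real.pi_pos; nlinarith [hx.2]
    · norm_num
  have hval : (KA - M) * ∫ x in (0:ℝ)..(1/4), u x * w x = 4*Real.pi*(u (1/4) + u 0) := by
    rw [← intervalIntegral.integral_const_mul, hftc]
    have e1 : w (1/4) = 0 := by
      show Real.sin (4*Real.pi*(1/4)) = 0
      rw [show 4*Real.pi*(1/4) = Real.pi by ring, Real.sin_pi]
    have e2 : w1 (1/4) = -(4*Real.pi) := by
      show 4*Real.pi*Real.cos (4*Real.pi*(1/4)) = -(4*Real.pi)
      rw [show 4*Real.pi*(1/4) = Real.pi by ring, Real.cos_pi]; ring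
    have e3 : w 0 = 0 := by show Real.sin (4*Real.pi*0) = 0; norm_num
    have e4 : w1 0 = 4*Real.pi := by show 4*Real.pi*Real.cos (4*Real.pi*0) = 4*Real.pi; norm_num
    simp only [hF, e1, e2, e3, e4]
    ring
  have hBpos : 0 < 4*Real.pi*(u (1/4) + u 0) := by
    have := Real.pi_pos
    have := hupos (1/4); have := hupos 0
    positivity
  nlinarith

lemma comparison (lam KA kap : ℝ) (r P v v1 v2 : ℝ → ℝ)
    (hP : ContDiff ℝ 2 P) (hPper : Function.Periodic P 1) (hpos : ∀ x, 0 < P x)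
    (heq : ∀ x, deriv (deriv P) x + 2*lam*deriv P x + (r x + lam^2)*P x = KA * P x)
    (hv : ∀ x, 0 < v x) (hv1 : ∀ x, HasDerivAt v (v1 x) x)
    (hv2 : ∀ x, HasDerivAt v1 (v2 x) x)
    (hmult : ∀ x, v (x+1) = Real.exp lam * v x)
    (hsuper : ∀ x, v2 x ≤ (kap - r x) * v x) : KA ≤ kap := by
  obtain ⟨hu1, hu2⟩ := u_derivs lam KA r P hP heq
  set u : ℝ → ℝ := fun y => Real.exp (lam*y) * P y with hu
  have hupos : ∀ x, 0 < u x := fun x => mul_pos (Real.exp_pos _) (hpos x)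
  have humult : ∀ x, u (x+1) = Real.exp lam * u x := by
    intro x
    show Real.exp (lam*(x+1)) * P (x+1) = Real.exp lam * (Real.exp (lam*x) * P x)
    rw [hPper x, show lam*(x+1) = lam*x + lam by ring, Real.exp_add]
    ring
  set θ : ℝ → ℝ := fun x => u x / v x with hθ
  have hθper : Function.Periodic θ 1 := by
    intro x
    show u (x+1) / v (x+1) = u x / v x
    rw [humult x, hmult x, mul_div_mul_left _ _ (Real.exp_pos lam).ne']
  have hvcont : Continuous v := by
    have : Differentiable ℝ v := fun x => (hv1 x).differentiableAt
    exact this.continuous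
  have hucont : Continuous u :=
    (Real.continuous_exp.comp (continuous_const.mul continuous_id)).mul hP.continuous
  have hθcont : Continuous θ := hucont.div hvcont (fun x => (hv x).ne')
  obtain ⟨x₀, hx₀mem, hx₀max⟩ := isCompact_Icc.exists_isMaxOn
    (⟨0, by norm_num⟩ : (Set.Icc (0:ℝ) 1).Nonempty) hθcont.continuousOn
  have hglobal : ∀ y, θ y ≤ θ x₀ := by
    intro y
    obtain ⟨z, hz, hrep⟩ := periodic_rep y
    have : θ z = θ y := hrep θ hθper
    rw [← this]
    exact hx₀max (Set.mem_Icc.mpr ⟨hz.1, hz.2.le⟩)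
  set θ₀ := θ x₀ with hθ₀
  have hθ₀pos : 0 < θ₀ := div_pos (hupos x₀) (hv x₀)
  have huv : ∀ y, u y = θ y * v y := fun y => (div_mul_cancel₀ _ (hv y).ne').symm
  set f : ℝ → ℝ := fun x => u x - θ₀ * v x with hf
  have hfmax : ∀ y, f y ≤ f x₀ := by
    intro y
    have h1 : f y = (θ y - θ₀) * v y := by rw [hf]; simp only; rw [huv y]; ring
    have h2 : f x₀ = (θ x₀ - θ₀) * v x₀ := by rw [hf]; simp only; rw [huv x₀]; ring
    rw [h1, h2, hθ₀, sub_self, zero_mul]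
    exact mul_nonpos_of_nonpos_of_nonneg (sub_nonpos.mpr (hglobal y)) (hv y).le
  have hfd : ∀ x, HasDerivAt f
      (Real.exp (lam*x) * (lam * P x + deriv P x) - θ₀ * v1 x) x :=
    fun x => (hu1 x).sub ((hv1 x).const_mul θ₀)
  have hfd2 : HasDerivAt (fun x => Real.exp (lam*x) * (lam * P x + deriv P x) - θ₀ * v1 x)
      ((KA - r x₀) * u x₀ - θ₀ * v2 x₀) x₀ :=
    (hu2 x₀).sub ((hv2 x₀).const_mul θ₀)
  have hkey := second_deriv_test hfd hfd2 hfmax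
  have h1 : θ₀ * v2 x₀ ≤ (kap - r x₀) * u x₀ := by
    have := mul_le_mul_of_nonneg_left (hsuper x₀) hθ₀pos.le
    calc θ₀ * v2 x₀ ≤ θ₀ * ((kap - r x₀) * v x₀) := this
    _ = (kap - r x₀) * (θ₀ * v x₀) := by ring
    _ = (kap - r x₀) * u x₀ := by rw [huv x₀]
  have := hupos x₀
  nlinarith


lemma q_exists (lam ε : ℝ) (hε : 0 < ε) :
    ∃ q : ℝ → ℝ, ∃ η Cv : ℝ, 0 < η ∧ η ≤ 1/100 ∧
      ContDiff ℝ 1 q ∧ Function.Periodic q 1 ∧ (∫ x in (0:ℝ)..1, q x) = lam ∧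
      ∀ x ∈ Set.Ico (0:ℝ) 1,
        (deriv q x + q x^2 ≤ ε - 16*Real.pi^2) ∨
        (x ∈ Set.Icc (1/4+η) (1-η) ∧ deriv q x + q x^2 ≤ Cv) := by
  have hπ := Real.pi_pos
  -- constants
  obtain ⟨ε', hε'def⟩ : ∃ e : ℝ, e = min ε (8*Real.pi^2) := ⟨_, rfl⟩
  have hε'pos : 0 < ε' := hε'def ▸ lt_min hε (by positivity)
  have hε'ε : ε' ≤ ε := hε'def ▸ min_le_left _ _
  have hε'8 : ε' ≤ 8*Real.pi^2 := hε'def ▸ min_le_right _ _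
  obtain ⟨β, hβdef⟩ : ∃ b : ℝ, b = Real.sqrt (16*Real.pi^2 - ε') := ⟨_, rfl⟩
  have hβsq : β^2 = 16*Real.pi^2 - ε' := by rw [hβdef]; exact Real.sq_sqrt (by nlinarith)
  have hβpos : 0 < β := by rw [hβdef]; exact Real.sqrt_pos.mpr (by nlinarith)
  have hβlt : β < 4*Real.pi := by nlinarith
  obtain ⟨δ, hδdef⟩ : ∃ d : ℝ, d = Real.pi/(2*β) - 1/8 := ⟨_, rfl⟩
  have hδpos : 0 < δ := by
    have h1 : (1:ℝ)/8 < Real.pi/(2*β) := by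
      rw [lt_div_iff₀ (by positivity)]
      nlinarith
    rw [hδdef]; linarith
  obtain ⟨η, hηdef⟩ : ∃ e : ℝ, e = min (δ/4) (1/100) := ⟨_, rfl⟩
  have hηpos : 0 < η := hηdef ▸ lt_min (by linarith) (by norm_num)
  have hη100 : η ≤ 1/100 := hηdef ▸ min_le_right _ _
  have hη3δ : 3*η < δ := by
    have h1 : η ≤ δ/4 := hηdef ▸ min_le_left _ _
    linarith
  have hkey : β * (1/8 + 3*η) < Real.pi/2 := by
    have h1 : (1:ℝ)/8 + 3*η < Real.pi/(2*β) := by rw [hδdef] at hη3δ; linarith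
    calc β * (1/8+3*η) < β * (Real.pi/(2*β)) := mul_lt_mul_of_pos_left h1 hβpos
      _ = Real.pi/2 := by field_simp
  obtain ⟨t₁, ht₁def⟩ : ∃ t : ℝ, t = Real.cos (2*Real.pi*(1/8+η)) := ⟨_, rfl⟩
  obtain ⟨t₀, ht₀def⟩ : ∃ t : ℝ, t = Real.cos (2*Real.pi*(1/8+2*η)) := ⟨_, rfl⟩
  obtain ⟨t₀', ht₀'def⟩ : ∃ t : ℝ, t = Real.cos (2*Real.pi*(1/8+3*η)) := ⟨_, rfl⟩
  have hangle3 : 2*Real.pi*(1/8+3*η) ≤ Real.pi := by nlinarith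
  have ht01 : t₀ < t₁ := by
    rw [ht₀def, ht₁def]
    apply Real.cos_lt_cos_of_nonneg_of_le_pi (by positivity) (by nlinarith) (by nlinarith)
  have ht00' : t₀' < t₀ := by
    rw [ht₀def, ht₀'def]
    apply Real.cos_lt_cos_of_nonneg_of_le_pi (by positivity) hangle3 (by nlinarith)
  have ht₀pos : 0 < t₀ := by
    rw [ht₀def]
    apply Real.cos_pos_of_mem_Ioo
    constructor
    · nlinarith
    · nlinarith
  -- s and c
  obtain ⟨s, hsdef⟩ : ∃ f : ℝ → ℝ, f = fun x => Int.fract (x + 3/8) - 1/2 := ⟨_, rfl⟩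
  have hseval : ∀ x, s x = Int.fract (x + 3/8) - 1/2 := fun x => by rw [hsdef]
  have hsmem : ∀ x, -(1/2) ≤ s x ∧ s x < 1/2 := by
    intro x
    rw [hseval]
    exact ⟨by linarith [Int.fract_nonneg (x + 3/8)], by linarith [Int.fract_lt_one (x + 3/8)]⟩
  have hsper : Function.Periodic s 1 := by
    intro x
    rw [hseval, hseval, show x + 1 + 3/8 = (x + 3/8) + 1 by ring, Int.fract_add_one]
  obtain ⟨c, hcdef⟩ : ∃ f : ℝ → ℝ, f = fun x => Real.cos (2*Real.pi*(x-1/8)) := ⟨_, rfl⟩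
  have hceval : ∀ x, c x = Real.cos (2*Real.pi*(x-1/8)) := fun x => by rw [hcdef]
  have hcC : ContDiff ℝ 1 c := by
    rw [hcdef]
    exact Real.contDiff_cos.comp (contDiff_const.mul (contDiff_id.sub contDiff_const))
  have hccont : Continuous c := hcC.continuous
  have hcper : Function.Periodic c 1 := by
    intro x
    rw [hceval, hceval, show 2*Real.pi*(x+1-1/8) = 2*Real.pi*(x-1/8) + 2*Real.pi by ring,
      Real.cos_add_two_pi]
  have hsfloor : ∀ x : ℝ, s x = x - 1/8 - (⌊x + 3/8⌋:ℝ) := by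
    intro x
    rw [hseval, ← Int.self_sub_floor]
    ring
  have hcos : ∀ x, Real.cos (2*Real.pi*(s x)) = c x := by
    intro x
    rw [hsfloor, hceval,
      show 2*Real.pi*(x - 1/8 - (⌊x + 3/8⌋:ℝ)) = 2*Real.pi*(x-1/8) + (-⌊x + 3/8⌋:ℤ) * (2*Real.pi)
        by push_cast; ring]
    exact Real.cos_add_int_mul_two_pi _ _
  -- local affine structure of s where c is not too small
  have haff : ∀ x : ℝ, t₀' < c x → ∃ n : ℤ,
      (∀ᶠ y in nhds x, s y = y - 1/8 - n) ∧ |s x| < 1/8 + 3*η ∧ s x = x - 1/8 - n := by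
    intro x hx
    have habs : |s x| < 1/8 + 3*η := by
      by_contra hab
      push_neg at hab
      have h1 : 2*Real.pi*(1/8+3*η) ≤ 2*Real.pi*|s x| :=
        mul_le_mul_of_nonneg_left hab (by positivity)
      have habs2 : |s x| ≤ 1/2 := abs_le.mpr ⟨(hsmem x).1, (hsmem x).2.le⟩
      have h2 : 2*Real.pi*|s x| ≤ Real.pi := by
        have := mul_le_mul_of_nonneg_left habs2 (le_of_lt (by positivity : (0:ℝ) < 2*Real.pi))
        linarith
      have h3 : Real.cos (2*Real.pi*|s x|) ≤ t₀' := by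
        rw [ht₀'def]
        exact Real.cos_le_cos_of_nonneg_of_le_pi (by positivity) h2 h1
      have h4 : Real.cos (2*Real.pi*|s x|) = c x := by
        rw [show 2*Real.pi*|s x| = |2*Real.pi*(s x)| by
          rw [abs_mul, abs_of_pos (by positivity : (0:ℝ) < 2*Real.pi)],
          Real.cos_abs, hcos]
      rw [h4] at h3
      linarith
    refine ⟨⌊x + 3/8⌋, ?_, habs, hsfloor x⟩
    have hlt : |s x| < 1/2 := lt_of_lt_of_le habs (by linarith)
    obtain ⟨hl, hr⟩ := abs_lt.mp hlt
    rw [hsfloor x] at hl hr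
    have hU : Set.Ioo ((⌊x + 3/8⌋:ℝ) - 3/8) ((⌊x + 3/8⌋:ℝ) + 1 - 3/8) ∈ nhds x :=
      isOpen_Ioo.mem_nhds ⟨by linarith, by linarith⟩
    filter_upwards [hU] with y hy
    have hfl : ⌊y + 3/8⌋ = ⌊x + 3/8⌋ := by
      rw [Int.floor_eq_iff]
      exact ⟨by linarith [hy.1], by push_cast; linarith [hy.2]⟩
    rw [hsfloor y, hfl]
  -- φ cutoff
  obtain ⟨φf, hφdef⟩ : ∃ f : ℝ → ℝ,
      f = fun x => Real.smoothTransition ((c x - t₀)/(t₁ - t₀)) := ⟨_, rfl⟩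
  have hφeval : ∀ x, φf x = Real.smoothTransition ((c x - t₀)/(t₁ - t₀)) := fun x => by rw [hφdef]
  have hφC : ContDiff ℝ 1 φf := by
    rw [hφdef]
    exact Real.smoothTransition.contDiff.comp ((hcC.sub contDiff_const).div_const _)
  have hφper : Function.Periodic φf 1 := by
    intro x; rw [hφeval, hφeval, hcper]
  have hφ1 : ∀ y, t₁ ≤ c y → φf y = 1 := by
    intro y hy
    rw [hφeval]
    apply Real.smoothTransition.one_of_one_le
    rw [le_div_iff₀ (by linarith : (0:ℝ) < t₁ - t₀)]
    linarith
  have hφ0 : ∀ y, c y ≤ t₀ → φf y = 0 := by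
    intro y hy
    rw [hφeval]
    apply Real.smoothTransition.zero_of_nonpos
    exact div_nonpos_of_nonpos_of_nonneg (by linarith) (by linarith)
  have hφ01 : ∀ y, 0 ≤ φf y ∧ φf y ≤ 1 := fun y => by
    rw [hφeval]
    exact ⟨Real.smoothTransition.nonneg _, Real.smoothTransition.le_one _⟩
  -- p
  obtain ⟨p, hpdef⟩ : ∃ f : ℝ → ℝ, f = fun x => φf x * (-β * Real.tan (β * s x)) := ⟨_, rfl⟩
  have hpeval : ∀ x, p x = φf x * (-β * Real.tan (β * s x)) := fun x => by rw [hpdef]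
  have hpper : Function.Periodic p 1 := by
    intro x; rw [hpeval, hpeval, hφper x, hsper x]
  have hloc : ∀ x : ℝ, t₀' < c x → ∃ n : ℤ, (∀ᶠ y in nhds x, s y = y - 1/8 - (n:ℝ)) ∧
      s x = x - 1/8 - (n:ℝ) ∧ 0 < Real.cos (β * s x) := by
    intro x hx
    obtain ⟨n, hev, habs, hsx⟩ := haff x hx
    refine ⟨n, hev, hsx, ?_⟩
    apply Real.cos_pos_of_mem_Ioo
    have h1 : |β * s x| < Real.pi/2 := by
      rw [abs_mul, abs_of_pos hβpos]
      calc β * |s x| < β * (1/8+3*η) := mul_lt_mul_of_pos_left habs hβpos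
        _ < Real.pi/2 := hkey
    obtain ⟨ha, hb⟩ := abs_lt.mp h1
    exact ⟨ha, hb⟩
  have hpC : ContDiff ℝ 1 p := by
    rw [contDiff_iff_contDiffAt]
    intro x
    by_cases hx : t₀' < c x
    · obtain ⟨n, hev, hsx, hcospos⟩ := hloc x hx
      have haffC : ContDiffAt ℝ 1 (fun y : ℝ => β * (y - 1/8 - (n:ℝ))) x :=
        (contDiff_const.mul ((contDiff_id.sub contDiff_const).sub contDiff_const)).contDiffAt
      have hco' : Real.cos (β * (x - 1/8 - (n:ℝ))) ≠ 0 := by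
        rw [show (x - 1/8 - (n:ℝ)) = s x from hsx.symm]
        exact hcospos.ne'
      have htanC : ContDiffAt ℝ 1 Real.tan (β * (x - 1/8 - (n:ℝ))) :=
        Real.contDiffAt_tan.mpr hco'
      have hcomp : ContDiffAt ℝ 1 (fun y => Real.tan (β * (y - 1/8 - (n:ℝ)))) x :=
        ContDiffAt.comp (g := Real.tan) x htanC haffC
      have hg : ContDiffAt ℝ 1 (fun y => φf y * (-β * Real.tan (β * (y - 1/8 - (n:ℝ))))) x :=
        hφC.contDiffAt.mul (contDiffAt_const.mul hcomp)
      apply hg.congr_of_eventuallyEq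
      filter_upwards [hev] with y hy
      rw [hpeval, hy]
    · have hx' : c x < t₀ := by linarith [not_lt.mp hx]
      have hU : {y | c y < t₀} ∈ nhds x := (isOpen_lt hccont continuous_const).mem_nhds hx'
      apply (contDiffAt_const (c := (0:ℝ))).congr_of_eventuallyEq
      filter_upwards [hU] with y hy
      rw [hpeval, hφ0 y hy.le, zero_mul]
  have hpcont : Continuous p := hpC.continuous
  -- I₂ and q
  obtain ⟨I₂, hI₂def⟩ : ∃ t : ℝ, t = ∫ x in (0:ℝ)..1, (1 - φf x) := ⟨_, rfl⟩
  have hI₂int : IntervalIntegrable (fun x => 1 - φf x) MeasureTheory.volume 0 1 :=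
    (continuous_const.sub hφC.continuous).intervalIntegrable _ _
  have hI₂pos : 0 < I₂ := by
    have hsub : (∫ x in (9/16:ℝ)..(11/16), (1 - φf x)) = 1/8 := by
      have hcongr : ∀ x ∈ Set.uIcc (9/16:ℝ) (11/16), 1 - φf x = 1 := by
        intro x hx
        rw [Set.uIcc_of_le (by norm_num : (9/16:ℝ) ≤ 11/16)] at hx
        have hc0 : c x ≤ 0 := by
          rw [hceval]
          apply Real.cos_nonpos_of_pi_div_two_le_of_le
          · nlinarith [hx.1]
          · nlinarith [hx.2]
        rw [hφ0 x (by linarith), sub_zero]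
      rw [intervalIntegral.integral_congr hcongr]
      simp
      norm_num
    have hmono := intervalIntegral.integral_mono_interval (μ := MeasureTheory.volume)
      (f := fun x => 1 - φf x) (a := (9/16:ℝ)) (b := (11/16:ℝ))
      (by norm_num : (0:ℝ) ≤ 9/16) (by norm_num : (9/16:ℝ) ≤ 11/16) (by norm_num : (11/16:ℝ) ≤ 1)
      (MeasureTheory.ae_of_all _ (fun x => by simp only [Pi.zero_apply]; linarith [(hφ01 x).2]))
      hI₂int
    rw [hsub] at hmono
    rw [hI₂def]
    linarith
  obtain ⟨c₀, hc₀def⟩ : ∃ t : ℝ, t = (lam - ∫ x in (0:ℝ)..1, p x)/I₂ := ⟨_, rfl⟩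
  obtain ⟨q, hqdef⟩ : ∃ f : ℝ → ℝ, f = fun x => p x + (1 - φf x) * c₀ := ⟨_, rfl⟩
  have hqeval : ∀ x, q x = p x + (1 - φf x) * c₀ := fun x => by rw [hqdef]
  have hqC : ContDiff ℝ 1 q := by
    rw [hqdef]
    exact hpC.add ((contDiff_const.sub hφC).mul contDiff_const)
  have hqper : Function.Periodic q 1 := by
    intro x; rw [hqeval, hqeval, hpper x, hφper x]
  have hint : (∫ x in (0:ℝ)..1, q x) = lam := by
    have h1 : (∫ x in (0:ℝ)..1, q x)
        = (∫ x in (0:ℝ)..1, p x) + ∫ x in (0:ℝ)..1, (1 - φf x) * c₀ := by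
      rw [← intervalIntegral.integral_add (f := p) (g := fun x => (1 - φf x) * c₀) (hpcont.intervalIntegrable _ _)
        (((continuous_const.sub hφC.continuous).mul continuous_const).intervalIntegrable _ _)]
      apply intervalIntegral.integral_congr
      intro x _
      rw [hqeval]
    rw [h1, intervalIntegral.integral_mul_const, ← hI₂def, hc₀def]
    field_simp
    ring
  -- plateau identity
  have hplateau : ∀ x, t₁ < c x → deriv q x + q x^2 = ε' - 16*Real.pi^2 := by
    intro x hx
    obtain ⟨n, hev, hsx, hcospos⟩ := hloc x (by linarith)
    have hU1 : {y | t₁ < c y} ∈ nhds x := (isOpen_lt continuous_const hccont).mem_nhds hx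
    have hevq : q =ᶠ[nhds x] fun y => -β * Real.tan (β * (y - 1/8 - (n:ℝ))) := by
      filter_upwards [hev, hU1] with y hy1 hy2
      rw [hqeval, hpeval, hφ1 y hy2.le, hy1]
      ring
    have hA : HasDerivAt (fun y : ℝ => β * (y - 1/8 - (n:ℝ))) β x := by
      simpa using (((hasDerivAt_id x).sub_const (1/8:ℝ)).sub_const (n:ℝ)).const_mul β
    have hco' : Real.cos (β * (x - 1/8 - (n:ℝ))) ≠ 0 := by
      rw [show (x - 1/8 - (n:ℝ)) = s x from hsx.symm]
      exact hcospos.ne'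
    have htd := ((Real.hasDerivAt_tan hco').comp x hA).const_mul (-β)
    have hdq : deriv q x = -β * (1 / Real.cos (β * (x - 1/8 - (n:ℝ)))^2 * β) := by
      rw [hevq.deriv_eq]
      exact htd.deriv
    have hqx : q x = -β * Real.tan (β * (x - 1/8 - (n:ℝ))) := hevq.eq_of_nhds
    have hβ2 : ε' - 16*Real.pi^2 = -β^2 := by linarith
    obtain ⟨a, hadef⟩ : ∃ a : ℝ, a = β * (x - 1/8 - (n:ℝ)) := ⟨_, rfl⟩
    rw [← hadef] at hdq hqx hco'
    rw [hdq, hqx, Real.tan_eq_sin_div_cos, hβ2]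
    have hsc := Real.sin_sq_add_cos_sq a
    have hc2 : Real.cos a ^ 2 ≠ 0 := pow_ne_zero _ hco'
    field_simp
    first
    | linear_combination (β^2) * hsc
    | linear_combination (-(β^2)) * hsc
    | linear_combination (β^2 * Real.cos a ^ 2) * hsc
    | nlinarith [hsc]
  -- conclusion
  have hWcont : Continuous (fun x => deriv q x + q x^2) :=
    (hqC.continuous_deriv le_rfl).add (hqC.continuous.pow 2)
  have hne : (Set.Icc (1/4+η) (1-η)).Nonempty := ⟨1/4+η, Set.left_mem_Icc.mpr (by linarith)⟩
  obtain ⟨xm, hxmmem, hxmmax⟩ := isCompact_Icc.exists_isMaxOn hne hWcont.continuousOn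
  refine ⟨q, η, deriv q xm + q xm^2, hηpos, hη100, hqC, hqper, hint, ?_⟩
  intro x hx
  by_cases hcx : t₁ < c x
  · left
    rw [hplateau x hcx]
    linarith
  · right
    have hcx' : c x ≤ t₁ := not_lt.mp hcx
    have hxmem : x ∈ Set.Icc (1/4+η) (1-η) := by
      rcases le_or_gt (1/4+η) x with h1 | h1
      · rcases le_or_gt x (1-η) with h2 | h2
        · exact ⟨h1, h2⟩
        · exfalso
          have hxabs : |x - 9/8| < 1/8 + η := abs_lt.mpr ⟨by linarith [hx.2], by linarith [hx.2]⟩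
          have hcval : c x = Real.cos (2*Real.pi*|x - 9/8|) := by
            rw [hceval, show 2*Real.pi*(x-1/8) = 2*Real.pi*(x-9/8) + 2*Real.pi by ring,
              Real.cos_add_two_pi,
              show 2*Real.pi*|x-9/8| = |2*Real.pi*(x-9/8)| by
                rw [abs_mul, abs_of_pos (by positivity : (0:ℝ) < 2*Real.pi)],
              Real.cos_abs]
          have : t₁ < c x := by
            rw [hcval, ht₁def]
            apply Real.cos_lt_cos_of_nonneg_of_le_pi (by positivity) (by nlinarith)
            nlinarith [abs_nonneg (x - 9/8)]
          linarith
      · exfalso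
        have hxabs : |x - 1/8| < 1/8 + η := abs_lt.mpr ⟨by linarith [hx.1], by linarith⟩
        have hcval : c x = Real.cos (2*Real.pi*|x - 1/8|) := by
          rw [hceval,
            show 2*Real.pi*|x-1/8| = |2*Real.pi*(x-1/8)| by
              rw [abs_mul, abs_of_pos (by positivity : (0:ℝ) < 2*Real.pi)],
            Real.cos_abs]
        have : t₁ < c x := by
          rw [hcval, ht₁def]
          apply Real.cos_lt_cos_of_nonneg_of_le_pi (by positivity) (by nlinarith)
          nlinarith [abs_nonneg (x - 1/8)]
        linarith
    exact ⟨hxmem, hxmmax hxmem⟩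

lemma supersolution (M lam R : ℝ) (hM : 0 < M) (hR : R = M + 16*Real.pi^2)
    (ε : ℝ) (hε : 0 < ε)
    (rt : ℝ → ℝ → ℝ)
    (hrtper : ∀ A : ℝ, Function.Periodic (rt A) 1)
    (hrt1 : ∀ A : ℝ, ∀ x : ℝ, 0 ≤ x → x ≤ 1/4 → rt A x = R)
    (hrt2 : ∀ A : ℝ, ∀ x : ℝ, 1/4 < x → x < 1/2 → rt A x = R + 4 * (A - R) * (x - 1/4))
    (hrt3 : ∀ A : ℝ, ∀ x : ℝ, 1/2 ≤ x → x ≤ 3/4 → rt A x = A)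
    (hrt4 : ∀ A : ℝ, ∀ x : ℝ, 3/4 < x → x < 1 → rt A x = R + 4 * (A - R) * (1 - x)) :
    ∃ A₀ : ℝ, A₀ ≤ 0 ∧ ∃ v v1 v2 : ℝ → ℝ,
      (∀ x, 0 < v x) ∧ (∀ x, HasDerivAt v (v1 x) x) ∧ (∀ x, HasDerivAt v1 (v2 x) x) ∧
      (∀ x, v (x+1) = Real.exp lam * v x) ∧
      ∀ A, A ≤ A₀ → ∀ x, v2 x ≤ (M + ε - rt A x) * v x := by
  have hπ := Real.pi_pos
  have hRpos : 0 < R := by rw [hR]; positivity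
  obtain ⟨q, η, Cv, hη, hη100, hqC, hqper, hint, hcase⟩ := q_exists lam ε hε
  have hqcont : Continuous q := hqC.continuous
  have hqd : ∀ x, HasDerivAt q (deriv q x) x :=
    fun x => (hqC.differentiable (by norm_num) x).hasDerivAt
  obtain ⟨G, hGdef⟩ : ∃ f : ℝ → ℝ, f = fun x => ∫ t in (0:ℝ)..x, q t := ⟨_, rfl⟩
  have hG : ∀ x, HasDerivAt G (q x) x := by
    intro x
    rw [hGdef]
    exact (hqcont.integral_hasStrictDerivAt 0 x).hasDerivAt
  have hGadd : ∀ x, G (x+1) = G x + lam := by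
    intro x
    have h1 : (∫ t in (0:ℝ)..x, q t) + (∫ t in x..(x+1), q t) = ∫ t in (0:ℝ)..(x+1), q t :=
      intervalIntegral.integral_add_adjacent_intervals (hqcont.intervalIntegrable _ _)
        (hqcont.intervalIntegrable _ _)
    have h2 : (∫ t in x..(x+1), q t) = ∫ t in (0:ℝ)..(0+1), q t :=
      hqper.intervalIntegral_add_eq x 0
    rw [hGdef]
    simp only
    rw [← h1, h2]
    rw [zero_add, hint]
  refine ⟨min 0 (R + (M + ε - R - Cv)/(4*η)), min_le_left _ _,
    (fun x => Real.exp (G x)), (fun x => Real.exp (G x) * q x),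
    (fun x => (deriv q x + q x^2) * Real.exp (G x)), fun x => Real.exp_pos _,
    fun x => (hG x).exp, ?_, ?_, ?_⟩
  · intro x
    have := ((hG x).exp).mul (hqd x)
    refine this.congr_deriv ?_
    ring
  · intro x
    show Real.exp (G (x+1)) = Real.exp lam * Real.exp (G x)
    rw [hGadd x, Real.exp_add]
    ring
  · intro A hA x
    have hAneg : A ≤ 0 := le_trans hA (min_le_left _ _)
    have hA₀ : A ≤ R + (M + ε - R - Cv)/(4*η) := le_trans hA (min_le_right _ _)
    have hW : deriv q x + q x^2 ≤ M + ε - rt A x := by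
      have hdqper : ∀ y : ℝ, deriv q (y+1) = deriv q y := by
        intro y
        have hqe : (fun z => q (z+1)) = q := funext hqper
        have := deriv_comp_add_const q 1 y
        rw [hqe] at this
        exact this.symm
      have hgper : Function.Periodic (fun y => deriv q y + q y^2 + rt A y) 1 := by
        intro y
        simp only
        rw [hdqper, hqper, hrtper A y]
      obtain ⟨z, hz, hrep⟩ := periodic_rep x
      have htrans := hrep _ hgper
      have hzbound : deriv q z + q z^2 + rt A z ≤ M + ε := by
        rcases hcase z hz with hleft | ⟨hzmem, hzCv⟩
        · have hrtle : rt A z ≤ R := by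
            rcases le_or_gt z (1/4) with h1 | h1
            · rw [hrt1 A z hz.1 h1]
            · rcases lt_or_ge z (1/2) with h2 | h2
              · rw [hrt2 A z h1 h2]
                have h5 : 0 ≤ (R - A) * (z - 1/4) := mul_nonneg (by linarith) (by linarith)
                nlinarith
              · rcases le_or_gt z (3/4) with h3 | h3
                · rw [hrt3 A z h2 h3]; linarith
                · rw [hrt4 A z h3 hz.2]
                  have h5 : 0 ≤ (R - A) * (1 - z) := mul_nonneg (by linarith) (by linarith [hz.2])
                  nlinarith
          linarith
        · have hrtle : rt A z ≤ R + 4*(A-R)*η := by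
            rcases lt_or_ge z (1/2) with h2 | h2
            · rw [hrt2 A z (by linarith [hzmem.1]) h2]
              have h5 : (A - R) * (z - 1/4) ≤ (A - R) * η :=
                mul_le_mul_of_nonpos_left (by linarith [hzmem.1]) (by linarith)
              linarith
            · rcases le_or_gt z (3/4) with h3 | h3
              · rw [hrt3 A z h2 h3]
                have h5 : (A - R) * (1 - 4*η) ≤ 0 :=
                  mul_nonpos_of_nonpos_of_nonneg (by linarith) (by linarith)
                linarith
              · rw [hrt4 A z h3 (by linarith [hzmem.2])]
                have h5 : (A - R) * (1 - z) ≤ (A - R) * η :=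
                  mul_le_mul_of_nonpos_left (by linarith [hzmem.2]) (by linarith)
                linarith
          have h6 : (A - R) * (4*η) ≤ M + ε - R - Cv := by
            have := (le_div_iff₀ (by positivity : (0:ℝ) < 4*η)).mp (by linarith : A - R ≤ (M + ε - R - Cv)/(4*η))
            linarith
          linarith
      linarith
    exact mul_le_mul_of_nonneg_right hW (Real.exp_pos _).le


/-- with `R = M + 16π²` and `r̃^A` the `1`-periodic piecewise-linear function
equal to `R` on `[0,1/4]`, to `A` on `[1/2,3/4]`, and affine in between, if for every
`A ≤ 0` the operator `ψ ↦ ψ'' + 2λψ' + (r̃^A + λ²)ψ` has a positive normalized `1`-periodic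
principal eigenfunction `Φ A` with eigenvalue `K A`, then `K A → R - 16π² = M` as
`A → -∞`. -/
theorem stmt17 (M lam : ℝ) (hM : 0 < M)
    (R : ℝ) (hR : R = M + 16 * Real.pi ^ 2)
    (rt : ℝ → ℝ → ℝ)
    (hrtper : ∀ A : ℝ, Function.Periodic (rt A) 1)
    (hrt1 : ∀ A : ℝ, ∀ x : ℝ, 0 ≤ x → x ≤ 1/4 → rt A x = R)
    (hrt2 : ∀ A : ℝ, ∀ x : ℝ, 1/4 < x → x < 1/2 → rt A x = R + 4 * (A - R) * (x - 1/4))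
    (hrt3 : ∀ A : ℝ, ∀ x : ℝ, 1/2 ≤ x → x ≤ 3/4 → rt A x = A)
    (hrt4 : ∀ A : ℝ, ∀ x : ℝ, 3/4 < x → x < 1 → rt A x = R + 4 * (A - R) * (1 - x))
    (K : ℝ → ℝ) (Φ : ℝ → ℝ → ℝ)
    (hyp : ∀ A : ℝ, A ≤ 0 →
      ContDiff ℝ 2 (Φ A) ∧
      Function.Periodic (Φ A) 1 ∧
      (∀ x, 0 < Φ A x) ∧
      (∫ x in (0:ℝ)..1, (Φ A x) ^ 2) = 1 ∧
      (∀ x : ℝ,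
        deriv (deriv (Φ A)) x + 2 * lam * deriv (Φ A) x
          + (rt A x + lam ^ 2) * Φ A x = K A * Φ A x)) :
    Filter.Tendsto K Filter.atBot (nhds (R - 16 * Real.pi ^ 2)) ∧
    R - 16 * Real.pi ^ 2 = M := by
  have hconv : R - 16 * Real.pi ^ 2 = M := by rw [hR]; ring
  constructor
  · rw [hconv, Metric.tendsto_nhds]
    intro ε hε
    obtain ⟨A₀, hA₀neg, v, v1, v2, hv, hv1, hv2, hmult, hsup⟩ :=
      supersolution M lam R hM hR (ε/2) (by linarith) rt hrtper hrt1 hrt2 hrt3 hrt4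
    rw [Filter.eventually_atBot]
    refine ⟨A₀, fun A hA => ?_⟩
    obtain ⟨h1, h2, h3, _h4, h5⟩ := hyp A (le_trans hA hA₀neg)
    have hlow : M < K A := lower_bound M lam R (K A) hR (rt A) (Φ A) (hrt1 A) h1 h3 h5
    have hup : K A ≤ M + ε/2 := comparison lam (K A) (M + ε/2) (rt A) (Φ A) v v1 v2
        h1 h2 h3 h5 hv hv1 hv2 hmult (hsup A hA)
    rw [Real.dist_eq, abs_lt]
    constructor <;> linarith
  · exact hconv
end

section
/- Let r : ℝ → ℝ be continuous and 1-periodic, let b : ℝ → ℝ be continuously differentiable and 1-periodic, let k ∈ ℝ, and let ψ : ℝ → ℝ be twice continuously differentiable, 1-periodic, positive on ℝ, satisfying ψ'' + (r − b'/2 − b²/4)ψ = k ψ on ℝ. If 4∫₀¹ r(x) dx > ∫₀¹ b(x)² dx, then k > 0. -/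
/-- if `ψ > 0` is a `1`-periodic `C²` principal eigenfunction of the
Schrödinger operator `ψ ↦ ψ'' + (r - b'/2 - b²/4)ψ` with eigenvalue `k`, and
`4∫₀¹ r > ∫₀¹ b²`, then `k > 0`. -/
theorem stmt18 (r b : ℝ → ℝ) (k : ℝ)
    (hr : Continuous r) (hrper : Function.Periodic r 1)
    (hb : ContDiff ℝ 1 b) (hbper : Function.Periodic b 1)
    (ψ : ℝ → ℝ) (hψ : ContDiff ℝ 2 ψ) (hψper : Function.Periodic ψ 1)
    (hψpos : ∀ x, 0 < ψ x)
    (heq : ∀ x : ℝ,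
      deriv (deriv ψ) x + (r x - deriv b x / 2 - (b x) ^ 2 / 4) * ψ x = k * ψ x)
    (hint : 4 * (∫ x in (0:ℝ)..1, r x) > ∫ x in (0:ℝ)..1, (b x) ^ 2) :
    0 < k := by
  have hψne : ∀ x, ψ x ≠ 0 := fun x => (hψpos x).ne'
  have hψ1 : ContDiff ℝ 1 (deriv ψ) := by
    have := (contDiff_succ_iff_deriv (n := 1)).1 hψ
    exact this.2.2
  have hψ'' : Continuous (deriv (deriv ψ)) := by
    have := (contDiff_one_iff_deriv).1 hψ1
    exact this.2
  have hψd : Differentiable ℝ ψ := hψ.differentiable two_ne_zero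
  have hψ'd : Differentiable ℝ (deriv ψ) := hψ1.differentiable one_ne_zero
  have hψc : Continuous ψ := hψd.continuous
  have hψ'c : Continuous (deriv ψ) := hψ'd.continuous
  have hb' : Continuous (deriv b) := ((contDiff_one_iff_deriv).1 hb).2
  set g : ℝ → ℝ := fun x => deriv ψ x / ψ x with hg
  have hgd : ∀ x, HasDerivAt g
      ((deriv (deriv ψ) x * ψ x - deriv ψ x * deriv ψ x) / ψ x ^ 2) x := by
    intro x
    exact ((hψ'd x).hasDerivAt).div ((hψd x).hasDerivAt) (hψne x)
  have hgc : Continuous g := hψ'c.div hψc hψne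
  have hg'c : Continuous (deriv g) := by
    have : deriv g = fun x =>
        (deriv (deriv ψ) x * ψ x - deriv ψ x * deriv ψ x) / ψ x ^ 2 := by
      funext x; exact (hgd x).deriv
    rw [this]
    exact ((hψ''.mul hψc).sub (hψ'c.mul hψ'c)).div (hψc.pow 2)
      (fun x => pow_ne_zero 2 (hψne x))
  -- pointwise identity: deriv g + g² + r - b'/2 - b²/4 = k
  have key : ∀ x, deriv g x + (g x) ^ 2 + r x - deriv b x / 2 - (b x) ^ 2 / 4 = k := by
    intro x
    have h := heq x
    have hgx : deriv g x =
        (deriv (deriv ψ) x * ψ x - deriv ψ x * deriv ψ x) / ψ x ^ 2 := (hgd x).deriv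
    rw [hgx]
    have hne := hψne x
    rw [hg]
    field_simp
    nlinarith [h, hψpos x, sq_nonneg (ψ x)]
  -- integrate over [0,1]
  have h01 : (0:ℝ) ≤ 1 := zero_le_one
  have Ig' : IntervalIntegrable (deriv g) MeasureTheory.volume 0 1 :=
    hg'c.intervalIntegrable 0 1
  have Ig2 : IntervalIntegrable (fun x => (g x)^2) MeasureTheory.volume 0 1 :=
    (hgc.pow 2).intervalIntegrable 0 1
  have Ir : IntervalIntegrable r MeasureTheory.volume 0 1 := hr.intervalIntegrable 0 1
  have Ib' : IntervalIntegrable (fun x => deriv b x / 2) MeasureTheory.volume 0 1 :=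
    (hb'.div_const 2).intervalIntegrable 0 1
  have Ib2 : IntervalIntegrable (fun x => (b x)^2 / 4) MeasureTheory.volume 0 1 :=
    (((hb.continuous).pow 2).div_const 4).intervalIntegrable 0 1
  have hintg' : (∫ x in (0:ℝ)..1, deriv g x) = 0 := by
    rw [intervalIntegral.integral_deriv_eq_sub (fun x _ => (hgd x).differentiableAt) Ig']
    have e : (fun x => ψ (x + 1)) = ψ := funext hψper
    have h1 : HasDerivAt (fun x => ψ (x + 1)) (deriv ψ 1) 0 := by
      have h0 : HasDerivAt ψ (deriv ψ 1) (id (0:ℝ) + 1) := by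
        simpa using (hψd 1).hasDerivAt
      have := h0.comp 0 ((hasDerivAt_id (0:ℝ)).add_const 1)
      simpa [Function.comp_def] using this
    rw [e] at h1
    have hd01 : deriv ψ 1 = deriv ψ 0 := h1.deriv.symm
    have : g 1 = g 0 := by
      have hp : ψ 1 = ψ 0 := by simpa using hψper 0
      simp [hg, hp, hd01]
    simp [this]
  have hintb' : (∫ x in (0:ℝ)..1, deriv b x) = 0 := by
    rw [intervalIntegral.integral_deriv_eq_sub
      (fun x _ => (hb.differentiable one_ne_zero).differentiableAt)
      (hb'.intervalIntegrable 0 1)]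
    have : b 1 = b 0 := by simpa using hbper 0
    simp [this]
  have hk : k = (∫ x in (0:ℝ)..1,
      (deriv g x + (g x)^2 + r x - deriv b x / 2 - (b x)^2 / 4)) := by
    have : (∫ x in (0:ℝ)..1,
        (deriv g x + (g x)^2 + r x - deriv b x / 2 - (b x)^2 / 4))
        = ∫ x in (0:ℝ)..1, k := by
      apply intervalIntegral.integral_congr
      intro x _
      exact key x
    rw [this]; simp
  rw [intervalIntegral.integral_sub (((Ig'.add Ig2).add Ir).sub Ib') Ib2,
      intervalIntegral.integral_sub ((Ig'.add Ig2).add Ir) Ib',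
      intervalIntegral.integral_add (Ig'.add Ig2) Ir,
      intervalIntegral.integral_add Ig' Ig2, hintg'] at hk
  have hg2 : 0 ≤ ∫ x in (0:ℝ)..1, (g x)^2 :=
    intervalIntegral.integral_nonneg h01 (fun x _ => sq_nonneg _)
  have hb2 : (∫ x in (0:ℝ)..1, (b x)^2 / 4) = (∫ x in (0:ℝ)..1, (b x)^2) / 4 := by
    rw [intervalIntegral.integral_div]
  have hd2 : (∫ x in (0:ℝ)..1, deriv b x / 2) = 0 := by
    rw [intervalIntegral.integral_div, hintb']; simp
  rw [hd2, hb2] at hk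
  linarith
end
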